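/- arXiv:2001.09323 — 5 statements merged into one kernel-verified Lean document; each statement's English description precedes it below -/
import Mathlib

section
/- Let x, y, z ∈ ℂ with x + y + z = s + 1 where s is a natural number, and let ℓ, n, r be natural numbers. Then Σ_{k=0}^{n+r} x^{n+r−k} C(n+r,k) C(ℓ+k+r,r) B_{ℓ+k}(y) + (−1)^{ℓ+n+r+1} Σ_{k=0}^{ℓ+r} x^{ℓ+r−k} C(ℓ+r,k) C(n+k+r,r) B_{n+k}(z) = (r+1) Σ_{k=1}^{s} Σ_{j=0}^{r+1} C(n+r,j) C(ℓ+r,r+1−j) (y−k)^{ℓ+j−1} (x+y−k)^{n+r−j}, with the convention that a term whose binomial coefficient C(ℓ+r,r+1−j) vanishes is zero (this covers the only case ℓ = j = 0 where the exponent ℓ+j−1 would be negative). -/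
open scoped BigOperators
open Finset

noncomputable section

/-- The classical Bernoulli polynomial `B_n(x)` (with `B_1(0) = -1/2`),
evaluated at a complex number `x`. -/
def bernPoly (n : ℕ) (x : ℂ) : ℂ := Polynomial.aeval x (Polynomial.bernoulli n)

end

private lemma bernPoly_eq_sum (n : ℕ) (x : ℂ) :
    bernPoly n x = ∑ i ∈ range (n + 1), ((bernoulli i : ℂ)) * (n.choose i : ℂ) * x ^ (n - i) := by
  rw [bernPoly, Polynomial.bernoulli, map_sum]
  refine Finset.sum_congr rfl fun i _ => ?_
  rw [Polynomial.aeval_monomial, map_mul, eq_ratCast, eq_ratCast]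
  push_cast
  ring

private lemma alt_sum (L : ℕ) : ∀ M N : ℕ,
    ∑ k ∈ range (L + 1), (-1 : ℂ) ^ k * (L.choose k : ℂ) * ((M + k).choose N : ℂ) =
      (-1 : ℂ) ^ L * (if L ≤ N then ((M.choose (N - L)) : ℂ) else 0) := by
  induction L with
  | zero => intro M N; simp
  | succ L ih =>
    intro M N
    have key : ∑ k ∈ range (L + 1 + 1), (-1 : ℂ) ^ k * ((L+1).choose k : ℂ) * ((M + k).choose N : ℂ)
        = (∑ k ∈ range (L + 1), (-1 : ℂ) ^ k * (L.choose k : ℂ) * ((M + k).choose N : ℂ))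
          - ∑ k ∈ range (L + 1), (-1 : ℂ) ^ k * (L.choose k : ℂ) * (((M+1) + k).choose N : ℂ) := by
      have h4 := Finset.sum_range_succ'
        (fun k => (-1:ℂ)^k * (L.choose k : ℂ) * ((M + k).choose N : ℂ)) (L+1)
      have h5 : ∑ k ∈ range (L + 1 + 1), (-1:ℂ)^k * (L.choose k : ℂ) * ((M + k).choose N : ℂ)
          = ∑ k ∈ range (L + 1), (-1:ℂ)^k * (L.choose k : ℂ) * ((M + k).choose N : ℂ) := by
        rw [Finset.sum_range_succ]
        simp [Nat.choose_succ_self]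
      rw [Finset.sum_range_succ' _ (L+1)]
      rw [h5] at h4
      calc (∑ i ∈ range (L + 1),
              (-1:ℂ)^(i+1) * ((L+1).choose (i+1) : ℂ) * ((M + (i+1)).choose N : ℂ))
            + (-1:ℂ)^0 * ((L+1).choose 0 : ℂ) * ((M + 0).choose N : ℂ)
          = ((∑ i ∈ range (L + 1),
              (-1:ℂ)^(i+1) * (L.choose (i+1) : ℂ) * ((M + (i+1)).choose N : ℂ))
            + (-1:ℂ)^0 * (L.choose 0 : ℂ) * ((M + 0).choose N : ℂ))
            - ∑ i ∈ range (L + 1), (-1:ℂ)^i * (L.choose i : ℂ) * (((M+1) + i).choose N : ℂ) := by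
            have : ∀ i ∈ range (L+1),
                (-1:ℂ)^(i+1) * ((L+1).choose (i+1) : ℂ) * ((M + (i+1)).choose N : ℂ)
                = (-1:ℂ)^(i+1) * (L.choose (i+1) : ℂ) * ((M + (i+1)).choose N : ℂ)
                  - (-1:ℂ)^i * (L.choose i : ℂ) * (((M+1) + i).choose N : ℂ) := by
              intro i _
              have hc : ((L+1).choose (i+1) : ℂ) = (L.choose i : ℂ) + (L.choose (i+1) : ℂ) := by
                rw [Nat.choose_succ_succ]; push_cast; ring
              have hm : M + (i+1) = (M+1) + i := by omega
              rw [hc, hm, pow_succ]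
              ring
            rw [Finset.sum_congr rfl this, Finset.sum_sub_distrib]
            simp only [Nat.choose_zero_right, Nat.cast_one]
            ring
          _ = (∑ k ∈ range (L + 1), (-1 : ℂ) ^ k * (L.choose k : ℂ) * ((M + k).choose N : ℂ))
              - ∑ k ∈ range (L + 1), (-1 : ℂ) ^ k * (L.choose k : ℂ) * (((M+1) + k).choose N : ℂ) := by
            rw [← h4]
    rw [key, ih M N, ih (M+1) N]
    by_cases h1 : L ≤ N
    · by_cases h2 : L + 1 ≤ N
      · simp only [if_pos h1, if_pos h2]
        have hp : N - L = (N - (L+1)) + 1 := by omega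
        have hc : (((M+1).choose (N-L)) : ℂ) = (M.choose (N - (L+1)) : ℂ) + (M.choose (N-L) : ℂ) := by
          rw [hp, Nat.choose_succ_succ]; push_cast; ring
        rw [hc, pow_succ]
        ring
      · have hNL : N - L = 0 := by omega
        simp only [if_pos h1, if_neg h2, hNL, Nat.choose_zero_right, Nat.cast_one, pow_succ]
        ring
    · simp only [if_neg h1, if_neg (by omega : ¬ L + 1 ≤ N), pow_succ]
      ring

-- C(a+r,r)*C(a,i) = C(i+r,r)*C(a+r,i+r)
private lemma choose_mul_right (a r i : ℕ) :
    (a + r).choose r * a.choose i = (i + r).choose r * ((a + r).choose (i + r)) := by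
  by_cases hia : i ≤ a
  · have h := Nat.choose_mul (n := a + r) (k := i + r) (s := r)
      (by omega)
    have h1 : (i + r) - r = i := by omega
    have h2 : (a + r) - r = a := by omega
    rw [h1, h2] at h
    rw [mul_comm ((i + r).choose r)]
    exact h.symm
  · have h1 : a.choose i = 0 := Nat.choose_eq_zero_of_lt (by omega)
    have h2 : (a + r).choose (i + r) = 0 := Nat.choose_eq_zero_of_lt (by omega)
    rw [h1, h2]
    ring

-- C(N,j)*C(N-j,m) = C(N,m)*C(N-m,j)
private lemma pair_choose (N j m : ℕ) :
    N.choose j * (N - j).choose m = N.choose m * ((N - m).choose j) := by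
  by_cases hjm : j + m ≤ N
  · have h1 := Nat.choose_mul (n := N) (k := j + m) (s := j) (by omega)
    have h2 := Nat.choose_mul (n := N) (k := j + m) (s := m) (by omega)
    have e1 : j + m - j = m := by omega
    have e2 : j + m - m = j := by omega
    rw [e1] at h1
    rw [e2] at h2
    have hsym : (j+m).choose j = (j+m).choose m := Nat.choose_symm_add
    rw [← h1, ← h2, hsym]
  · have hL : N.choose j * (N - j).choose m = 0 := by
      by_cases hj : j ≤ N
      · have : (N - j).choose m = 0 := Nat.choose_eq_zero_of_lt (by omega)
        rw [this]; ring
      · rw [Nat.choose_eq_zero_of_lt (by omega)]; ring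
    have hR : N.choose m * (N - m).choose j = 0 := by
      by_cases hm : m ≤ N
      · have : (N - m).choose j = 0 := Nat.choose_eq_zero_of_lt (by omega)
        rw [this]; ring
      · rw [Nat.choose_eq_zero_of_lt (by omega)]; ring
    rw [hL, hR]

private lemma vandermonde_range (a b t : ℕ) :
    ∑ j ∈ range (t + 1), a.choose j * b.choose (t - j) = (a + b).choose t := by
  rw [Nat.add_choose_eq, Finset.Nat.sum_antidiagonal_eq_sum_range_succ_mk]

private lemma stepNat (ℓ n r m : ℕ) (hm : m ≤ ℓ + r) :
    ∑ j ∈ range (r + 2),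
        (r+1) * ((n + r).choose j) * ((ℓ + r).choose (r + 1 - j)) * ((ℓ + j - 1).choose m)
      = (n + ℓ + r - m) * ((ℓ + r).choose m) * ((n + ℓ + 2*r - m).choose r) := by
  have hrefl := Finset.sum_range_reflect
    (fun j => (r+1) * ((n + r).choose j) * ((ℓ + r).choose (r + 1 - j)) * ((ℓ + j - 1).choose m))
    (r + 2)
  rw [← hrefl]
  have step1 : ∀ j ∈ range (r + 2),
      (r+1) * ((n + r).choose (r + 2 - 1 - j)) * ((ℓ + r).choose (r + 1 - (r + 2 - 1 - j)))
        * ((ℓ + (r + 2 - 1 - j) - 1).choose m)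
      = (r+1) * ((n + r).choose (r + 1 - j)) * ((ℓ + r).choose m) * ((ℓ + r - m).choose j) := by
    intro j hj
    have hj' : j ≤ r + 1 := by simpa [Nat.lt_succ_iff] using Finset.mem_range.mp hj
    have e1 : r + 2 - 1 - j = r + 1 - j := by omega
    have e2 : r + 1 - (r + 1 - j) = j := by omega
    have e3 : ℓ + (r + 1 - j) - 1 = ℓ + r - j := by omega
    rw [e1, e2, e3]
    calc (r+1) * ((n + r).choose (r + 1 - j)) * ((ℓ + r).choose j) * ((ℓ + r - j).choose m)
        = ((ℓ+r).choose j * ((ℓ+r) - j).choose m) * ((r+1) * (n+r).choose (r+1-j)) := by ring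
      _ = ((ℓ+r).choose m * ((ℓ+r) - m).choose j) * ((r+1) * (n+r).choose (r+1-j)) := by
            rw [pair_choose]
      _ = (r+1) * ((n + r).choose (r + 1 - j)) * ((ℓ + r).choose m) * ((ℓ + r - m).choose j) := by
            ring
  rw [Finset.sum_congr rfl step1]
  have step2 : ∑ j ∈ range (r + 2),
      (r+1) * ((n + r).choose (r + 1 - j)) * ((ℓ + r).choose m) * ((ℓ + r - m).choose j)
      = (r+1) * ((ℓ + r).choose m) *
          ∑ j ∈ range (r + 2), (ℓ + r - m).choose j * ((n + r).choose (r + 1 - j)) := by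
    rw [Finset.mul_sum]
    exact Finset.sum_congr rfl fun j _ => by ring
  rw [step2, vandermonde_range (ℓ + r - m) (n + r) (r+1)]
  have e4 : ℓ + r - m + (n + r) = n + ℓ + 2*r - m := by omega
  rw [e4]
  have e5 := Nat.choose_succ_right_eq (n + ℓ + 2*r - m) r
  have e6 : n + ℓ + 2*r - m - r = n + ℓ + r - m := by omega
  rw [e6] at e5
  calc (r+1) * ((ℓ + r).choose m) * ((n + ℓ + 2*r - m).choose (r+1))
      = ((n + ℓ + 2*r - m).choose (r+1) * (r+1)) * ((ℓ + r).choose m) := by ring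
    _ = ((n + ℓ + 2*r - m).choose r * (n + ℓ + r - m)) * ((ℓ + r).choose m) := by rw [e5]
    _ = (n + ℓ + r - m) * ((ℓ + r).choose m) * ((n + ℓ + 2*r - m).choose r) := by ring

open Polynomial in
private lemma bernoulli_comp_X_add_one (m : ℕ) :
    (Polynomial.bernoulli m).comp (X + 1) =
      Polynomial.bernoulli m + (m : ℚ[X]) * X ^ (m - 1) := by
  apply Polynomial.funext
  intro q
  rw [eval_comp]
  simp only [eval_add, eval_mul, eval_pow, eval_X, eval_one, eval_natCast]
  rw [show q + 1 = 1 + q by ring, Polynomial.bernoulli_eval_one_add]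

private lemma bernPoly_add_one (m : ℕ) (w : ℂ) :
    bernPoly m (w + 1) = bernPoly m w + (m : ℂ) * w ^ (m - 1) := by
  have h := congrArg (fun p => Polynomial.aeval w p) (bernoulli_comp_X_add_one m)
  simp only [Polynomial.aeval_comp, map_add, map_mul, map_pow, Polynomial.aeval_X,
    map_one, map_natCast] at h
  simpa [bernPoly] using h

open Polynomial in
private lemma bernoulli_comp_one_sub (m : ℕ) :
    (Polynomial.bernoulli m).comp (1 - X) = (-1 : ℚ[X]) ^ m * Polynomial.bernoulli m := by
  set f : ℚ[X] := (Polynomial.bernoulli m).comp (1 - X) - (-1 : ℚ[X]) ^ m * Polynomial.bernoulli m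
    with hf
  have hper : ∀ q : ℚ, f.eval (q + 1) = f.eval q := by
    intro q
    simp only [hf, eval_sub, eval_comp, eval_mul, eval_pow, eval_neg, eval_one, eval_X]
    have h1 : (1 : ℚ) - (q + 1) = -q := by ring
    have h2 : (Polynomial.bernoulli m).eval (q+1)
        = (Polynomial.bernoulli m).eval q + m * q^(m-1) := by
      rw [show q + 1 = 1 + q by ring, Polynomial.bernoulli_eval_one_add]
    have h3 : (Polynomial.bernoulli m).eval (1 - q)
        = (Polynomial.bernoulli m).eval (-q) + m * (-q)^(m-1) := by
      rw [show (1:ℚ) - q = 1 + (-q) by ring, Polynomial.bernoulli_eval_one_add]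
    rw [h1, h2, h3]
    rcases Nat.eq_zero_or_pos m with hm | hm
    · subst hm; simp
    · have h4 : (-1 : ℚ) ^ (m - 1) * (-1 : ℚ) = (-1 : ℚ)^m := by
        rw [← pow_succ]
        congr 1
        omega
      rw [neg_pow, ← h4]
      ring
  have hnat : ∀ j : ℕ, f.eval (j : ℚ) = f.eval 0 := by
    intro j
    induction j with
    | zero => norm_num
    | succ j ihj => push_cast; rw [hper]; push_cast at ihj; exact ihj
  have h0 : f.eval 0 = 0 := by
    simp only [hf, eval_sub, eval_comp, eval_mul, eval_pow, eval_neg, eval_one, eval_X]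
    norm_num
    rcases eq_or_ne m 1 with rfl | hm1
    · norm_num [bernoulli'_one, _root_.bernoulli_one]
    · rw [← bernoulli_eq_bernoulli'_of_ne_one hm1]
      rcases Nat.even_or_odd m with he | ho
      · rw [he.neg_one_pow]; ring
      · have hz : _root_.bernoulli m = 0 := by
          rw [bernoulli_eq_bernoulli'_of_ne_one hm1]
          refine bernoulli'_eq_zero_of_odd ho ?_
          rcases ho with ⟨t, rfl⟩
          omega
        rw [hz]
        ring
  have hf0 : f = 0 := by
    apply Polynomial.eq_zero_of_infinite_isRoot
    refine Set.infinite_of_injective_forall_mem (f := fun j : ℕ => (j : ℚ))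
      (fun a b hab => Nat.cast_injective hab) ?_
    intro j
    simp only [Set.mem_setOf_eq, Polynomial.IsRoot]
    rw [hnat j, h0]
  rw [hf] at hf0
  exact sub_eq_zero.mp hf0

private lemma bernPoly_one_sub (m : ℕ) (w : ℂ) :
    bernPoly m (1 - w) = (-1 : ℂ) ^ m * bernPoly m w := by
  have h := congrArg (fun p => Polynomial.aeval w p) (bernoulli_comp_one_sub m)
  simp only [Polynomial.aeval_comp, map_sub, map_mul, map_pow, Polynomial.aeval_X,
    map_one, map_neg] at h
  simpa [bernPoly] using h

private lemma bernPoly_sub_nat (m : ℕ) (w : ℂ) (s : ℕ) :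
    bernPoly m (w - s) =
      bernPoly m w - (m : ℂ) * ∑ i ∈ Finset.Icc 1 s, (w - (i:ℂ)) ^ (m - 1) := by
  induction s with
  | zero => simp
  | succ s ih =>
    have h1 : bernPoly m ((w - ((s:ℂ)+1)) + 1)
        = bernPoly m (w - ((s:ℂ)+1)) + (m:ℂ) * (w - ((s:ℂ)+1))^(m-1) := bernPoly_add_one m _
    have h2 : w - ((s:ℂ)+1) + 1 = w - (s:ℂ) := by ring
    rw [h2] at h1
    have h3 : ((s+1:ℕ):ℂ) = (s:ℂ) + 1 := by push_cast; ring
    rw [Finset.sum_Icc_succ_top (by omega : 1 ≤ s+1), h3]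
    rw [ih] at h1
    rw [mul_add]
    linear_combination -h1

private lemma bernPoly_add (m : ℕ) (X Y : ℂ) :
    bernPoly m (X + Y) = ∑ q ∈ range (m + 1), (m.choose q : ℂ) * bernPoly q Y * X ^ (m - q) := by
  have key : ∀ i ∈ range (m + 1),
      (bernoulli i : ℂ) * (m.choose i : ℂ) * (X + Y) ^ (m - i)
      = ∑ q ∈ range (m + 1),
          (bernoulli i : ℂ) * (m.choose q : ℂ) * (q.choose i : ℂ) * Y ^ (q - i) * X ^ (m - q) := by
    intro i hi
    have him : i ≤ m := by simpa [Nat.lt_succ_iff] using Finset.mem_range.mp hi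
    rw [add_comm X Y, add_pow]
    rw [Finset.mul_sum]
    have e1 : ∀ j ∈ range (m - i + 1),
        (bernoulli i : ℂ) * (m.choose i : ℂ) * (Y ^ j * X ^ (m - i - j) * ((m-i).choose j : ℂ))
        = (bernoulli i : ℂ) * (m.choose (i+j) : ℂ) * ((i+j).choose i : ℂ)
            * Y ^ ((i+j) - i) * X ^ (m - (i+j)) := by
      intro j hj
      have hjm : j ≤ m - i := by simpa [Nat.lt_succ_iff] using Finset.mem_range.mp hj
      have hc : m.choose (i+j) * ((i+j).choose i) = m.choose i * ((m-i).choose j) := by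
        have h := Nat.choose_mul (n := m) (k := i + j) (s := i) (by omega)
        have e : i + j - i = j := by omega
        rw [e] at h
        exact h
      have hcC : (m.choose (i+j) : ℂ) * ((i+j).choose i : ℂ) = (m.choose i : ℂ) * (((m-i)).choose j : ℂ) := by
        exact_mod_cast congrArg (Nat.cast : ℕ → ℂ) hc
      have e2 : (i+j) - i = j := by omega
      have e3 : m - (i+j) = m - i - j := by omega
      rw [e2, e3]
      calc (bernoulli i : ℂ) * (m.choose i : ℂ) * (Y ^ j * X ^ (m - i - j) * ((m-i).choose j : ℂ))
          = ((m.choose i : ℂ) * ((m-i).choose j : ℂ)) * ((bernoulli i : ℂ) * Y ^ j * X ^ (m-i-j)) := by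
            ring
        _ = ((m.choose (i+j) : ℂ) * ((i+j).choose i : ℂ)) * ((bernoulli i : ℂ) * Y ^ j * X ^ (m-i-j)) := by
            rw [hcC]
        _ = (bernoulli i : ℂ) * (m.choose (i+j) : ℂ) * ((i+j).choose i : ℂ) * Y ^ j * X ^ (m - i - j) := by
            ring
    rw [Finset.sum_congr rfl e1]
    -- reindex : ∑_{j ∈ range (m-i+1)} g (i+j) = ∑_{q ∈ Ico i (m+1)} g q
    have e4 : ∑ j ∈ range (m - i + 1),
        (bernoulli i : ℂ) * (m.choose (i+j) : ℂ) * ((i+j).choose i : ℂ) * Y ^ ((i+j) - i) * X ^ (m - (i+j))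
        = ∑ q ∈ Finset.Ico i (m + 1),
            (bernoulli i : ℂ) * (m.choose q : ℂ) * (q.choose i : ℂ) * Y ^ (q - i) * X ^ (m - q) := by
      rw [Finset.sum_Ico_eq_sum_range]
      have : m + 1 - i = m - i + 1 := by omega
      rw [this]
    rw [e4]
    -- extend to range (m+1)
    apply Finset.sum_subset
    · intro q hq
      rw [Finset.mem_Ico] at hq
      exact Finset.mem_range.mpr hq.2
    · intro q hq hq'
      rw [Finset.mem_range] at hq
      rw [Finset.mem_Ico, not_and_or] at hq'
      have hqi : q < i := by omega
      have : q.choose i = 0 := Nat.choose_eq_zero_of_lt hqi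
      rw [this]
      push_cast
      ring
  rw [bernPoly_eq_sum, Finset.sum_congr rfl key, Finset.sum_comm]
  refine Finset.sum_congr rfl fun q hq => ?_
  have hqm : q ≤ m := by simpa [Nat.lt_succ_iff] using Finset.mem_range.mp hq
  rw [bernPoly_eq_sum]
  rw [Finset.mul_sum, Finset.sum_mul]
  have hsub : range (q+1) ⊆ range (m+1) := by
    intro i hi
    rw [Finset.mem_range] at hi ⊢
    omega
  have hzero : ∀ i ∈ range (m+1), i ∉ range (q+1) →
      (m.choose q : ℂ) * ((bernoulli i : ℂ) * (q.choose i : ℂ) * Y ^ (q - i)) * X ^ (m - q) = 0 := by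
    intro i hi hi'
    rw [Finset.mem_range] at hi'
    have : q.choose i = 0 := Nat.choose_eq_zero_of_lt (by omega)
    rw [this]
    push_cast
    ring
  rw [Finset.sum_subset hsub hzero]
  exact Finset.sum_congr rfl fun i hi => by ring

private lemma base_identity (ℓ n r : ℕ) (x y : ℂ) :
    ∑ k ∈ range (n + r + 1), x ^ (n + r - k) * ((n + r).choose k : ℂ) *
        ((ℓ + k + r).choose r : ℂ) * bernPoly (ℓ + k) y
    = ∑ k ∈ range (ℓ + r + 1), (-x) ^ (ℓ + r - k) * ((ℓ + r).choose k : ℂ) *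
        ((n + k + r).choose r : ℂ) * bernPoly (n + k) (x + y) := by
  -- RHS: expand via Appell, extend inner range, swap sums
  have step1 : ∀ k ∈ range (ℓ + r + 1),
      (-x) ^ (ℓ + r - k) * ((ℓ + r).choose k : ℂ) * ((n + k + r).choose r : ℂ)
        * bernPoly (n + k) (x + y)
      = ∑ i ∈ range (n + ℓ + r + 1),
          (-x) ^ (ℓ + r - k) * ((ℓ + r).choose k : ℂ) * ((n + k + r).choose r : ℂ)
            * (((n + k).choose i : ℂ) * bernPoly i y * x ^ (n + k - i)) := by
    intro k hk
    have hk' : k ≤ ℓ + r := by simpa [Nat.lt_succ_iff] using Finset.mem_range.mp hk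
    rw [bernPoly_add, Finset.mul_sum]
    apply Finset.sum_subset
    · intro i hi
      rw [Finset.mem_range] at hi ⊢
      omega
    · intro i hi hi'
      rw [Finset.mem_range] at hi'
      have : (n+k).choose i = 0 := Nat.choose_eq_zero_of_lt (by omega)
      rw [this]
      push_cast
      ring
  rw [Finset.sum_congr rfl step1, Finset.sum_comm]
  -- now inner sum over k, for each i
  have step2 : ∀ i ∈ range (n + ℓ + r + 1),
      ∑ k ∈ range (ℓ + r + 1),
        (-x) ^ (ℓ + r - k) * ((ℓ + r).choose k : ℂ) * ((n + k + r).choose r : ℂ)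
          * (((n + k).choose i : ℂ) * bernPoly i y * x ^ (n + k - i))
      = bernPoly i y * (if ℓ ≤ i then (((n+r).choose (i-ℓ) * ((i+r).choose r) : ℕ) : ℂ) else 0)
          * x ^ (n + ℓ + r - i) := by
    intro i hi
    have key : ∀ k ∈ range (ℓ + r + 1),
        (-x) ^ (ℓ + r - k) * ((ℓ + r).choose k : ℂ) * ((n + k + r).choose r : ℂ)
          * (((n + k).choose i : ℂ) * bernPoly i y * x ^ (n + k - i))
        = ((-1:ℂ)^k * ((ℓ + r).choose k : ℂ) * ((n + r + k).choose (i + r) : ℂ))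
            * ((-1:ℂ)^(ℓ+r) * ((i+r).choose r : ℂ) * bernPoly i y * x ^ (n + ℓ + r - i)) := by
      intro k hk
      have hk' : k ≤ ℓ + r := by simpa [Nat.lt_succ_iff] using Finset.mem_range.mp hk
      rw [show n + k + r = n + r + k from by ring]
      have hcast : ((n + r + k).choose r : ℂ) * ((n + k).choose i : ℂ)
          = ((i + r).choose r : ℂ) * ((n + r + k).choose (i + r) : ℂ) := by
        have hh := choose_mul_right (n+k) r i
        rw [show n + k + r = n + r + k from by ring] at hh
        exact_mod_cast congrArg (Nat.cast : ℕ → ℂ) hh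
      by_cases hik : i ≤ n + k
      · have hsign : (-x) ^ (ℓ + r - k) = (-1:ℂ)^(ℓ+r) * (-1:ℂ)^k * x ^ (ℓ + r - k) := by
          rw [neg_pow]
          have hp : (-1:ℂ)^(ℓ+r) * (-1:ℂ)^k = (-1:ℂ)^(ℓ+r-k) := by
            rw [← pow_add, show ℓ+r+k = (ℓ+r-k) + 2*k from by omega, pow_add, pow_mul]
            norm_num
          rw [hp]
        have hxp : x ^ (ℓ + r - k) * x ^ (n + k - i) = x ^ (n + ℓ + r - i) := by
          rw [← pow_add]
          congr 1
          omega
        rw [hsign]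
        calc (-1:ℂ)^(ℓ+r) * (-1:ℂ)^k * x ^ (ℓ + r - k) * ((ℓ + r).choose k : ℂ)
              * ((n + r + k).choose r : ℂ)
              * (((n + k).choose i : ℂ) * bernPoly i y * x ^ (n + k - i))
            = (((n + r + k).choose r : ℂ) * ((n + k).choose i : ℂ))
              * ((-1:ℂ)^(ℓ+r) * (-1:ℂ)^k * ((ℓ + r).choose k : ℂ) * bernPoly i y
                  * (x ^ (ℓ + r - k) * x ^ (n + k - i))) := by ring
          _ = (((i + r).choose r : ℂ) * ((n + r + k).choose (i + r) : ℂ))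
              * ((-1:ℂ)^(ℓ+r) * (-1:ℂ)^k * ((ℓ + r).choose k : ℂ) * bernPoly i y
                  * (x ^ (ℓ + r - k) * x ^ (n + k - i))) := by rw [hcast]
          _ = ((-1:ℂ)^k * ((ℓ + r).choose k : ℂ) * ((n + r + k).choose (i + r) : ℂ))
              * ((-1:ℂ)^(ℓ+r) * ((i+r).choose r : ℂ) * bernPoly i y * x ^ (n + ℓ + r - i)) := by
                rw [← hxp]; ring
      · have h1 : (n+k).choose i = 0 := Nat.choose_eq_zero_of_lt (by omega)
        have h2 : (n+r+k).choose (i+r) = 0 := Nat.choose_eq_zero_of_lt (by omega)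
        rw [h1, h2]
        push_cast
        ring
    rw [Finset.sum_congr rfl key, ← Finset.sum_mul]
    rw [alt_sum (ℓ + r) (n + r) (i + r)]
    by_cases hli : ℓ ≤ i
    · rw [if_pos (by omega : ℓ + r ≤ i + r), if_pos hli]
      have : i + r - (ℓ + r) = i - ℓ := by omega
      rw [this]
      have hsq : (-1:ℂ)^(ℓ+r) * (-1:ℂ)^(ℓ+r) = 1 := by
        rw [← pow_add, ← two_mul, pow_mul]
        norm_num
      push_cast
      linear_combination ((n+r).choose (i-ℓ) : ℂ) * ((i+r).choose r : ℂ) * bernPoly i y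
        * x ^ (n + ℓ + r - i) * hsq
    · rw [if_neg (by omega : ¬ ℓ + r ≤ i + r), if_neg hli]
      ring
  rw [Finset.sum_congr rfl step2]
  -- LHS reindex
  have hset : ∑ i ∈ range (n + ℓ + r + 1),
      bernPoly i y * (if ℓ ≤ i then (((n+r).choose (i-ℓ) * ((i+r).choose r) : ℕ) : ℂ) else 0)
        * x ^ (n + ℓ + r - i)
      = ∑ i ∈ Finset.Ico ℓ (n + ℓ + r + 1),
        bernPoly i y * ((((n+r).choose (i-ℓ) * ((i+r).choose r) : ℕ)) : ℂ) * x ^ (n + ℓ + r - i) := by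
    rw [← Finset.sum_subset (h := fun i (hi : i ∈ Finset.Ico ℓ (n + ℓ + r + 1)) => by
      rw [Finset.mem_Ico] at hi
      exact Finset.mem_range.mpr hi.2)]
    · exact Finset.sum_congr rfl fun i hi => by
        rw [Finset.mem_Ico] at hi
        rw [if_pos hi.1]
    · intro i hi hi'
      rw [Finset.mem_range] at hi
      rw [Finset.mem_Ico] at hi'
      rw [if_neg (by omega)]
      ring
  rw [hset, Finset.sum_Ico_eq_sum_range]
  have : n + ℓ + r + 1 - ℓ = n + r + 1 := by omega
  rw [this]
  refine Finset.sum_congr rfl fun k hk => ?_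
  have e1 : ℓ + k - ℓ = k := by omega
  have e2 : n + ℓ + r - (ℓ + k) = n + r - k := by omega
  have e3 : ℓ + k + r = (ℓ + k) + r := by ring
  rw [e1, e2]
  push_cast
  ring

private lemma step_identity (ℓ n r : ℕ) (x u : ℂ) :
    ∑ k ∈ range (ℓ + r + 1), (-1:ℂ)^(ℓ+r+k) * x^(ℓ+r-k) * ((ℓ+r).choose k : ℂ) *
        ((n+k+r).choose r : ℂ) * ((n+k : ℕ) : ℂ) * u^(n+k-1)
    = ((r:ℂ)+1) * ∑ j ∈ range (r+2), ((n+r).choose j : ℂ) * ((ℓ+r).choose (r+1-j) : ℂ)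
        * (u-x)^(ℓ+j-1) * u^(n+r-j) := by
  have hrhs : ∀ j ∈ range (r+2),
      ((r:ℂ)+1) * (((n+r).choose j : ℂ) * ((ℓ+r).choose (r+1-j) : ℂ)
        * (u-x)^(ℓ+j-1) * u^(n+r-j))
      = ∑ m ∈ range (ℓ+r+1),
          (((r+1) * ((n+r).choose j) * ((ℓ+r).choose (r+1-j)) * ((ℓ+j-1).choose m) : ℕ) : ℂ)
            * (-x)^m * u^(n+ℓ+r-1-m) := by
    intro j hj
    have hj' : j ≤ r + 1 := by simpa [Nat.lt_succ_iff] using Finset.mem_range.mp hj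
    have hsub : range ((ℓ+j-1)+1) ⊆ range (ℓ+r+1) := by
      intro m hm
      rw [Finset.mem_range] at hm ⊢
      omega
    have hz : ∀ m ∈ range (ℓ+r+1), m ∉ range ((ℓ+j-1)+1) →
        (((r+1) * ((n+r).choose j) * ((ℓ+r).choose (r+1-j)) * ((ℓ+j-1).choose m) : ℕ) : ℂ)
          * (-x)^m * u^(n+ℓ+r-1-m) = 0 := by
      intro m hm hm'
      rw [Finset.mem_range] at hm'
      have hcz : (ℓ+j-1).choose m = 0 := Nat.choose_eq_zero_of_lt (by omega)
      rw [hcz]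
      simp
    rw [← Finset.sum_subset hsub hz]
    have hexp : (u - x)^(ℓ+j-1) = ∑ m ∈ range ((ℓ+j-1)+1), (-x)^m * u^((ℓ+j-1)-m)
        * (((ℓ+j-1).choose m : ℕ) : ℂ) := by
      rw [sub_eq_neg_add, add_pow]
    rw [hexp, Finset.mul_sum, Finset.sum_mul, Finset.mul_sum]
    refine Finset.sum_congr rfl fun m hm => ?_
    have hm' : m ≤ ℓ + j - 1 := by simpa [Nat.lt_succ_iff] using Finset.mem_range.mp hm
    by_cases hz2 : ((ℓ+r).choose (r+1-j)) * ((n+r).choose j) = 0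
    · rcases Nat.mul_eq_zero.mp hz2 with h | h <;> (rw [h]; push_cast; ring)
    · have h1 : 1 ≤ ℓ + j := by
        by_contra hc
        push_neg at hc
        have hℓ : ℓ = 0 := by omega
        have hj0 : j = 0 := by omega
        apply hz2
        rw [hℓ, hj0]
        have hcc : r.choose (r+1) = 0 := Nat.choose_eq_zero_of_lt (by omega)
        simp [hcc]
      have h2 : j ≤ n + r := by
        by_contra hc
        exact hz2 (by rw [Nat.choose_eq_zero_of_lt (by omega : n + r < j)]; ring)
      have hu : u^((ℓ+j-1)-m) * u^(n+r-j) = u^(n+ℓ+r-1-m) := by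
        rw [← pow_add]
        congr 1
        omega
      push_cast
      calc ((r:ℂ)+1) * (((n+r).choose j : ℂ) * ((ℓ+r).choose (r+1-j) : ℂ)
            * ((-x)^m * u^((ℓ+j-1)-m) * ((ℓ+j-1).choose m : ℂ)) * u^(n+r-j))
          = (((r:ℂ)+1) * ((n+r).choose j : ℂ) * ((ℓ+r).choose (r+1-j) : ℂ)
              * ((ℓ+j-1).choose m : ℂ)) * (-x)^m * (u^((ℓ+j-1)-m) * u^(n+r-j)) := by ring
        _ = (((r:ℂ)+1) * ((n+r).choose j : ℂ) * ((ℓ+r).choose (r+1-j) : ℂ)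
              * ((ℓ+j-1).choose m : ℂ)) * (-x)^m * u^(n+ℓ+r-1-m) := by rw [hu]
        _ = _ := by push_cast; ring
  rw [Finset.mul_sum, Finset.sum_congr rfl hrhs, Finset.sum_comm]
  have hstep : ∀ m ∈ range (ℓ+r+1),
      ∑ j ∈ range (r+2),
        (((r+1) * ((n+r).choose j) * ((ℓ+r).choose (r+1-j)) * ((ℓ+j-1).choose m) : ℕ) : ℂ)
          * (-x)^m * u^(n+ℓ+r-1-m)
      = (((n+ℓ+r-m) * ((ℓ+r).choose m) * ((n+ℓ+2*r-m).choose r) : ℕ) : ℂ)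
          * (-x)^m * u^(n+ℓ+r-1-m) := by
    intro m hm
    have hm' : m ≤ ℓ + r := by simpa [Nat.lt_succ_iff] using Finset.mem_range.mp hm
    rw [← Finset.sum_mul, ← Finset.sum_mul, ← Nat.cast_sum]
    rw [stepNat ℓ n r m hm']
  rw [Finset.sum_congr rfl hstep]
  rw [← Finset.sum_range_reflect]
  refine Finset.sum_congr rfl fun m hm => ?_
  have hm' : m ≤ ℓ + r := by simpa [Nat.lt_succ_iff] using Finset.mem_range.mp hm
  have e0 : ℓ + r + 1 - 1 - m = ℓ + r - m := by omega
  rw [e0]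
  have e1 : ℓ + r - (ℓ + r - m) = m := by omega
  have e2 : (ℓ+r).choose (ℓ+r-m) = (ℓ+r).choose m := Nat.choose_symm hm'
  have e3 : n + (ℓ + r - m) + r = n + ℓ + 2*r - m := by omega
  have e4 : n + (ℓ + r - m) = n + ℓ + r - m := by omega
  have e5 : n + (ℓ + r - m) - 1 = n + ℓ + r - 1 - m := by omega
  have hsgn : (-1:ℂ)^(ℓ+r+(ℓ+r-m)) = (-1:ℂ)^m := by
    rw [show ℓ+r+(ℓ+r-m) = m + 2*(ℓ+r-m) from by omega, pow_add, pow_mul]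
    norm_num
  rw [e1, e2, e3, e5, e4, hsgn, neg_pow]
  push_cast
  ring

/-- If `x + y + z = s + 1` with `s ∈ ℕ`, then `S_{n,ℓ,r}^{(1)}(x,y,z) = (r+1)
∑_{k=1}^{s} ∑_{j=0}^{r+1} C(n+r,j) C(ℓ+r,r+1-j) (y-k)^{ℓ+j-1} (x+y-k)^{n+r-j}`.
Terms whose binomial coefficient `C(ℓ+r,r+1-j)` vanishes are zero; this covers the only
case `ℓ = j = 0` where the exponent `ℓ+j-1` would be negative (here truncated natural
subtraction is used, which is harmless since the corresponding term vanishes). -/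
theorem S_explicit_formula (x y z : ℂ) (s : ℕ) (h : x + y + z = (s : ℂ) + 1) (ℓ n r : ℕ) :
    (∑ k ∈ Finset.range (n + r + 1),
        x ^ (n + r - k) * ((n + r).choose k : ℂ) * ((ℓ + k + r).choose r : ℂ) *
          bernPoly (ℓ + k) y) +
      (-1 : ℂ) ^ (ℓ + n + r + 1) *
        ∑ k ∈ Finset.range (ℓ + r + 1),
          x ^ (ℓ + r - k) * ((ℓ + r).choose k : ℂ) * ((n + k + r).choose r : ℂ) *
            bernPoly (n + k) z =
    ((r : ℂ) + 1) *
      ∑ k ∈ Finset.Icc 1 s, ∑ j ∈ Finset.range (r + 2),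
        ((n + r).choose j : ℂ) * ((ℓ + r).choose (r + 1 - j) : ℂ) *
          (y - (k : ℂ)) ^ (ℓ + j - 1) * (x + y - (k : ℂ)) ^ (n + r - j) := by
  have hz : z = 1 - ((x + y) - (s : ℂ)) := by linear_combination h
  subst hz
  -- rewrite each bernoulli term
  have hB : ∀ k, bernPoly (n + k) (1 - ((x + y) - (s : ℂ)))
      = (-1:ℂ)^(n+k) * bernPoly (n+k) (x+y)
        - (-1:ℂ)^(n+k) * ((n+k : ℕ) : ℂ) * ∑ i ∈ Finset.Icc 1 s, ((x+y) - (i:ℂ))^(n+k-1) := by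
    intro k
    rw [bernPoly_one_sub, bernPoly_sub_nat]
    push_cast
    ring
  have hsplit : ∀ k ∈ range (ℓ + r + 1),
      x ^ (ℓ + r - k) * ((ℓ + r).choose k : ℂ) * ((n + k + r).choose r : ℂ) *
        bernPoly (n + k) (1 - ((x + y) - (s : ℂ)))
      = x ^ (ℓ + r - k) * ((ℓ + r).choose k : ℂ) * ((n + k + r).choose r : ℂ) *
          ((-1:ℂ)^(n+k) * bernPoly (n+k) (x+y))
        - x ^ (ℓ + r - k) * ((ℓ + r).choose k : ℂ) * ((n + k + r).choose r : ℂ) *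
          ((-1:ℂ)^(n+k) * ((n+k : ℕ) : ℂ) * ∑ i ∈ Finset.Icc 1 s, ((x+y) - (i:ℂ))^(n+k-1)) := by
    intro k _
    rw [hB k]
    ring
  rw [Finset.sum_congr rfl hsplit, Finset.sum_sub_distrib, mul_sub]
  have hsign : ∀ k : ℕ, (-1:ℂ)^(ℓ+n+r+1) * (-1:ℂ)^(n+k) = -(-1:ℂ)^(ℓ+r+k) := by
    intro k
    rw [← pow_add, show ℓ+n+r+1+(n+k) = (ℓ+r+k) + (2*n+1) from by omega, pow_add]
    have h21 : (-1:ℂ)^(2*n+1) = -1 := by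
      rw [pow_succ, pow_mul]
      norm_num
    rw [h21]
    ring
  have hpart1 : (∑ k ∈ Finset.range (n + r + 1),
        x ^ (n + r - k) * ((n + r).choose k : ℂ) * ((ℓ + k + r).choose r : ℂ) *
          bernPoly (ℓ + k) y) +
      (-1:ℂ)^(ℓ+n+r+1) * ∑ k ∈ range (ℓ + r + 1),
        x ^ (ℓ + r - k) * ((ℓ + r).choose k : ℂ) * ((n + k + r).choose r : ℂ) *
          ((-1:ℂ)^(n+k) * bernPoly (n+k) (x+y)) = 0 := by
    rw [Finset.mul_sum]
    have hterm : ∀ k ∈ range (ℓ + r + 1),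
        (-1:ℂ)^(ℓ+n+r+1) * (x ^ (ℓ + r - k) * ((ℓ + r).choose k : ℂ) *
          ((n + k + r).choose r : ℂ) * ((-1:ℂ)^(n+k) * bernPoly (n+k) (x+y)))
        = -((-x) ^ (ℓ + r - k) * ((ℓ + r).choose k : ℂ) *
            ((n + k + r).choose r : ℂ) * bernPoly (n + k) (x + y)) := by
      intro k hk
      have hk' : k ≤ ℓ + r := by simpa [Nat.lt_succ_iff] using Finset.mem_range.mp hk
      have hnx : (-x) ^ (ℓ + r - k) = (-1:ℂ)^(ℓ+r+k) * x ^ (ℓ + r - k) := by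
        rw [neg_pow]
        congr 1
        rw [show ℓ+r+k = (ℓ+r-k) + 2*k from by omega, pow_add, pow_mul]
        norm_num
      linear_combination (x ^ (ℓ + r - k) * ((ℓ + r).choose k : ℂ) *
          ((n + k + r).choose r : ℂ) * bernPoly (n + k) (x + y)) * hsign k
        + (((ℓ + r).choose k : ℂ) * ((n + k + r).choose r : ℂ) * bernPoly (n + k) (x + y)) * hnx
    rw [Finset.sum_congr rfl hterm, Finset.sum_neg_distrib]
    rw [base_identity ℓ n r x y]
    ring
  have hpart2 : (-1:ℂ)^(ℓ+n+r+1) * ∑ k ∈ range (ℓ + r + 1),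
      x ^ (ℓ + r - k) * ((ℓ + r).choose k : ℂ) * ((n + k + r).choose r : ℂ) *
        ((-1:ℂ)^(n+k) * ((n+k : ℕ) : ℂ) * ∑ i ∈ Finset.Icc 1 s, ((x+y) - (i:ℂ))^(n+k-1))
      = -(((r : ℂ) + 1) * ∑ i ∈ Finset.Icc 1 s, ∑ j ∈ Finset.range (r + 2),
          ((n + r).choose j : ℂ) * ((ℓ + r).choose (r + 1 - j) : ℂ) *
            (y - (i : ℂ)) ^ (ℓ + j - 1) * (x + y - (i : ℂ)) ^ (n + r - j)) := by
    rw [Finset.mul_sum]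
    have step1 : ∀ k ∈ range (ℓ + r + 1),
        (-1:ℂ)^(ℓ+n+r+1) * (x ^ (ℓ + r - k) * ((ℓ + r).choose k : ℂ) *
          ((n + k + r).choose r : ℂ) *
          ((-1:ℂ)^(n+k) * ((n+k : ℕ) : ℂ) * ∑ i ∈ Finset.Icc 1 s, ((x+y) - (i:ℂ))^(n+k-1)))
        = -∑ i ∈ Finset.Icc 1 s, (-1:ℂ)^(ℓ+r+k) * x^(ℓ+r-k) * ((ℓ+r).choose k : ℂ) *
            ((n+k+r).choose r : ℂ) * ((n+k : ℕ) : ℂ) * ((x+y) - (i:ℂ))^(n+k-1) := by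
      intro k _
      calc (-1:ℂ)^(ℓ+n+r+1) * (x ^ (ℓ + r - k) * ((ℓ + r).choose k : ℂ) *
            ((n + k + r).choose r : ℂ) *
            ((-1:ℂ)^(n+k) * ((n+k : ℕ) : ℂ) * ∑ i ∈ Finset.Icc 1 s, ((x+y) - (i:ℂ))^(n+k-1)))
          = ((-1:ℂ)^(ℓ+n+r+1) * x ^ (ℓ + r - k) * ((ℓ + r).choose k : ℂ) *
              ((n + k + r).choose r : ℂ) * ((-1:ℂ)^(n+k) * ((n+k : ℕ) : ℂ)))
            * ∑ i ∈ Finset.Icc 1 s, ((x+y) - (i:ℂ))^(n+k-1) := by ring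
        _ = ∑ i ∈ Finset.Icc 1 s, ((-1:ℂ)^(ℓ+n+r+1) * x ^ (ℓ + r - k) * ((ℓ + r).choose k : ℂ) *
              ((n + k + r).choose r : ℂ) * ((-1:ℂ)^(n+k) * ((n+k : ℕ) : ℂ)))
            * ((x+y) - (i:ℂ))^(n+k-1) := by rw [Finset.mul_sum]
        _ = -∑ i ∈ Finset.Icc 1 s, (-1:ℂ)^(ℓ+r+k) * x^(ℓ+r-k) * ((ℓ+r).choose k : ℂ) *
            ((n+k+r).choose r : ℂ) * ((n+k : ℕ) : ℂ) * ((x+y) - (i:ℂ))^(n+k-1) := by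
            rw [← Finset.sum_neg_distrib]
            refine Finset.sum_congr rfl fun i _ => ?_
            linear_combination (x ^ (ℓ + r - k) * ((ℓ + r).choose k : ℂ) *
              ((n + k + r).choose r : ℂ) * ((n+k : ℕ) : ℂ) * ((x+y) - (i:ℂ))^(n+k-1)) * hsign k
    rw [Finset.sum_congr rfl step1, Finset.sum_neg_distrib, Finset.sum_comm]
    congr 1
    rw [Finset.mul_sum]
    refine Finset.sum_congr rfl fun i _ => ?_
    have hu := step_identity ℓ n r x ((x+y) - (i:ℂ))
    rw [hu]
    congr 1
    refine Finset.sum_congr rfl fun j _ => ?_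
    have hyx : (x + y - (i:ℂ)) - x = y - (i:ℂ) := by ring
    rw [hyx]
  linear_combination hpart1 - hpart2
end

section
/- Let α, x, y, z ∈ ℂ with x + y + z = α, let ℓ, n be natural numbers and let r ≥ 1 be a natural number. Then (−1)^n Σ_{k=0}^{n+r−1} C(n+r,k) C(ℓ+k+r,r) x^{n+r−k} B_{ℓ+k}^{(α)}(y) + (−1)^{ℓ+r+1} Σ_{k=0}^{ℓ+r−1} C(ℓ+r,k) C(n+k+r,r) x^{ℓ+r−k} B_{n+k}^{(α)}(z) = (−1)^n C(ℓ+n+2r,r) ( B_{n+ℓ+r}^{(α)}(x+y) − B_{n+ℓ+r}^{(α)}(y) ). -/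
open scoped BigOperators
open Polynomial Finset

noncomputable section

/-- The formal power series `(e^t - 1)/t` over `ℂ` (constant term `1`). -/
def expSub1DivT : PowerSeries ℂ := PowerSeries.mk fun n => ((n + 1).factorial : ℂ)⁻¹

/-- The formal power series `t/(e^t - 1)` over `ℂ`. -/
def bernoulliBase : PowerSeries ℂ := expSub1DivT⁻¹

/-- The formal logarithm of a power series with constant term `1`:
`log F = ∑_{k ≥ 1} (-1)^(k+1) (F-1)^k / k`, computed coefficientwise
(only the terms with `k ≤ n` contribute to the `n`-th coefficient). -/
def formalLog (F : PowerSeries ℂ) : PowerSeries ℂ :=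
  PowerSeries.mk fun n =>
    ∑ k ∈ Finset.range (n + 1),
      (-1 : ℂ) ^ (k + 1) * (k : ℂ)⁻¹ * PowerSeries.coeff n ((F - 1) ^ k)

/-- The formal exponential of a power series with zero constant term:
`exp H = ∑_{k ≥ 0} H^k / k!`, computed coefficientwise. -/
def formalExp (H : PowerSeries ℂ) : PowerSeries ℂ :=
  PowerSeries.mk fun n =>
    ∑ k ∈ Finset.range (n + 1), ((k.factorial : ℂ))⁻¹ * PowerSeries.coeff n (H ^ k)

/-- `(t/(e^t - 1))^α := exp (α • log (t/(e^t - 1)))`. -/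
def bernoulliBasePow (α : ℂ) : PowerSeries ℂ := formalExp (α • formalLog bernoulliBase)

/-- The generalized Bernoulli numbers `B_n^{(α)}`, defined by
`∑ B_n^{(α)} t^n / n! = (t/(e^t-1))^α`. -/
def genBernoulliNumber (α : ℂ) (n : ℕ) : ℂ :=
  (n.factorial : ℂ) * PowerSeries.coeff n (bernoulliBasePow α)

/-- The generalized Bernoulli polynomials `B_n^{(α)}(x)`, defined by
`∑ B_n^{(α)}(x) t^n / n! = (t/(e^t-1))^α e^{t x}`; equivalently
`B_n^{(α)}(x) = ∑_{k ≤ n} C(n,k) B_k^{(α)} x^{n-k}`. -/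
def genBernoulliPoly (α : ℂ) (n : ℕ) : Polynomial ℂ :=
  ∑ k ∈ Finset.range (n + 1),
    Polynomial.C ((n.choose k : ℂ) * genBernoulliNumber α k) * Polynomial.X ^ (n - k)

/-- `Ω_γ`: the unique `ℂ`-linear endomorphism of `ℂ[X]` with `Ω_γ (X^n) = B_n^{(γ)}(X)`. -/
def OmegaOp (γ : ℂ) (P : Polynomial ℂ) : Polynomial ℂ :=
  P.sum fun n a => Polynomial.C a * genBernoulliPoly γ n

end
namespace TSI
open PowerSeries Finset

lemma zcoeff_pow {H : PowerSeries ℂ} (h : constantCoeff H = 0) {n k : ℕ} (hk : n < k) :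
    PowerSeries.coeff n (H ^ k) = 0 := by
  have hd : (PowerSeries.X : PowerSeries ℂ) ^ k ∣ H ^ k :=
    pow_dvd_pow_of_dvd (PowerSeries.X_dvd_iff.2 h) k
  exact (PowerSeries.X_pow_dvd_iff.1 hd) n hk

lemma zcoeff_mul_pow {G H : PowerSeries ℂ} (hG : constantCoeff G = 0)
    (hH : constantCoeff H = 0) {n i j : ℕ} (hk : n < i + j) :
    PowerSeries.coeff n (G ^ i * H ^ j) = 0 := by
  have hd : (PowerSeries.X : PowerSeries ℂ) ^ (i + j) ∣ G ^ i * H ^ j := by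
    rw [pow_add]
    exact mul_dvd_mul (pow_dvd_pow_of_dvd (PowerSeries.X_dvd_iff.2 hG) i)
      (pow_dvd_pow_of_dvd (PowerSeries.X_dvd_iff.2 hH) j)
  exact (PowerSeries.X_pow_dvd_iff.1 hd) n hk

lemma coeff_formalExp (H : PowerSeries ℂ) (n : ℕ) :
    PowerSeries.coeff n (formalExp H) =
      ∑ k ∈ range (n + 1), ((k.factorial : ℂ))⁻¹ * PowerSeries.coeff n (H ^ k) :=
  PowerSeries.coeff_mk _ _

lemma coeff_formalExp_ext {H : PowerSeries ℂ} (h : constantCoeff H = 0) {n N : ℕ}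
    (hN : n < N) :
    PowerSeries.coeff n (formalExp H) =
      ∑ k ∈ range N, ((k.factorial : ℂ))⁻¹ * PowerSeries.coeff n (H ^ k) := by
  rw [coeff_formalExp]
  apply Finset.sum_subset
  · intro k hk; simp only [mem_range] at *; omega
  · intro k _ hk2
    simp only [mem_range, not_lt] at hk2
    rw [zcoeff_pow h (by omega), mul_zero]

lemma constantCoeff_formalExp {H : PowerSeries ℂ} (h : constantCoeff H = 0) :
    constantCoeff (formalExp H) = 1 := by
  rw [← PowerSeries.coeff_zero_eq_constantCoeff_apply, coeff_formalExp]
  simp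

lemma constantCoeff_formalLog (F : PowerSeries ℂ) :
    constantCoeff (formalLog F) = 0 := by
  rw [← PowerSeries.coeff_zero_eq_constantCoeff_apply, formalLog, PowerSeries.coeff_mk]
  simp

lemma fact_inv_fact_inv (i j : ℕ) :
    ((i.factorial : ℂ))⁻¹ * ((j.factorial : ℂ))⁻¹ =
      (((i + j).choose i : ℂ)) * (((i + j).factorial : ℂ))⁻¹ := by
  have h : ((i + j).choose i : ℂ) * (i.factorial : ℂ) * (j.factorial : ℂ) =
      ((i + j).factorial : ℂ) := by
    have := Nat.choose_mul_factorial_mul_factorial (Nat.le_add_right i j)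
    rw [Nat.add_sub_cancel_left] at this
    exact_mod_cast congrArg (Nat.cast : ℕ → ℂ) this
  have hi : (i.factorial : ℂ) ≠ 0 := Nat.cast_ne_zero.2 (Nat.factorial_ne_zero i)
  have hj : (j.factorial : ℂ) ≠ 0 := Nat.cast_ne_zero.2 (Nat.factorial_ne_zero j)
  have hij : (((i + j).factorial : ℂ)) ≠ 0 := Nat.cast_ne_zero.2 (Nat.factorial_ne_zero _)
  field_simp
  linear_combination -h

lemma formalExp_add {G H : PowerSeries ℂ} (hG : constantCoeff G = 0)
    (hH : constantCoeff H = 0) :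
    formalExp (G + H) = formalExp G * formalExp H := by
  ext n
  rw [PowerSeries.coeff_mul]
  have hR : ∑ p ∈ antidiagonal n,
      PowerSeries.coeff p.1 (formalExp G) * PowerSeries.coeff p.2 (formalExp H) =
      ∑ i ∈ range (n + 1), ∑ j ∈ range (n + 1),
        ((i.factorial : ℂ))⁻¹ * ((j.factorial : ℂ))⁻¹ * PowerSeries.coeff n (G ^ i * H ^ j) := by
    have step : ∀ p ∈ antidiagonal n,
        PowerSeries.coeff p.1 (formalExp G) * PowerSeries.coeff p.2 (formalExp H) =
        ∑ i ∈ range (n + 1), ∑ j ∈ range (n + 1),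
          ((i.factorial : ℂ))⁻¹ * ((j.factorial : ℂ))⁻¹ *
            (PowerSeries.coeff p.1 (G ^ i) * PowerSeries.coeff p.2 (H ^ j)) := by
      intro p hp
      rw [Finset.HasAntidiagonal.mem_antidiagonal] at hp
      rw [coeff_formalExp_ext hG (show p.1 < n + 1 by omega),
        coeff_formalExp_ext hH (show p.2 < n + 1 by omega), Finset.sum_mul_sum]
      apply Finset.sum_congr rfl; intro i _
      apply Finset.sum_congr rfl; intro j _
      ring
    rw [Finset.sum_congr rfl step, Finset.sum_comm]
    apply Finset.sum_congr rfl; intro i _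
    rw [Finset.sum_comm]
    apply Finset.sum_congr rfl; intro j _
    rw [← Finset.mul_sum, ← PowerSeries.coeff_mul]
  rw [hR, coeff_formalExp]
  have hL : ∀ k, PowerSeries.coeff n ((G + H) ^ k) =
      ∑ i ∈ range (k + 1), ((k.choose i : ℂ)) * PowerSeries.coeff n (G ^ i * H ^ (k - i)) := by
    intro k
    rw [add_pow, map_sum]
    apply Finset.sum_congr rfl; intro i _
    rw [show ((k.choose i : ℕ) : PowerSeries ℂ) = PowerSeries.C ((k.choose i : ℕ) : ℂ) from
      (map_natCast (PowerSeries.C) _).symm, PowerSeries.coeff_mul_C]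
    ring
  calc ∑ k ∈ range (n + 1), ((k.factorial : ℂ))⁻¹ * PowerSeries.coeff n ((G + H) ^ k)
      = ∑ k ∈ range (n + 1), ∑ i ∈ range (n + 1),
          ((k.factorial : ℂ))⁻¹ * (((k.choose i : ℂ)) * PowerSeries.coeff n (G ^ i * H ^ (k - i))) := by
        apply Finset.sum_congr rfl; intro k hk
        simp only [mem_range] at hk
        rw [hL k, Finset.mul_sum]
        apply Finset.sum_subset
        · intro i hi; simp only [mem_range] at *; omega
        · intro i _ hi2
          simp only [mem_range, not_lt] at hi2
          rw [Nat.choose_eq_zero_of_lt (by omega), Nat.cast_zero, zero_mul, mul_zero]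
    _ = ∑ i ∈ range (n + 1), ∑ k ∈ range (n + 1),
          ((k.factorial : ℂ))⁻¹ * (((k.choose i : ℂ)) * PowerSeries.coeff n (G ^ i * H ^ (k - i))) :=
        Finset.sum_comm
    _ = ∑ i ∈ range (n + 1), ∑ j ∈ range (n + 1),
          ((i.factorial : ℂ))⁻¹ * ((j.factorial : ℂ))⁻¹ * PowerSeries.coeff n (G ^ i * H ^ j) := by
        apply Finset.sum_congr rfl; intro i hi
        simp only [mem_range] at hi
        have hzero : ∀ k ∈ range (n + 1), k ∉ Ico i (n + 1) →
            ((k.factorial : ℂ))⁻¹ * (((k.choose i : ℂ)) * PowerSeries.coeff n (G ^ i * H ^ (k - i))) = 0 := by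
          intro k hk hk2
          simp only [mem_range] at hk
          simp only [mem_Ico, not_and, not_lt] at hk2
          have hki : k < i := by omega
          rw [Nat.choose_eq_zero_of_lt hki, Nat.cast_zero, zero_mul, mul_zero]
        have hsub : Ico i (n + 1) ⊆ range (n + 1) := by
          rw [Finset.range_eq_Ico]; exact Finset.Ico_subset_Ico (Nat.zero_le i) le_rfl
        rw [← Finset.sum_subset hsub hzero, Finset.sum_Ico_eq_sum_range]
        have hstep : ∀ j ∈ range (n + 1 - i),
            (((i + j).factorial : ℂ))⁻¹ *
              ((((i + j).choose i : ℂ)) * PowerSeries.coeff n (G ^ i * H ^ (i + j - i))) =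
            ((i.factorial : ℂ))⁻¹ * ((j.factorial : ℂ))⁻¹ * PowerSeries.coeff n (G ^ i * H ^ j) := by
          intro j _
          rw [Nat.add_sub_cancel_left, fact_inv_fact_inv i j]
          ring
        rw [Finset.sum_congr rfl hstep]
        apply Finset.sum_subset
        · intro j hj; simp only [mem_range] at *; omega
        · intro j _ hj2
          simp only [mem_range, not_lt] at hj2
          rw [zcoeff_mul_pow hG hH (by omega), mul_zero]

end TSI
namespace TSI
open PowerSeries Finset

lemma coeff_formalLog (F : PowerSeries ℂ) (n : ℕ) :
    PowerSeries.coeff n (formalLog F) =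
      ∑ k ∈ range (n + 1), (-1 : ℂ) ^ (k + 1) * (k : ℂ)⁻¹ *
        PowerSeries.coeff n ((F - 1) ^ k) :=
  PowerSeries.coeff_mk _ _

noncomputable def geomV (u : PowerSeries ℂ) : PowerSeries ℂ :=
  PowerSeries.mk fun n => ∑ k ∈ range (n + 1), (-1 : ℂ) ^ k * PowerSeries.coeff n (u ^ k)

lemma coeff_mul_geomV (A : PowerSeries ℂ) {u : PowerSeries ℂ} (hu : constantCoeff u = 0)
    (n : ℕ) :
    PowerSeries.coeff n (A * geomV u) =
      ∑ k ∈ range (n + 1), (-1 : ℂ) ^ k * PowerSeries.coeff n (A * u ^ k) := by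
  rw [PowerSeries.coeff_mul]
  have step : ∀ p ∈ antidiagonal n,
      PowerSeries.coeff p.1 A * PowerSeries.coeff p.2 (geomV u) =
      ∑ k ∈ range (n + 1),
        (-1 : ℂ) ^ k * (PowerSeries.coeff p.1 A * PowerSeries.coeff p.2 (u ^ k)) := by
    intro p hp
    rw [Finset.HasAntidiagonal.mem_antidiagonal] at hp
    rw [geomV, PowerSeries.coeff_mk]
    have hext : ∑ k ∈ range (p.2 + 1), (-1 : ℂ) ^ k * PowerSeries.coeff p.2 (u ^ k) =
        ∑ k ∈ range (n + 1), (-1 : ℂ) ^ k * PowerSeries.coeff p.2 (u ^ k) := by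
      apply Finset.sum_subset
      · intro k hk; simp only [mem_range] at *; omega
      · intro k _ hk2
        simp only [mem_range, not_lt] at hk2
        rw [zcoeff_pow hu (by omega), mul_zero]
    rw [hext, Finset.mul_sum]
    apply Finset.sum_congr rfl; intro k _; ring
  rw [Finset.sum_congr rfl step, Finset.sum_comm]
  apply Finset.sum_congr rfl; intro k _
  rw [← Finset.mul_sum, ← PowerSeries.coeff_mul]

lemma one_add_mul_geomV {u : PowerSeries ℂ} (hu : constantCoeff u = 0) :
    (1 + u) * geomV u = 1 := by
  ext n
  rw [coeff_mul_geomV _ hu]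
  have step : ∀ k ∈ range (n + 1),
      (-1 : ℂ) ^ k * PowerSeries.coeff n ((1 + u) * u ^ k) =
      (-1 : ℂ) ^ k * PowerSeries.coeff n (u ^ k) -
        (-1 : ℂ) ^ (k + 1) * PowerSeries.coeff n (u ^ (k + 1)) := by
    intro k _
    have : (1 + u) * u ^ k = u ^ k + u ^ (k + 1) := by ring
    rw [this, map_add]
    ring
  rw [Finset.sum_congr rfl step, Finset.sum_range_sub']
  rw [zcoeff_pow hu (Nat.lt_succ_self n)]
  simp

lemma eq_of_deriv_eq {F G : PowerSeries ℂ} (h1 : d⁄dX ℂ F = d⁄dX ℂ G)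
    (h0 : constantCoeff F = constantCoeff G) : F = G := by
  ext n
  cases n with
  | zero => simpa [PowerSeries.coeff_zero_eq_constantCoeff] using h0
  | succ n =>
    have := congrArg (PowerSeries.coeff n) h1
    rw [PowerSeries.coeff_derivative, PowerSeries.coeff_derivative] at this
    exact mul_right_cancel₀ (Nat.cast_add_one_ne_zero n) this

lemma deriv_formalLog {G : PowerSeries ℂ} (hG : constantCoeff G = 1) :
    d⁄dX ℂ (formalLog G) = d⁄dX ℂ G * geomV (G - 1) := by
  have hu : PowerSeries.constantCoeff (G - 1) = 0 := by
    rw [map_sub, hG, map_one, sub_self]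
  ext n
  rw [PowerSeries.coeff_derivative, coeff_formalLog, coeff_mul_geomV _ hu]
  rw [Finset.sum_mul, Finset.sum_range_succ']
  have h0 : (-1 : ℂ) ^ (0 + 1) * ((0 : ℕ) : ℂ)⁻¹ * PowerSeries.coeff (n + 1) ((G - 1) ^ 0) *
      ((n : ℂ) + 1) = 0 := by simp
  rw [h0, add_zero]
  apply Finset.sum_congr rfl
  intro k _
  have hd : d⁄dX ℂ ((G - 1) ^ (k + 1)) = (k + 1) • ((G - 1) ^ k • d⁄dX ℂ (G - 1)) := by
    have := (d⁄dX ℂ).leibniz_pow (a := G - 1) (k + 1)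
    simpa using this
  have hdG : d⁄dX ℂ ((G : PowerSeries ℂ) - 1) = d⁄dX ℂ G := by simp
  have hcoeff : PowerSeries.coeff (n + 1) ((G - 1) ^ (k + 1)) * ((n : ℂ) + 1) =
      ((k : ℂ) + 1) * PowerSeries.coeff n (d⁄dX ℂ G * (G - 1) ^ k) := by
    rw [← PowerSeries.coeff_derivative, hd, hdG, smul_eq_mul, map_nsmul, nsmul_eq_mul]
    push_cast
    rw [mul_comm ((G - 1 : PowerSeries ℂ) ^ k) (d⁄dX ℂ G)]
  have hk1 : ((k : ℂ) + 1) ≠ 0 := Nat.cast_add_one_ne_zero k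
  push_cast
  rw [pow_succ, pow_succ]
  field_simp
  linear_combination hcoeff

lemma deriv_formalLog_mul {G : PowerSeries ℂ} (hG : constantCoeff G = 1) :
    d⁄dX ℂ (formalLog G) * G = d⁄dX ℂ G := by
  have hu : PowerSeries.constantCoeff (G - 1) = 0 := by
    rw [map_sub, hG, map_one, sub_self]
  have hGV : G * geomV (G - 1) = 1 := by
    have : (1 + (G - 1)) * geomV (G - 1) = 1 := one_add_mul_geomV hu
    simpa using this
  rw [deriv_formalLog hG]
  calc d⁄dX ℂ G * geomV (G - 1) * G = d⁄dX ℂ G * (G * geomV (G - 1)) := by ring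
    _ = d⁄dX ℂ G := by rw [hGV, mul_one]

end TSI
namespace TSI
open PowerSeries Finset

noncomputable def Ew (w : ℂ) : PowerSeries ℂ :=
  PowerSeries.mk fun n => w ^ n * ((n.factorial : ℂ))⁻¹

lemma coeff_Ew (w : ℂ) (n : ℕ) :
    PowerSeries.coeff n (Ew w) = w ^ n * ((n.factorial : ℂ))⁻¹ :=
  PowerSeries.coeff_mk _ _

lemma constantCoeff_Ew (w : ℂ) : constantCoeff (Ew w) = 1 := by
  rw [← PowerSeries.coeff_zero_eq_constantCoeff_apply, coeff_Ew]
  simp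

lemma Ew_mul (a b : ℂ) : Ew a * Ew b = Ew (a + b) := by
  ext n
  rw [PowerSeries.coeff_mul, Finset.Nat.sum_antidiagonal_eq_sum_range_succ_mk, coeff_Ew]
  have step : ∀ k ∈ range (n + 1),
      PowerSeries.coeff k (Ew a) * PowerSeries.coeff (n - k) (Ew b) =
      a ^ k * b ^ (n - k) * ((n.choose k : ℂ)) * ((n.factorial : ℂ))⁻¹ := by
    intro k hk
    simp only [mem_range] at hk
    rw [coeff_Ew, coeff_Ew]
    have h := fact_inv_fact_inv k (n - k)
    rw [Nat.add_sub_cancel' (by omega : k ≤ n)] at h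
    calc a ^ k * ((k.factorial : ℂ))⁻¹ * (b ^ (n - k) * (((n - k).factorial : ℂ))⁻¹)
        = a ^ k * b ^ (n - k) * (((k.factorial : ℂ))⁻¹ * (((n - k).factorial : ℂ))⁻¹) := by ring
      _ = a ^ k * b ^ (n - k) * ((n.choose k : ℂ) * ((n.factorial : ℂ))⁻¹) := by rw [h]
      _ = a ^ k * b ^ (n - k) * ((n.choose k : ℂ)) * ((n.factorial : ℂ))⁻¹ := by ring
  rw [Finset.sum_congr rfl step, ← Finset.sum_mul, add_pow]

lemma deriv_Ew1 : d⁄dX ℂ (Ew 1) = Ew 1 := by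
  ext n
  rw [PowerSeries.coeff_derivative, coeff_Ew, coeff_Ew]
  have h1 : (((n + 1).factorial : ℂ)) = ((n : ℂ) + 1) * ((n.factorial : ℂ)) := by
    rw [Nat.factorial_succ]; push_cast; ring
  have h2 : ((n.factorial : ℂ)) ≠ 0 := Nat.cast_ne_zero.2 (Nat.factorial_ne_zero n)
  have h3 : ((n : ℂ) + 1) ≠ 0 := Nat.cast_add_one_ne_zero n
  rw [h1, one_pow, one_pow]
  field_simp

lemma rescale_Ew (w : ℂ) : PowerSeries.rescale (-1 : ℂ) (Ew w) = Ew (-w) := by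
  ext n
  rw [PowerSeries.coeff_rescale, coeff_Ew, coeff_Ew, neg_pow w]
  ring

lemma constantCoeff_S : constantCoeff expSub1DivT = 1 := by
  rw [← PowerSeries.coeff_zero_eq_constantCoeff_apply, expSub1DivT, PowerSeries.coeff_mk]
  simp

lemma S_mul_base : expSub1DivT * bernoulliBase = 1 := by
  rw [bernoulliBase]
  exact PowerSeries.mul_inv_cancel _ (by rw [constantCoeff_S]; exact one_ne_zero)

lemma constantCoeff_base : constantCoeff bernoulliBase = 1 := by
  have := congrArg (PowerSeries.constantCoeff (R := ℂ)) S_mul_base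
  rw [map_mul, map_one, constantCoeff_S, one_mul] at this
  exact this

lemma csum_alt (n : ℕ) :
    ∑ k ∈ range (n + 1), (-1 : ℂ) ^ k * (((n + 1).choose k : ℂ)) = (-1 : ℂ) ^ n := by
  have hz := Int.alternating_sum_range_choose (n := n + 1)
  rw [if_neg (Nat.succ_ne_zero n)] at hz
  have hzc : ∑ k ∈ range (n + 2), (-1 : ℂ) ^ k * (((n + 1).choose k : ℂ)) = 0 := by
    exact_mod_cast congrArg (fun z : ℤ => (z : ℂ)) hz
  rw [Finset.sum_range_succ, Nat.choose_self, Nat.cast_one] at hzc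
  linear_combination hzc

lemma neg_one_sq_pow (k : ℕ) : ((-1 : ℂ) ^ k) * ((-1 : ℂ) ^ k) = 1 := by
  rw [← pow_add, ← two_mul, pow_mul]
  simp

lemma neg_one_pow_sub {n k : ℕ} (hk : k ≤ n) :
    (-1 : ℂ) ^ (n - k) = (-1 : ℂ) ^ n * (-1 : ℂ) ^ k := by
  calc (-1 : ℂ) ^ (n - k) = (-1 : ℂ) ^ (n - k) * ((-1 : ℂ) ^ k * (-1 : ℂ) ^ k) := by
        rw [neg_one_sq_pow, mul_one]
    _ = (-1 : ℂ) ^ (n - k + k) * (-1 : ℂ) ^ k := by rw [← mul_assoc, pow_add]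
    _ = (-1 : ℂ) ^ n * (-1 : ℂ) ^ k := by rw [Nat.sub_add_cancel hk]

lemma E_mul_rescaleS : Ew 1 * PowerSeries.rescale (-1 : ℂ) expSub1DivT = expSub1DivT := by
  ext n
  rw [PowerSeries.coeff_mul, Finset.Nat.sum_antidiagonal_eq_sum_range_succ_mk]
  have step : ∀ k ∈ range (n + 1),
      PowerSeries.coeff k (Ew 1) *
        PowerSeries.coeff (n - k) (PowerSeries.rescale (-1 : ℂ) expSub1DivT) =
      (-1 : ℂ) ^ n * ((-1 : ℂ) ^ k * (((n + 1).choose k : ℂ))) * (((n + 1).factorial : ℂ))⁻¹ := by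
    intro k hk
    simp only [mem_range] at hk
    rw [coeff_Ew, PowerSeries.coeff_rescale, expSub1DivT, PowerSeries.coeff_mk, one_pow]
    have h := fact_inv_fact_inv k (n - k + 1)
    have hadd : k + (n - k + 1) = n + 1 := by omega
    rw [hadd] at h
    rw [neg_one_pow_sub (by omega : k ≤ n)]
    calc (1 : ℂ) * ((k.factorial : ℂ))⁻¹ *
          ((-1 : ℂ) ^ n * (-1 : ℂ) ^ k * (((n - k + 1).factorial : ℂ))⁻¹)
        = (-1 : ℂ) ^ n * (-1 : ℂ) ^ k *
            (((k.factorial : ℂ))⁻¹ * (((n - k + 1).factorial : ℂ))⁻¹) := by ring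
      _ = (-1 : ℂ) ^ n * (-1 : ℂ) ^ k *
            (((n + 1).choose k : ℂ) * (((n + 1).factorial : ℂ))⁻¹) := by rw [h]
      _ = (-1 : ℂ) ^ n * ((-1 : ℂ) ^ k * (((n + 1).choose k : ℂ))) *
            (((n + 1).factorial : ℂ))⁻¹ := by ring
  rw [Finset.sum_congr rfl step]
  have : ∑ k ∈ range (n + 1),
      (-1 : ℂ) ^ n * ((-1 : ℂ) ^ k * (((n + 1).choose k : ℂ))) * (((n + 1).factorial : ℂ))⁻¹ =
      ((-1 : ℂ) ^ n * (-1 : ℂ) ^ n) * (((n + 1).factorial : ℂ))⁻¹ := by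
    rw [← Finset.sum_mul, ← Finset.mul_sum, csum_alt]
  rw [this, neg_one_sq_pow, one_mul, expSub1DivT, PowerSeries.coeff_mk]

end TSI
namespace TSI
open PowerSeries Finset

lemma rescaleS_ne_zero : PowerSeries.rescale (-1 : ℂ) expSub1DivT ≠ 0 := by
  intro hc
  have h0 := congrArg (PowerSeries.constantCoeff (R := ℂ)) hc
  rw [map_zero] at h0
  rw [← PowerSeries.coeff_zero_eq_constantCoeff_apply, PowerSeries.coeff_rescale,
    pow_zero, one_mul, PowerSeries.coeff_zero_eq_constantCoeff_apply, constantCoeff_S] at h0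
  exact one_ne_zero h0

lemma sigma_base : PowerSeries.rescale (-1 : ℂ) bernoulliBase = Ew 1 * bernoulliBase := by
  have h1 : (Ew 1 * bernoulliBase) * PowerSeries.rescale (-1 : ℂ) expSub1DivT = 1 := by
    calc (Ew 1 * bernoulliBase) * PowerSeries.rescale (-1 : ℂ) expSub1DivT
        = (Ew 1 * PowerSeries.rescale (-1 : ℂ) expSub1DivT) * bernoulliBase := by ring
      _ = expSub1DivT * bernoulliBase := by rw [E_mul_rescaleS]
      _ = 1 := S_mul_base
  have h2 : PowerSeries.rescale (-1 : ℂ) bernoulliBase *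
      PowerSeries.rescale (-1 : ℂ) expSub1DivT = 1 := by
    rw [← map_mul, mul_comm, S_mul_base, map_one]
  exact mul_right_cancel₀ rescaleS_ne_zero (h2.trans h1.symm)

lemma rescale_formalLog (F : PowerSeries ℂ) :
    PowerSeries.rescale (-1 : ℂ) (formalLog F) = formalLog (PowerSeries.rescale (-1 : ℂ) F) := by
  ext n
  rw [PowerSeries.coeff_rescale, coeff_formalLog, coeff_formalLog, Finset.mul_sum]
  apply Finset.sum_congr rfl
  intro k _
  have : (PowerSeries.rescale (-1 : ℂ) F - 1) ^ k =
      PowerSeries.rescale (-1 : ℂ) ((F - 1) ^ k) := by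
    rw [map_pow, map_sub, map_one]
  rw [this, PowerSeries.coeff_rescale]
  ring

lemma rescale_formalExp (H : PowerSeries ℂ) :
    PowerSeries.rescale (-1 : ℂ) (formalExp H) = formalExp (PowerSeries.rescale (-1 : ℂ) H) := by
  ext n
  rw [PowerSeries.coeff_rescale, coeff_formalExp, coeff_formalExp, Finset.mul_sum]
  apply Finset.sum_congr rfl
  intro k _
  rw [← map_pow, PowerSeries.coeff_rescale]
  ring

lemma rescale_smul (c : ℂ) (F : PowerSeries ℂ) :
    PowerSeries.rescale (-1 : ℂ) (c • F) = c • PowerSeries.rescale (-1 : ℂ) F := by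
  ext n
  rw [PowerSeries.coeff_rescale, PowerSeries.coeff_smul, PowerSeries.coeff_smul,
    PowerSeries.coeff_rescale, smul_eq_mul, smul_eq_mul]
  ring

lemma formalLog_sigma_base :
    formalLog (Ew 1 * bernoulliBase) = PowerSeries.X + formalLog bernoulliBase := by
  have hcE : constantCoeff (Ew 1 * bernoulliBase) = 1 := by
    rw [map_mul, constantCoeff_Ew, constantCoeff_base, one_mul]
  have hEB_ne : (Ew 1 * bernoulliBase : PowerSeries ℂ) ≠ 0 := by
    intro hc
    have h0 := congrArg (PowerSeries.constantCoeff (R := ℂ)) hc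
    rw [hcE, map_zero] at h0
    exact one_ne_zero h0
  apply eq_of_deriv_eq
  · -- derivatives agree
    apply mul_right_cancel₀ hEB_ne
    rw [deriv_formalLog_mul hcE]
    have hleib : d⁄dX ℂ (Ew 1 * bernoulliBase) =
        Ew 1 * d⁄dX ℂ bernoulliBase + bernoulliBase * d⁄dX ℂ (Ew 1) := by
      have := Derivation.leibniz (d⁄dX ℂ) (Ew 1) bernoulliBase
      simpa [smul_eq_mul] using this
    rw [hleib, deriv_Ew1, map_add]
    rw [PowerSeries.derivative_X]
    rw [add_mul, one_mul]
    have hbase : d⁄dX ℂ (formalLog bernoulliBase) * bernoulliBase = d⁄dX ℂ bernoulliBase :=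
      deriv_formalLog_mul constantCoeff_base
    calc Ew 1 * d⁄dX ℂ bernoulliBase + bernoulliBase * Ew 1
        = Ew 1 * bernoulliBase + (d⁄dX ℂ (formalLog bernoulliBase) * bernoulliBase) * Ew 1 := by
          rw [hbase]; ring
      _ = Ew 1 * bernoulliBase + d⁄dX ℂ (formalLog bernoulliBase) * (Ew 1 * bernoulliBase) := by
          ring
  · rw [constantCoeff_formalLog, map_add, constantCoeff_formalLog]
    rw [PowerSeries.constantCoeff_X, add_zero]

lemma formalExp_smul_X (c : ℂ) : formalExp (c • PowerSeries.X) = Ew c := by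
  ext n
  rw [coeff_formalExp, coeff_Ew]
  have step : ∀ k ∈ range (n + 1),
      ((k.factorial : ℂ))⁻¹ * PowerSeries.coeff n ((c • (PowerSeries.X : PowerSeries ℂ)) ^ k) =
      if n = k then c ^ n * ((n.factorial : ℂ))⁻¹ else 0 := by
    intro k _
    rw [_root_.smul_pow, PowerSeries.coeff_smul, PowerSeries.coeff_X_pow, smul_eq_mul]
    split_ifs with hnk
    · subst hnk; rw [mul_one]; ring
    · rw [mul_zero, mul_zero]
  rw [Finset.sum_congr rfl step, Finset.sum_ite_eq (range (n + 1)) n (fun _ => c ^ n * ((n.factorial : ℂ))⁻¹)]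
  rw [if_pos (self_mem_range_succ n)]

lemma sigma_basePow (c : ℂ) :
    PowerSeries.rescale (-1 : ℂ) (bernoulliBasePow c) = Ew c * bernoulliBasePow c := by
  rw [bernoulliBasePow, rescale_formalExp, rescale_smul, rescale_formalLog, sigma_base,
    formalLog_sigma_base, smul_add]
  have h1 : constantCoeff (c • (PowerSeries.X : PowerSeries ℂ)) = 0 := by
    rw [← PowerSeries.coeff_zero_eq_constantCoeff_apply, PowerSeries.coeff_smul,
      PowerSeries.coeff_zero_eq_constantCoeff_apply, PowerSeries.constantCoeff_X, smul_zero]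
  have h2 : constantCoeff (c • formalLog bernoulliBase) = 0 := by
    rw [← PowerSeries.coeff_zero_eq_constantCoeff_apply, PowerSeries.coeff_smul,
      PowerSeries.coeff_zero_eq_constantCoeff_apply, constantCoeff_formalLog, smul_zero]
  rw [formalExp_add h1 h2, formalExp_smul_X]

end TSI
namespace TSI
open PowerSeries Finset

lemma sigma_P_Ew (c w : ℂ) :
    PowerSeries.rescale (-1 : ℂ) (bernoulliBasePow c * Ew w) =
      bernoulliBasePow c * Ew (c - w) := by
  rw [map_mul, sigma_basePow, rescale_Ew]
  calc Ew c * bernoulliBasePow c * Ew (-w)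
      = bernoulliBasePow c * (Ew c * Ew (-w)) := by ring
    _ = bernoulliBasePow c * Ew (c - w) := by rw [Ew_mul, sub_eq_add_neg]

lemma coeff_sym (c w : ℂ) (m : ℕ) :
    PowerSeries.coeff m (bernoulliBasePow c * Ew w) =
      (-1 : ℂ) ^ m * PowerSeries.coeff m (bernoulliBasePow c * Ew (c - w)) := by
  have h := congrArg (PowerSeries.coeff m) (sigma_P_Ew c w)
  rw [PowerSeries.coeff_rescale] at h
  calc PowerSeries.coeff m (bernoulliBasePow c * Ew w)
      = ((-1 : ℂ) ^ m * (-1 : ℂ) ^ m) * PowerSeries.coeff m (bernoulliBasePow c * Ew w) := by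
        rw [neg_one_sq_pow, one_mul]
    _ = (-1 : ℂ) ^ m * PowerSeries.coeff m (bernoulliBasePow c * Ew (c - w)) := by
        rw [mul_assoc, h]

lemma eval_genBernoulliPoly (c w : ℂ) (m : ℕ) :
    (genBernoulliPoly c m).eval w =
      (m.factorial : ℂ) * PowerSeries.coeff m (bernoulliBasePow c * Ew w) := by
  rw [genBernoulliPoly, Polynomial.eval_finset_sum, PowerSeries.coeff_mul,
    Finset.Nat.sum_antidiagonal_eq_sum_range_succ_mk, Finset.mul_sum]
  apply Finset.sum_congr rfl
  intro k hk
  simp only [mem_range] at hk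
  rw [Polynomial.eval_mul, Polynomial.eval_C, Polynomial.eval_pow, Polynomial.eval_X,
    coeff_Ew, genBernoulliNumber]
  have h : (m.choose k : ℂ) * (k.factorial : ℂ) * (((m - k).factorial : ℂ)) = (m.factorial : ℂ) := by
    exact_mod_cast congrArg (Nat.cast : ℕ → ℂ)
      (Nat.choose_mul_factorial_mul_factorial (by omega : k ≤ m))
  have hne : (((m - k).factorial : ℂ)) ≠ 0 := Nat.cast_ne_zero.2 (Nat.factorial_ne_zero _)
  field_simp
  linear_combination (PowerSeries.coeff k (bernoulliBasePow c) * w ^ (m - k)) * h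

lemma coeff_P_Ew_add (c u v : ℂ) (m : ℕ) :
    PowerSeries.coeff m (bernoulliBasePow c * Ew (u + v)) =
      ∑ k ∈ range (m + 1),
        PowerSeries.coeff k (bernoulliBasePow c * Ew v) *
          (u ^ (m - k) * (((m - k).factorial : ℂ))⁻¹) := by
  have hE : Ew (u + v) = Ew v * Ew u := by rw [Ew_mul, add_comm]
  rw [hE, ← mul_assoc, PowerSeries.coeff_mul, Finset.Nat.sum_antidiagonal_eq_sum_range_succ_mk]
  apply Finset.sum_congr rfl
  intro k _
  rw [coeff_Ew]

end TSI
namespace TSI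
open Finset

lemma neg_one_pow_succ' (a : ℕ) : (-1 : ℂ) ^ (a + 1) = -(-1 : ℂ) ^ a := by
  rw [pow_succ]; ring

lemma diff_choose (s : ℕ) : ∀ m N : ℕ,
    ∑ k ∈ range (m + 1), (-1 : ℂ) ^ (m + k) * ((m.choose k : ℂ)) * (((N + k).choose s : ℂ)) =
      if m ≤ s then ((N.choose (s - m) : ℂ)) else 0 := by
  intro m
  induction m with
  | zero => intro N; simp
  | succ m ih =>
    intro N
    have key : ∑ k ∈ range (m + 1 + 1),
        (-1 : ℂ) ^ (m + 1 + k) * (((m + 1).choose k : ℂ)) * (((N + k).choose s : ℂ)) =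
        (∑ k ∈ range (m + 1),
          (-1 : ℂ) ^ (m + k) * ((m.choose k : ℂ)) * (((N + 1 + k).choose s : ℂ))) -
        ∑ k ∈ range (m + 1),
          (-1 : ℂ) ^ (m + k) * ((m.choose k : ℂ)) * (((N + k).choose s : ℂ)) := by
      rw [Finset.sum_range_succ']
      have hsplit : ∀ k ∈ range (m + 1),
          (-1 : ℂ) ^ (m + 1 + (k + 1)) * (((m + 1).choose (k + 1) : ℂ)) *
            (((N + (k + 1)).choose s : ℂ)) =
          (-1 : ℂ) ^ (m + k) * ((m.choose k : ℂ)) * (((N + 1 + k).choose s : ℂ)) +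
          (-1 : ℂ) ^ (m + k) * ((m.choose (k + 1) : ℂ)) * (((N + 1 + k).choose s : ℂ)) := by
        intro k _
        have hP : (((m + 1).choose (k + 1) : ℂ)) = ((m.choose k : ℂ)) + ((m.choose (k + 1) : ℂ)) := by
          exact_mod_cast congrArg (Nat.cast : ℕ → ℂ) (Nat.choose_succ_succ m k)
        have hidx : N + (k + 1) = N + 1 + k := by omega
        have hsgn : (-1 : ℂ) ^ (m + 1 + (k + 1)) = (-1 : ℂ) ^ (m + k) := by
          rw [show m + 1 + (k + 1) = m + k + 2 by omega, pow_add]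
          simp
        rw [hidx, hP, hsgn]; ring
      rw [Finset.sum_congr rfl hsplit, Finset.sum_add_distrib]
      have hT2 : ∑ k ∈ range (m + 1),
          (-1 : ℂ) ^ (m + k) * ((m.choose (k + 1) : ℂ)) * (((N + 1 + k).choose s : ℂ)) =
          ∑ k ∈ range m,
            (-1 : ℂ) ^ (m + k) * ((m.choose (k + 1) : ℂ)) * (((N + 1 + k).choose s : ℂ)) := by
        rw [Finset.sum_range_succ, Nat.choose_succ_self, Nat.cast_zero, mul_zero, zero_mul,
          add_zero]
      have hneg : -(∑ k ∈ range (m + 1),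
          (-1 : ℂ) ^ (m + k) * ((m.choose k : ℂ)) * (((N + k).choose s : ℂ))) =
          (∑ k ∈ range m,
            (-1 : ℂ) ^ (m + k) * ((m.choose (k + 1) : ℂ)) * (((N + 1 + k).choose s : ℂ))) +
          (-1 : ℂ) ^ (m + 1 + 0) * (((m + 1).choose 0 : ℂ)) * (((N + 0).choose s : ℂ)) := by
        rw [← Finset.sum_neg_distrib]
        have hstep : ∀ k ∈ range (m + 1),
            -((-1 : ℂ) ^ (m + k) * ((m.choose k : ℂ)) * (((N + k).choose s : ℂ))) =
            (-1 : ℂ) ^ (m + 1 + k) * ((m.choose k : ℂ)) * (((N + k).choose s : ℂ)) := by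
          intro k _
          rw [show m + 1 + k = m + k + 1 by omega, neg_one_pow_succ']
          ring
        rw [Finset.sum_congr rfl hstep, Finset.sum_range_succ']
        congr 1
        · apply Finset.sum_congr rfl
          intro k _
          have hsgn : (-1 : ℂ) ^ (m + 1 + (k + 1)) = (-1 : ℂ) ^ (m + k) := by
            rw [show m + 1 + (k + 1) = m + k + 2 by omega, pow_add]
            simp
          have hidx : N + (k + 1) = N + 1 + k := by omega
          rw [hsgn, hidx]
        · simp
      linear_combination hT2 - hneg
    rw [key, ih (N + 1), ih N]
    by_cases hms2 : m + 1 ≤ s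
    · rw [if_pos (by omega : m ≤ s), if_pos (by omega : m ≤ s), if_pos hms2]
      have hPascal : (((N + 1).choose (s - m) : ℂ)) =
          ((N.choose (s - m - 1) : ℂ)) + ((N.choose (s - m) : ℂ)) := by
        have h1 : s - m = (s - m - 1) + 1 := by omega
        rw [h1, Nat.choose_succ_succ]
        push_cast
        ring
      have h2 : s - m - 1 = s - (m + 1) := by omega
      rw [hPascal, h2]
      ring
    · by_cases hms : m ≤ s
      · have hsm : s = m := by omega
        rw [if_pos hms, if_pos hms, if_neg hms2, hsm, Nat.sub_self]
        simp
      · rw [if_neg hms, if_neg hms, if_neg hms2]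
        ring

lemma choose_prod_transform (a r j : ℕ) :
    (((a + r).choose r : ℂ)) * ((a.choose j : ℂ)) =
      (((r + j).choose r : ℂ)) * (((a + r).choose (r + j) : ℂ)) := by
  rcases le_or_gt j a with hj | hj
  · have h1 : (((a + r).choose r : ℂ)) * ((r.factorial : ℂ)) * ((a.factorial : ℂ)) =
        (((a + r).factorial : ℂ)) := by
      have := Nat.choose_mul_factorial_mul_factorial (Nat.le_add_left r a)
      rw [Nat.add_sub_cancel] at this
      exact_mod_cast congrArg (Nat.cast : ℕ → ℂ) this
    have h2 : ((a.choose j : ℂ)) * ((j.factorial : ℂ)) * (((a - j).factorial : ℂ)) =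
        ((a.factorial : ℂ)) := by
      exact_mod_cast congrArg (Nat.cast : ℕ → ℂ) (Nat.choose_mul_factorial_mul_factorial hj)
    have h3 : (((r + j).choose r : ℂ)) * ((r.factorial : ℂ)) * ((j.factorial : ℂ)) =
        (((r + j).factorial : ℂ)) := by
      have := Nat.choose_mul_factorial_mul_factorial (Nat.le_add_right r j)
      rw [Nat.add_sub_cancel_left] at this
      exact_mod_cast congrArg (Nat.cast : ℕ → ℂ) this
    have h4 : (((a + r).choose (r + j) : ℂ)) * (((r + j).factorial : ℂ)) *
        (((a - j).factorial : ℂ)) = (((a + r).factorial : ℂ)) := by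
      have hle : r + j ≤ a + r := by omega
      have := Nat.choose_mul_factorial_mul_factorial hle
      rw [show a + r - (r + j) = a - j by omega] at this
      exact_mod_cast congrArg (Nat.cast : ℕ → ℂ) this
    have hc : ((r.factorial : ℂ)) * ((j.factorial : ℂ)) * (((a - j).factorial : ℂ)) ≠ 0 := by
      have hr : ((r.factorial : ℂ)) ≠ 0 := Nat.cast_ne_zero.2 (Nat.factorial_ne_zero r)
      have hjf : ((j.factorial : ℂ)) ≠ 0 := Nat.cast_ne_zero.2 (Nat.factorial_ne_zero j)
      have haj : (((a - j).factorial : ℂ)) ≠ 0 := Nat.cast_ne_zero.2 (Nat.factorial_ne_zero _)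
      exact mul_ne_zero (mul_ne_zero hr hjf) haj
    apply mul_right_cancel₀ hc
    linear_combination ((((a + r).choose r : ℂ)) * ((r.factorial : ℂ))) * h2 + h1 - h4 -
      ((((a + r).choose (r + j) : ℂ)) * (((a - j).factorial : ℂ))) * h3
  · rw [Nat.choose_eq_zero_of_lt hj, Nat.choose_eq_zero_of_lt (by omega : a + r < r + j)]
    push_cast
    ring

lemma Ij (l n r j : ℕ) :
    (if l ≤ j then ((n + r).choose (j - l) : ℂ) * (((j + r).choose r : ℂ)) else 0) +
      ∑ k ∈ range (l + r),
        (-1 : ℂ) ^ (l + r + 1 + k) * (((l + r).choose k : ℂ)) * (((n + k + r).choose r : ℂ)) *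
          (((n + k).choose j : ℂ)) =
    (((l + n + 2 * r).choose r : ℂ)) * (((n + l + r).choose j : ℂ)) := by
  have hT : ∑ k ∈ range (l + r + 1),
      (-1 : ℂ) ^ (l + r + k) * (((l + r).choose k : ℂ)) * (((n + k + r).choose r : ℂ)) *
        (((n + k).choose j : ℂ)) =
      (if l ≤ j then ((n + r).choose (j - l) : ℂ) * (((j + r).choose r : ℂ)) else 0) := by
    have step : ∀ k ∈ range (l + r + 1),
        (-1 : ℂ) ^ (l + r + k) * (((l + r).choose k : ℂ)) * (((n + k + r).choose r : ℂ)) *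
          (((n + k).choose j : ℂ)) =
        (((r + j).choose r : ℂ)) *
          ((-1 : ℂ) ^ (l + r + k) * (((l + r).choose k : ℂ)) *
            (((n + r + k).choose (r + j) : ℂ))) := by
      intro k _
      have ht := choose_prod_transform (n + k) r j
      rw [show n + k + r = n + r + k by omega] at ht ⊢
      calc (-1 : ℂ) ^ (l + r + k) * (((l + r).choose k : ℂ)) * (((n + r + k).choose r : ℂ)) *
            (((n + k).choose j : ℂ))
          = (-1 : ℂ) ^ (l + r + k) * (((l + r).choose k : ℂ)) *
              ((((n + r + k).choose r : ℂ)) * (((n + k).choose j : ℂ))) := by ring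
        _ = (-1 : ℂ) ^ (l + r + k) * (((l + r).choose k : ℂ)) *
              ((((r + j).choose r : ℂ)) * (((n + r + k).choose (r + j) : ℂ))) := by rw [ht]
        _ = (((r + j).choose r : ℂ)) *
              ((-1 : ℂ) ^ (l + r + k) * (((l + r).choose k : ℂ)) *
                (((n + r + k).choose (r + j) : ℂ))) := by ring
    rw [Finset.sum_congr rfl step, ← Finset.mul_sum, diff_choose (r + j) (l + r) (n + r)]
    by_cases hlj : l ≤ j
    · rw [if_pos (by omega : l + r ≤ r + j), if_pos hlj,
        show r + j - (l + r) = j - l by omega, add_comm j r]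
      ring
    · rw [if_neg (by omega : ¬ l + r ≤ r + j), if_neg hlj, mul_zero]
  rw [Finset.sum_range_succ] at hT
  have hsgn : (-1 : ℂ) ^ (l + r + (l + r)) = 1 := by
    rw [← two_mul, pow_mul]
    simp
  rw [hsgn, Nat.choose_self, Nat.cast_one] at hT
  have hstep2 : ∀ k ∈ range (l + r),
      (-1 : ℂ) ^ (l + r + 1 + k) * (((l + r).choose k : ℂ)) * (((n + k + r).choose r : ℂ)) *
        (((n + k).choose j : ℂ)) =
      -((-1 : ℂ) ^ (l + r + k) * (((l + r).choose k : ℂ)) * (((n + k + r).choose r : ℂ)) *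
        (((n + k).choose j : ℂ))) := by
    intro k _
    rw [show l + r + 1 + k = l + r + k + 1 by omega, neg_one_pow_succ']
    ring
  rw [Finset.sum_congr rfl hstep2, Finset.sum_neg_distrib]
  rw [show n + (l + r) + r = l + n + 2 * r by omega, show n + (l + r) = n + l + r by omega] at hT
  linear_combination -hT

end TSI


/-- If `x + y + z = α` and `r ≥ 1`, then
`(-1)^n ∑_{k=0}^{n+r-1} C(n+r,k) C(ℓ+k+r,r) x^{n+r-k} B_{ℓ+k}^{(α)}(y)
 + (-1)^{ℓ+r+1} ∑_{k=0}^{ℓ+r-1} C(ℓ+r,k) C(n+k+r,r) x^{ℓ+r-k} B_{n+k}^{(α)}(z)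
 = (-1)^n C(ℓ+n+2r,r) ( B_{n+ℓ+r}^{(α)}(x+y) - B_{n+ℓ+r}^{(α)}(y) )`. -/
theorem truncated_symmetry_identity (α x y z : ℂ) (h : x + y + z = α) (ℓ n r : ℕ)
    (hr : 1 ≤ r) :
    (-1 : ℂ) ^ n *
        ∑ k ∈ Finset.range (n + r),
          ((n + r).choose k : ℂ) * ((ℓ + k + r).choose r : ℂ) * x ^ (n + r - k) *
            (genBernoulliPoly α (ℓ + k)).eval y +
      (-1 : ℂ) ^ (ℓ + r + 1) *
        ∑ k ∈ Finset.range (ℓ + r),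
          ((ℓ + r).choose k : ℂ) * ((n + k + r).choose r : ℂ) * x ^ (ℓ + r - k) *
            (genBernoulliPoly α (n + k)).eval z =
    (-1 : ℂ) ^ n * ((ℓ + n + 2 * r).choose r : ℂ) *
      ((genBernoulliPoly α (n + ℓ + r)).eval (x + y) -
        (genBernoulliPoly α (n + ℓ + r)).eval y) := by
  classical
  have hz : α - z = x + y := by linear_combination -h
  set g : ℕ → ℂ := fun j => PowerSeries.coeff j (bernoulliBasePow α * TSI.Ew y) with hgdef
  have heval_y : ∀ m : ℕ, (genBernoulliPoly α m).eval y = (m.factorial : ℂ) * g m :=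
    fun m => TSI.eval_genBernoulliPoly α y m
  have heval_xy : (genBernoulliPoly α (n + ℓ + r)).eval (x + y) =
      ((n + ℓ + r).factorial : ℂ) * ∑ k ∈ Finset.range (n + ℓ + r + 1),
        g k * (x ^ (n + ℓ + r - k) * (((n + ℓ + r - k).factorial : ℂ))⁻¹) := by
    rw [TSI.eval_genBernoulliPoly, TSI.coeff_P_Ew_add]
  have heval_z : ∀ m : ℕ, (genBernoulliPoly α m).eval z =
      (-1 : ℂ) ^ m * ((m.factorial : ℂ) * ∑ k ∈ Finset.range (m + 1),
        g k * (x ^ (m - k) * (((m - k).factorial : ℂ))⁻¹)) := by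
    intro m
    rw [TSI.eval_genBernoulliPoly, TSI.coeff_sym α z m, hz, TSI.coeff_P_Ew_add]
    ring
  rw [heval_xy]
  simp only [heval_y, heval_z]
  -- helper: factorial ratio = choose * factorial
  have hfact : ∀ m j : ℕ, j ≤ m →
      ((m.factorial : ℂ)) * (((m - j).factorial : ℂ))⁻¹ =
        ((m.choose j : ℂ)) * ((j.factorial : ℂ)) := by
    intro m j hj
    have hh : ((m.choose j : ℂ)) * ((j.factorial : ℂ)) * (((m - j).factorial : ℂ)) =
        ((m.factorial : ℂ)) := by
      exact_mod_cast congrArg (Nat.cast : ℕ → ℂ) (Nat.choose_mul_factorial_mul_factorial hj)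
    have hne : (((m - j).factorial : ℂ)) ≠ 0 := Nat.cast_ne_zero.2 (Nat.factorial_ne_zero _)
    field_simp
    linear_combination -hh
  -- filter helper
  have hfil : ∀ F : ℕ → ℂ,
      ∑ j ∈ Finset.range (n + ℓ + r), (if ℓ ≤ j then F j else 0) =
        ∑ k ∈ Finset.range (n + r), F (ℓ + k) := by
    intro F
    rw [← Finset.sum_filter]
    have hset : (Finset.range (n + ℓ + r)).filter (fun j => ℓ ≤ j) = Finset.Ico ℓ (n + ℓ + r) := by
      ext a
      simp only [Finset.mem_filter, Finset.mem_range, Finset.mem_Ico]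
      omega
    rw [hset, Finset.sum_Ico_eq_sum_range, show n + ℓ + r - ℓ = n + r by omega]
  have EqA : ∑ k ∈ Finset.range (n + r),
      ((n + r).choose k : ℂ) * ((ℓ + k + r).choose r : ℂ) * x ^ (n + r - k) *
        (((ℓ + k).factorial : ℂ) * g (ℓ + k)) =
      ∑ j ∈ Finset.range (n + ℓ + r),
        (if ℓ ≤ j then ((n + r).choose (j - ℓ) : ℂ) * (((j + r).choose r : ℂ)) else 0) *
          (((j.factorial : ℂ)) * x ^ (n + ℓ + r - j) * g j) := by
    symm
    calc ∑ j ∈ Finset.range (n + ℓ + r),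
        (if ℓ ≤ j then ((n + r).choose (j - ℓ) : ℂ) * (((j + r).choose r : ℂ)) else 0) *
          (((j.factorial : ℂ)) * x ^ (n + ℓ + r - j) * g j)
        = ∑ j ∈ Finset.range (n + ℓ + r),
            (if ℓ ≤ j then ((n + r).choose (j - ℓ) : ℂ) * (((j + r).choose r : ℂ)) *
              (((j.factorial : ℂ)) * x ^ (n + ℓ + r - j) * g j) else 0) := by
          apply Finset.sum_congr rfl
          intro j _
          rw [ite_mul, zero_mul]
      _ = ∑ k ∈ Finset.range (n + r),
            ((n + r).choose (ℓ + k - ℓ) : ℂ) * (((ℓ + k + r).choose r : ℂ)) *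
              ((((ℓ + k).factorial : ℂ)) * x ^ (n + ℓ + r - (ℓ + k)) * g (ℓ + k)) := by
          rw [hfil (fun j => ((n + r).choose (j - ℓ) : ℂ) * (((j + r).choose r : ℂ)) *
            (((j.factorial : ℂ)) * x ^ (n + ℓ + r - j) * g j))]
      _ = ∑ k ∈ Finset.range (n + r),
            ((n + r).choose k : ℂ) * ((ℓ + k + r).choose r : ℂ) * x ^ (n + r - k) *
              (((ℓ + k).factorial : ℂ) * g (ℓ + k)) := by
          apply Finset.sum_congr rfl
          intro k _
          rw [show ℓ + k - ℓ = k by omega, show n + ℓ + r - (ℓ + k) = n + r - k by omega]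
          ring
  have EqB : (-1 : ℂ) ^ (ℓ + r + 1) *
      ∑ k ∈ Finset.range (ℓ + r),
        ((ℓ + r).choose k : ℂ) * ((n + k + r).choose r : ℂ) * x ^ (ℓ + r - k) *
          ((-1 : ℂ) ^ (n + k) * (((n + k).factorial : ℂ) *
            ∑ j ∈ Finset.range (n + k + 1),
              g j * (x ^ (n + k - j) * (((n + k - j).factorial : ℂ))⁻¹))) =
      ∑ j ∈ Finset.range (n + ℓ + r),
        (∑ k ∈ Finset.range (ℓ + r),
          (-1 : ℂ) ^ (ℓ + r + 1 + k) * (((ℓ + r).choose k : ℂ)) * (((n + k + r).choose r : ℂ)) *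
            (((n + k).choose j : ℂ))) *
          ((-1 : ℂ) ^ n * (((j.factorial : ℂ)) * x ^ (n + ℓ + r - j) * g j)) := by
    rw [Finset.mul_sum]
    have step : ∀ k ∈ Finset.range (ℓ + r),
        (-1 : ℂ) ^ (ℓ + r + 1) *
          (((ℓ + r).choose k : ℂ) * ((n + k + r).choose r : ℂ) * x ^ (ℓ + r - k) *
            ((-1 : ℂ) ^ (n + k) * (((n + k).factorial : ℂ) *
              ∑ j ∈ Finset.range (n + k + 1),
                g j * (x ^ (n + k - j) * (((n + k - j).factorial : ℂ))⁻¹)))) =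
        ∑ j ∈ Finset.range (n + ℓ + r),
          (-1 : ℂ) ^ (ℓ + r + 1 + k) * (((ℓ + r).choose k : ℂ)) * (((n + k + r).choose r : ℂ)) *
            (((n + k).choose j : ℂ)) *
            ((-1 : ℂ) ^ n * (((j.factorial : ℂ)) * x ^ (n + ℓ + r - j) * g j)) := by
      intro k hk
      simp only [Finset.mem_range] at hk
      rw [Finset.mul_sum, Finset.mul_sum, Finset.mul_sum, Finset.mul_sum]
      have inner : ∀ j ∈ Finset.range (n + k + 1),
          (-1 : ℂ) ^ (ℓ + r + 1) *
            (((ℓ + r).choose k : ℂ) * ((n + k + r).choose r : ℂ) * x ^ (ℓ + r - k) *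
              ((-1 : ℂ) ^ (n + k) * (((n + k).factorial : ℂ) *
                (g j * (x ^ (n + k - j) * (((n + k - j).factorial : ℂ))⁻¹))))) =
          (-1 : ℂ) ^ (ℓ + r + 1 + k) * (((ℓ + r).choose k : ℂ)) * (((n + k + r).choose r : ℂ)) *
            (((n + k).choose j : ℂ)) *
            ((-1 : ℂ) ^ n * (((j.factorial : ℂ)) * x ^ (n + ℓ + r - j) * g j)) := by
        intro j hj
        simp only [Finset.mem_range] at hj
        have hx : x ^ (ℓ + r - k) * x ^ (n + k - j) = x ^ (n + ℓ + r - j) := by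
          rw [← pow_add, show ℓ + r - k + (n + k - j) = n + ℓ + r - j by omega]
        have hf := hfact (n + k) j (by omega)
        have hs1 : (-1 : ℂ) ^ (n + k) = (-1 : ℂ) ^ n * (-1 : ℂ) ^ k := pow_add (-1 : ℂ) n k
        have hs2 : (-1 : ℂ) ^ (ℓ + r + 1 + k) = (-1 : ℂ) ^ (ℓ + r + 1) * (-1 : ℂ) ^ k :=
          pow_add (-1 : ℂ) (ℓ + r + 1) k
        calc (-1 : ℂ) ^ (ℓ + r + 1) *
            (((ℓ + r).choose k : ℂ) * ((n + k + r).choose r : ℂ) * x ^ (ℓ + r - k) *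
              ((-1 : ℂ) ^ (n + k) * (((n + k).factorial : ℂ) *
                (g j * (x ^ (n + k - j) * (((n + k - j).factorial : ℂ))⁻¹)))))
            = (-1 : ℂ) ^ (ℓ + r + 1) * (-1 : ℂ) ^ (n + k) *
                (((ℓ + r).choose k : ℂ) * ((n + k + r).choose r : ℂ)) *
                ((((n + k).factorial : ℂ)) * (((n + k - j).factorial : ℂ))⁻¹) *
                (x ^ (ℓ + r - k) * x ^ (n + k - j)) * g j := by ring
          _ = (-1 : ℂ) ^ (ℓ + r + 1) * (-1 : ℂ) ^ (n + k) *
                (((ℓ + r).choose k : ℂ) * ((n + k + r).choose r : ℂ)) *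
                ((((n + k).choose j : ℂ)) * ((j.factorial : ℂ))) *
                (x ^ (n + ℓ + r - j)) * g j := by rw [hf, hx]
          _ = (-1 : ℂ) ^ (ℓ + r + 1 + k) * (((ℓ + r).choose k : ℂ)) *
                (((n + k + r).choose r : ℂ)) * (((n + k).choose j : ℂ)) *
                ((-1 : ℂ) ^ n * (((j.factorial : ℂ)) * x ^ (n + ℓ + r - j) * g j)) := by
              rw [hs1, hs2]; ring
      rw [Finset.sum_congr rfl inner]
      apply Finset.sum_subset
      · intro j hj
        simp only [Finset.mem_range] at *
        omega
      · intro j _ hj2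
        simp only [Finset.mem_range, not_lt] at hj2
        rw [Nat.choose_eq_zero_of_lt (by omega : n + k < j), Nat.cast_zero, mul_zero, zero_mul]
    rw [Finset.sum_congr rfl step, Finset.sum_comm]
    apply Finset.sum_congr rfl
    intro j _
    rw [← Finset.sum_mul]
  have EqC : (-1 : ℂ) ^ n * ((ℓ + n + 2 * r).choose r : ℂ) *
      (((n + ℓ + r).factorial : ℂ) * ∑ k ∈ Finset.range (n + ℓ + r + 1),
        g k * (x ^ (n + ℓ + r - k) * (((n + ℓ + r - k).factorial : ℂ))⁻¹) -
        ((n + ℓ + r).factorial : ℂ) * g (n + ℓ + r)) =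
      ∑ j ∈ Finset.range (n + ℓ + r),
        (((ℓ + n + 2 * r).choose r : ℂ)) * (((n + ℓ + r).choose j : ℂ)) *
          ((-1 : ℂ) ^ n * (((j.factorial : ℂ)) * x ^ (n + ℓ + r - j) * g j)) := by
    rw [Finset.sum_range_succ, show n + ℓ + r - (n + ℓ + r) = 0 by omega]
    rw [pow_zero, Nat.factorial_zero, Nat.cast_one, inv_one, mul_one, mul_one]
    rw [mul_add, add_sub_cancel_right, Finset.mul_sum, Finset.mul_sum]
    apply Finset.sum_congr rfl
    intro j hj
    simp only [Finset.mem_range] at hj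
    have hf := hfact (n + ℓ + r) j (by omega)
    calc (-1 : ℂ) ^ n * ((ℓ + n + 2 * r).choose r : ℂ) *
          (((n + ℓ + r).factorial : ℂ) *
            (g j * (x ^ (n + ℓ + r - j) * (((n + ℓ + r - j).factorial : ℂ))⁻¹)))
        = (-1 : ℂ) ^ n * ((ℓ + n + 2 * r).choose r : ℂ) *
            ((((n + ℓ + r).factorial : ℂ)) * (((n + ℓ + r - j).factorial : ℂ))⁻¹) *
            (g j * x ^ (n + ℓ + r - j)) := by ring
      _ = (-1 : ℂ) ^ n * ((ℓ + n + 2 * r).choose r : ℂ) *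
            ((((n + ℓ + r).choose j : ℂ)) * ((j.factorial : ℂ))) *
            (g j * x ^ (n + ℓ + r - j)) := by rw [hf]
      _ = (((ℓ + n + 2 * r).choose r : ℂ)) * (((n + ℓ + r).choose j : ℂ)) *
            ((-1 : ℂ) ^ n * (((j.factorial : ℂ)) * x ^ (n + ℓ + r - j) * g j)) := by ring
  rw [EqA, EqB, EqC, Finset.mul_sum, ← Finset.sum_add_distrib]
  apply Finset.sum_congr rfl
  intro j _
  linear_combination ((-1 : ℂ) ^ n * (((j.factorial : ℂ)) * x ^ (n + ℓ + r - j) * g j)) *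
    TSI.Ij ℓ n r j
end

section
/- Let t ∈ ℂ, let ℓ, n be natural numbers and let r ≥ 1 be a natural number. Then (−1)^n Σ_{k=0}^{n+r−1} C(n+r,k) C(ℓ+k+r,r) B_{ℓ+k}(t) + (−1)^{ℓ+r+1} Σ_{k=0}^{ℓ+r−1} C(ℓ+r,k) C(n+k+r,r) B_{n+k}(−t) = (−1)^n C(n+ℓ+2r,r) (n+ℓ+r) t^{n+ℓ+r−1}. -/
open scoped BigOperators
open Finset

namespace WSP

open Polynomial
open scoped fwdDiff

lemma fwdDiff_choose_q (j : ℕ) :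
    Δ_[1] (fun x ↦ (x.choose (j + 1) : ℚ) : ℕ → ℚ) = fun x ↦ (x.choose j : ℚ) := by
  ext n
  simp only [fwdDiff, Nat.choose_succ_succ' n j, Nat.cast_add, add_sub_cancel_right]

lemma fwdDiff_iter_choose_q (j k : ℕ) :
    (Δ_[1])^[k] (fun x ↦ (x.choose (k + j) : ℚ) : ℕ → ℚ) = fun x ↦ (x.choose j : ℚ) := by
  induction k generalizing j with
  | zero => simp
  | succ k IH =>
      simp only [Function.iterate_succ_apply', add_assoc, add_comm 1 j, IH, fwdDiff_choose_q]

lemma alt_eq (m x r : ℕ) :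
    ∑ i ∈ range (m + 1), (-1 : ℚ) ^ i * (m.choose i : ℚ) * ((x + i).choose r : ℚ)
      = (-1) ^ m * (Δ_[1])^[m] (fun y ↦ (y.choose r : ℚ)) x := by
  rw [fwdDiff_iter_eq_sum_shift, Finset.mul_sum]
  refine Finset.sum_congr rfl fun i hi => ?_
  have hi' : i ≤ m := Nat.lt_succ_iff.mp (Finset.mem_range.mp hi)
  obtain ⟨d, rfl⟩ : ∃ d, m = i + d := ⟨m - i, (Nat.add_sub_cancel' hi').symm⟩
  have hd : i + d - i = d := by omega
  rw [hd]
  simp only [smul_eq_mul, mul_one, zsmul_eq_mul]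
  push_cast
  have h2 : ((-1 : ℚ) ^ d) ^ 2 = 1 := by
    rw [← pow_mul, pow_mul']
    norm_num
  linear_combination (-((((i + d).choose i : ℚ)) * (((x + i).choose r : ℚ)) * (-1 : ℚ) ^ i)) * h2

lemma S_small {m r : ℕ} (h : m ≤ r) (x : ℕ) :
    ∑ i ∈ range (m + 1), (-1 : ℚ) ^ i * (m.choose i : ℚ) * ((x + i).choose r : ℚ)
      = (-1) ^ m * ((x.choose (r - m) : ℚ)) := by
  obtain ⟨j, rfl⟩ : ∃ j, r = m + j := ⟨r - m, (Nat.add_sub_cancel' h).symm⟩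
  rw [alt_eq, fwdDiff_iter_choose_q]
  simp

lemma iter_const_zero (d : ℕ) : (Δ_[1])^[d] (fun _ ↦ (0 : ℚ) : ℕ → ℚ) = fun _ ↦ 0 := by
  induction d with
  | zero => rfl
  | succ d IH => rw [Function.iterate_succ_apply, fwdDiff_const, IH]

lemma S_big {m r : ℕ} (h : r < m) (x : ℕ) :
    ∑ i ∈ range (m + 1), (-1 : ℚ) ^ i * (m.choose i : ℚ) * ((x + i).choose r : ℚ) = 0 := by
  obtain ⟨d, rfl⟩ : ∃ d, m = (d + 1) + r := ⟨m - r - 1, by omega⟩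
  rw [alt_eq]
  have h0 : (Δ_[1])^[r] (fun y ↦ (y.choose r : ℚ) : ℕ → ℚ) = fun _ ↦ (1 : ℚ) := by
    have := fwdDiff_iter_choose_q 0 r
    simp only [add_zero, Nat.choose_zero_right, Nat.cast_one] at this
    exact this
  rw [Function.iterate_add_apply, h0, Function.iterate_succ_apply, fwdDiff_const,
    iter_const_zero]
  simp

noncomputable def I : ℚ[X] →ₗ[ℚ] ℚ :=
  Polynomial.lsum (fun n => LinearMap.toSpanSingleton ℚ ℚ (1 / (n + 1)))

lemma I_monomial (n : ℕ) (a : ℚ) : I (monomial n a) = a * (1 / (n + 1)) := by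
  simp only [I, Polynomial.lsum_apply, LinearMap.toSpanSingleton_apply, smul_eq_mul]
  rw [Polynomial.sum_monomial_index]
  simp

lemma I_C (a : ℚ) : I (C a) = a := by
  have := I_monomial 0 a
  simp only [Nat.cast_zero, zero_add, div_one, mul_one] at this
  rwa [Polynomial.monomial_zero_left] at this

lemma I_X_pow (n : ℕ) : I (X ^ n) = 1 / (n + 1) := by
  have := I_monomial n 1
  rwa [Polynomial.monomial_one_right_eq_X_pow, one_mul] at this

lemma I_derivative (p : ℚ[X]) : I (derivative p) = p.eval 1 - p.eval 0 := by
  induction p using Polynomial.induction_on' with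
  | add p q hp hq => simp [hp, hq]; ring
  | monomial n a =>
      cases n with
      | zero => simp
      | succ m =>
          rw [derivative_monomial, I_monomial]
          have hm : ((m : ℚ) + 1) ≠ 0 := by positivity
          simp only [Nat.add_sub_cancel, eval_monomial, one_pow, Nat.cast_add, Nat.cast_one]
          rw [zero_pow (Nat.succ_ne_zero m)]
          field_simp
          ring

lemma natCast_mul_eq_smul (c : ℕ) (p : ℚ[X]) :
    ((c : ℚ[X])) * p = ((c : ℚ)) • p := by
  rw [smul_eq_C_mul, map_natCast]

lemma deriv_bern_comp_neg (m : ℕ) :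
    derivative ((Polynomial.bernoulli (m + 1)).comp (-X)) =
      (-((m : ℚ) + 1)) • ((Polynomial.bernoulli m).comp (-X)) := by
  have h2 : ((m + 1 : ℕ) : ℚ[X]) * (Polynomial.bernoulli m).comp (-X)
      = ((m : ℚ) + 1) • (Polynomial.bernoulli m).comp (-X) := by
    rw [natCast_mul_eq_smul]
    push_cast
    ring_nf
  rw [derivative_comp, derivative_bernoulli_add_one, derivative_neg, derivative_X, mul_comp,
    add_comp, natCast_comp, one_comp, neg_smul, ← h2]
  push_cast
  ring

lemma I_bernoulli (m : ℕ) (hm : m ≠ 0) : I (Polynomial.bernoulli m) = 0 := by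
  have hd := derivative_bernoulli_add_one m
  have h1 : I (derivative (Polynomial.bernoulli (m + 1))) =
      ((m : ℚ) + 1) * I (Polynomial.bernoulli m) := by
    rw [hd]
    have : ((m : ℚ[X]) + 1) * Polynomial.bernoulli m
        = ((m : ℚ) + 1) • Polynomial.bernoulli m := by
      rw [smul_eq_C_mul, C_add, C_1, map_natCast]
    rw [this, map_smul, smul_eq_mul]
  rw [I_derivative, Polynomial.bernoulli_eval_one, Polynomial.bernoulli_eval_zero,
    ← bernoulli_eq_bernoulli'_of_ne_one (by omega : m + 1 ≠ 1), sub_self] at h1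
  have hm1 : ((m : ℚ) + 1) ≠ 0 := by positivity
  exact (mul_eq_zero.mp h1.symm).resolve_left hm1

lemma bern_eval_neg_one (m : ℕ) :
    (Polynomial.bernoulli (m + 1)).eval (-1 : ℚ)
      = _root_.bernoulli (m + 1) - ((m : ℚ) + 1) * (-1) ^ m := by
  have := Polynomial.bernoulli_eval_one_add (m + 1) (-1)
  simp only [add_neg_cancel, Nat.add_sub_cancel, Polynomial.bernoulli_eval_zero] at this
  rw [this]
  push_cast
  ring

lemma I_bern_comp_neg (m : ℕ) : I ((Polynomial.bernoulli m).comp (-X)) = (-1 : ℚ) ^ m := by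
  have h1 := I_derivative ((Polynomial.bernoulli (m + 1)).comp (-X))
  rw [deriv_bern_comp_neg, map_smul, smul_eq_mul, eval_comp, eval_comp, eval_neg, eval_neg,
    eval_X, eval_X, neg_zero, Polynomial.bernoulli_eval_zero, bern_eval_neg_one] at h1
  have hm1 : (-((m : ℚ) + 1)) ≠ 0 := by
    have : (0:ℚ) < (m:ℚ) + 1 := by positivity
    linarith
  refine mul_left_cancel₀ hm1 ?_
  linear_combination h1

lemma reflect (k : ℕ) :
    (Polynomial.bernoulli k).comp (-X) =
      (-1 : ℚ) ^ k • (Polynomial.bernoulli k + (k : ℚ[X]) * X ^ (k - 1)) := by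
  induction k with
  | zero => simp [Polynomial.bernoulli_zero]
  | succ j IH =>
      set L := (Polynomial.bernoulli (j + 1)).comp (-X) with hL
      set R := (-1 : ℚ) ^ (j + 1) •
        (Polynomial.bernoulli (j + 1) + ((j + 1 : ℕ) : ℚ[X]) * X ^ j) with hR
      have hdR : derivative R = (-1 : ℚ) ^ (j + 1) •
          (((j + 1 : ℕ) : ℚ[X]) * (Polynomial.bernoulli j + (j : ℚ[X]) * X ^ (j - 1))) := by
        rw [hR, derivative_smul, derivative_add, derivative_bernoulli_add_one, derivative_mul,
          derivative_natCast, derivative_X_pow]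
        congr 1
        rw [map_natCast]
        push_cast
        ring
      have hdL : derivative L = derivative R := by
        rw [hL, deriv_bern_comp_neg, IH, hdR, smul_smul, natCast_mul_eq_smul (j+1), smul_smul]
        congr 1
        push_cast
        ring
      have hD : derivative (L - R) = 0 := by rw [derivative_sub, hdL, sub_self]
      have hC := eq_C_of_derivative_eq_zero hD
      have heval : (L - R).eval 0 = 0 := by
        rw [eval_sub, hL, hR, eval_comp, eval_neg, eval_X, neg_zero,
          Polynomial.bernoulli_eval_zero, eval_smul, eval_add, eval_mul, eval_pow, eval_X,
          Polynomial.bernoulli_eval_zero, eval_natCast, smul_eq_mul]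
        rcases Nat.eq_zero_or_pos j with rfl | hj
        · norm_num [_root_.bernoulli_one]
        · rw [zero_pow (by omega : j ≠ 0), mul_zero, add_zero]
          have h3 : _root_.bernoulli (j + 1) = (-1 : ℚ) ^ (j+1) * _root_.bernoulli (j + 1) := by
            conv_lhs => rw [bernoulli_eq_bernoulli'_of_ne_one (by omega : j + 1 ≠ 1),
              bernoulli'_eq_bernoulli]
          linarith [h3]
      rw [Polynomial.coeff_zero_eq_eval_zero, heval, map_zero] at hC
      exact sub_eq_zero.mp hC

lemma neg_one_pow_congr (a b : ℕ) (h : a % 2 = b % 2) : (-1 : ℚ) ^ a = (-1) ^ b := by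
  rw [neg_one_pow_eq_pow_mod_two, h, ← neg_one_pow_eq_pow_mod_two]

lemma choose_quad {ℓ r j : ℕ} (hℓj : ℓ ≤ j) (hj : j ≤ ℓ + r) :
    (r.choose (j - ℓ) : ℚ) * ((j + r).choose r : ℚ)
      = ((ℓ + r).choose j : ℚ) * ((j + r).choose (j - ℓ) : ℚ) := by
  have h1 : j - ℓ ≤ r := by omega
  have h2 : r ≤ j + r := by omega
  have h3 : j ≤ ℓ + r := hj
  have h4 : j - ℓ ≤ j + r := by omega
  rw [Nat.cast_choose ℚ h1, Nat.cast_choose ℚ h2, Nat.cast_choose ℚ h3, Nat.cast_choose ℚ h4]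
  have e1 : r - (j - ℓ) = ℓ + r - j := by omega
  have e2 : j + r - r = j := by omega
  have e3 : j + r - (j - ℓ) = ℓ + r := by omega
  rw [e1, e2, e3]
  have f1 := Nat.factorial_ne_zero (j - ℓ)
  have f2 := Nat.factorial_ne_zero (ℓ + r - j)
  have f3 := Nat.factorial_ne_zero r
  have f4 := Nat.factorial_ne_zero j
  have f5 := Nat.factorial_ne_zero (ℓ + r)
  have c1 : ((Nat.factorial (j - ℓ) : ℕ) : ℚ) ≠ 0 := Nat.cast_ne_zero.mpr f1
  have c2 : ((Nat.factorial (ℓ + r - j) : ℕ) : ℚ) ≠ 0 := Nat.cast_ne_zero.mpr f2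
  have c3 : ((Nat.factorial r : ℕ) : ℚ) ≠ 0 := Nat.cast_ne_zero.mpr f3
  have c4 : ((Nat.factorial j : ℕ) : ℚ) ≠ 0 := Nat.cast_ne_zero.mpr f4
  have c5 : ((Nat.factorial (ℓ + r) : ℕ) : ℚ) ≠ 0 := Nat.cast_ne_zero.mpr f5
  field_simp

lemma coeff_identity (ℓ r j : ℕ) (hr : 1 ≤ r) (hj : j < ℓ + r) :
    (if ℓ ≤ j then ((r.choose (j - ℓ) : ℚ) * ((j + r).choose r : ℚ)) else 0)
      + (-1 : ℚ) ^ (ℓ + r + 1) *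
        ∑ k ∈ range (ℓ + r), (-1 : ℚ) ^ k * ((ℓ + r).choose k : ℚ)
            * ((k + r).choose r : ℚ) * (k.choose j : ℚ)
      = ((ℓ + 2 * r).choose r : ℚ) * ((ℓ + r).choose j : ℚ) := by
  -- extend the sum to `range (ℓ + r + 1)`
  have hext : ∑ k ∈ range (ℓ + r + 1), (-1 : ℚ) ^ k * ((ℓ + r).choose k : ℚ)
      * ((k + r).choose r : ℚ) * (k.choose j : ℚ)
      = (∑ k ∈ range (ℓ + r), (-1 : ℚ) ^ k * ((ℓ + r).choose k : ℚ)
        * ((k + r).choose r : ℚ) * (k.choose j : ℚ))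
        + (-1 : ℚ) ^ (ℓ + r) * ((ℓ + 2 * r).choose r : ℚ) * ((ℓ + r).choose j : ℚ) := by
    rw [Finset.sum_range_succ]
    congr 1
    rw [Nat.choose_self, show ℓ + r + r = ℓ + 2 * r by ring]
    push_cast
    ring
  -- compute the full sum
  have hfull : ∑ k ∈ range (ℓ + r + 1), (-1 : ℚ) ^ k * ((ℓ + r).choose k : ℚ)
      * ((k + r).choose r : ℚ) * (k.choose j : ℚ)
      = (if ℓ ≤ j then (-1 : ℚ) ^ (ℓ + r) * ((ℓ + r).choose j : ℚ)
          * ((j + r).choose (j - ℓ) : ℚ) else 0) := by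
    have hsplit : ∑ k ∈ range (ℓ + r + 1), (-1 : ℚ) ^ k * ((ℓ + r).choose k : ℚ)
        * ((k + r).choose r : ℚ) * (k.choose j : ℚ)
        = ∑ k ∈ Ico j (ℓ + r + 1), (-1 : ℚ) ^ k * ((ℓ + r).choose k : ℚ)
          * ((k + r).choose r : ℚ) * (k.choose j : ℚ) := by
      rw [Finset.range_eq_Ico, ← Finset.sum_Ico_consecutive _ (Nat.zero_le j) (by omega)]
      have : ∑ k ∈ Ico 0 j, (-1 : ℚ) ^ k * ((ℓ + r).choose k : ℚ)
          * ((k + r).choose r : ℚ) * (k.choose j : ℚ) = 0 := by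
        apply Finset.sum_eq_zero
        intro k hk
        rw [Finset.mem_Ico] at hk
        rw [Nat.choose_eq_zero_of_lt hk.2]
        simp
      rw [this, zero_add]
    rw [hsplit, Finset.sum_Ico_eq_sum_range]
    have hm : ℓ + r + 1 - j = (ℓ + r - j) + 1 := by omega
    rw [hm]
    have hstep : ∀ i ∈ range ((ℓ + r - j) + 1),
        (-1 : ℚ) ^ (j + i) * ((ℓ + r).choose (j + i) : ℚ)
          * ((j + i + r).choose r : ℚ) * ((j + i).choose j : ℚ)
        = ((-1 : ℚ) ^ j * ((ℓ + r).choose j : ℚ)) *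
          ((-1 : ℚ) ^ i * ((ℓ + r - j).choose i : ℚ) * (((j + r) + i).choose r : ℚ)) := by
      intro i hi
      rw [Finset.mem_range] at hi
      have hkn : j + i ≤ ℓ + r := by omega
      have hsk : j ≤ j + i := by omega
      have hcm := Nat.choose_mul (n := ℓ + r) hsk
      have e4 : j + i - j = i := by omega
      rw [e4] at hcm
      have : ((ℓ + r).choose (j + i) : ℚ) * ((j + i).choose j : ℚ)
          = ((ℓ + r).choose j : ℚ) * ((ℓ + r - j).choose i : ℚ) := by
        exact_mod_cast congrArg (Nat.cast : ℕ → ℚ) hcm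
      have e5 : j + i + r = (j + r) + i := by ring
      rw [e5, pow_add]
      calc (-1 : ℚ) ^ j * (-1 : ℚ) ^ i * ((ℓ + r).choose (j + i) : ℚ)
            * (((j + r) + i).choose r : ℚ) * ((j + i).choose j : ℚ)
          = ((-1 : ℚ) ^ j * (-1 : ℚ) ^ i) * ((((ℓ + r).choose (j + i) : ℚ))
            * ((j + i).choose j : ℚ)) * (((j + r) + i).choose r : ℚ) := by ring
        _ = ((-1 : ℚ) ^ j * (-1 : ℚ) ^ i) * (((ℓ + r).choose j : ℚ)
            * ((ℓ + r - j).choose i : ℚ)) * (((j + r) + i).choose r : ℚ) := by rw [this]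
        _ = ((-1 : ℚ) ^ j * ((ℓ + r).choose j : ℚ)) *
          ((-1 : ℚ) ^ i * ((ℓ + r - j).choose i : ℚ) * (((j + r) + i).choose r : ℚ)) := by ring
    rw [Finset.sum_congr rfl hstep, ← Finset.mul_sum]
    by_cases hcase : ℓ ≤ j
    · rw [if_pos hcase]
      have hmr : ℓ + r - j ≤ r := by omega
      rw [S_small hmr (j + r)]
      have e6 : r - (ℓ + r - j) = j - ℓ := by omega
      rw [e6]
      have hsgn : (-1 : ℚ) ^ j * ((-1 : ℚ) ^ (ℓ + r - j)) = (-1 : ℚ) ^ (ℓ + r) := by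
        rw [← pow_add]
        exact neg_one_pow_congr (j + (ℓ + r - j)) (ℓ + r) (by omega)
      calc ((-1 : ℚ) ^ j * ((ℓ + r).choose j : ℚ)) * ((-1 : ℚ) ^ (ℓ + r - j)
            * ((j + r).choose (j - ℓ) : ℚ))
          = ((-1 : ℚ) ^ j * ((-1 : ℚ) ^ (ℓ + r - j))) * (((ℓ + r).choose j : ℚ)
            * ((j + r).choose (j - ℓ) : ℚ)) := by ring
        _ = (-1 : ℚ) ^ (ℓ + r) * ((ℓ + r).choose j : ℚ) * ((j + r).choose (j - ℓ) : ℚ) := by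
            rw [hsgn]; ring
    · rw [if_neg hcase]
      have hmr : r < ℓ + r - j := by omega
      rw [S_big hmr (j + r), mul_zero]
  -- put everything together
  have hpartial : ∑ k ∈ range (ℓ + r), (-1 : ℚ) ^ k * ((ℓ + r).choose k : ℚ)
      * ((k + r).choose r : ℚ) * (k.choose j : ℚ)
      = (if ℓ ≤ j then (-1 : ℚ) ^ (ℓ + r) * ((ℓ + r).choose j : ℚ)
          * ((j + r).choose (j - ℓ) : ℚ) else 0)
        - (-1 : ℚ) ^ (ℓ + r) * ((ℓ + 2 * r).choose r : ℚ) * ((ℓ + r).choose j : ℚ) := by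
    rw [← hfull, hext]; ring
  rw [hpartial]
  have hs2 : (-1 : ℚ) ^ (ℓ + r + 1) * (-1 : ℚ) ^ (ℓ + r) = -1 := by
    rw [← pow_add, neg_one_pow_congr (ℓ + r + 1 + (ℓ + r)) 1 (by omega), pow_one]
  by_cases hcase : ℓ ≤ j
  · rw [if_pos hcase, if_pos hcase]
    have hq := choose_quad (r := r) hcase (by omega)
    calc (r.choose (j - ℓ) : ℚ) * ((j + r).choose r : ℚ)
          + (-1 : ℚ) ^ (ℓ + r + 1) * ((-1 : ℚ) ^ (ℓ + r) * ((ℓ + r).choose j : ℚ)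
            * ((j + r).choose (j - ℓ) : ℚ)
          - (-1 : ℚ) ^ (ℓ + r) * ((ℓ + 2 * r).choose r : ℚ) * ((ℓ + r).choose j : ℚ))
        = (r.choose (j - ℓ) : ℚ) * ((j + r).choose r : ℚ)
          + ((-1 : ℚ) ^ (ℓ + r + 1) * (-1 : ℚ) ^ (ℓ + r)) * (((ℓ + r).choose j : ℚ)
            * ((j + r).choose (j - ℓ) : ℚ) - ((ℓ + 2 * r).choose r : ℚ)
            * ((ℓ + r).choose j : ℚ)) := by ring
      _ = ((ℓ + 2 * r).choose r : ℚ) * ((ℓ + r).choose j : ℚ) := by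
          rw [hs2, hq]; ring
  · rw [if_neg hcase, if_neg hcase]
    calc (0 : ℚ) + (-1 : ℚ) ^ (ℓ + r + 1) * ((0 : ℚ)
          - (-1 : ℚ) ^ (ℓ + r) * ((ℓ + 2 * r).choose r : ℚ) * ((ℓ + r).choose j : ℚ))
        = ((-1 : ℚ) ^ (ℓ + r + 1) * (-1 : ℚ) ^ (ℓ + r)) * (-(((ℓ + 2 * r).choose r : ℚ)
          * ((ℓ + r).choose j : ℚ))) := by ring
      _ = ((ℓ + 2 * r).choose r : ℚ) * ((ℓ + r).choose j : ℚ) := by rw [hs2]; ring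

noncomputable def LHSp (n ℓ r : ℕ) : ℚ[X] :=
  (-1 : ℚ) ^ n • ∑ k ∈ range (n + r),
      (((n + r).choose k : ℚ) * ((ℓ + k + r).choose r : ℚ)) • Polynomial.bernoulli (ℓ + k)
  + (-1 : ℚ) ^ (ℓ + r + 1) • ∑ k ∈ range (ℓ + r),
      (((ℓ + r).choose k : ℚ) * ((n + k + r).choose r : ℚ)) •
        (Polynomial.bernoulli (n + k)).comp (-X)

noncomputable def RHSp (n ℓ r : ℕ) : ℚ[X] :=
  ((-1 : ℚ) ^ n * ((n + ℓ + 2 * r).choose r : ℚ) * ((n + ℓ + r : ℕ) : ℚ)) • X ^ (n + ℓ + r - 1)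

lemma pow_expand (k N : ℕ) (h : k ≤ N) :
    (k : ℚ[X]) * X ^ (k - 1)
      = ∑ i ∈ range N, (if i < k then (k.choose i : ℚ) else 0) • Polynomial.bernoulli i := by
  have hfilter : (range N).filter (fun i => i < k) = range k := by
    ext i
    simp only [Finset.mem_filter, Finset.mem_range]
    omega
  rw [show (∑ i ∈ range N, (if i < k then (k.choose i : ℚ) else 0) • Polynomial.bernoulli i)
      = ∑ i ∈ range N, (if i < k then (k.choose i : ℚ) • Polynomial.bernoulli i else 0) from
    Finset.sum_congr rfl fun i _ => by rw [ite_smul, zero_smul]]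
  rw [← Finset.sum_filter, hfilter]
  cases k with
  | zero => simp
  | succ m =>
      rw [Polynomial.sum_bernoulli m]
      rw [show (((m + 1 : ℕ) : ℚ[X])) = C ((m + 1 : ℕ) : ℚ) from (map_natCast C (m + 1)).symm]
      rw [Nat.add_sub_cancel, C_mul_X_pow_eq_monomial]
      push_cast
      rfl

lemma base (ℓ r : ℕ) (hr : 1 ≤ r) : LHSp 0 ℓ r = RHSp 0 ℓ r := by
  -- Step A : first sum in the Bernoulli basis
  have hA : ∑ k ∈ range (0 + r),
        (((0 + r).choose k : ℚ) * ((ℓ + k + r).choose r : ℚ)) • Polynomial.bernoulli (ℓ + k)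
      = ∑ j ∈ range (ℓ + r),
        (if ℓ ≤ j then ((r.choose (j - ℓ) : ℚ) * ((j + r).choose r : ℚ)) else 0) •
          Polynomial.bernoulli j := by
    have hfilter : (range (ℓ + r)).filter (fun j => ℓ ≤ j) = Ico ℓ (ℓ + r) := by
      ext i
      simp only [Finset.mem_filter, Finset.mem_range, Finset.mem_Ico]
      omega
    rw [show (∑ j ∈ range (ℓ + r),
        (if ℓ ≤ j then ((r.choose (j - ℓ) : ℚ) * ((j + r).choose r : ℚ)) else 0) •
          Polynomial.bernoulli j)
        = ∑ j ∈ range (ℓ + r), (if ℓ ≤ j then ((r.choose (j - ℓ) : ℚ)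
            * ((j + r).choose r : ℚ)) • Polynomial.bernoulli j else 0) from
      Finset.sum_congr rfl fun i _ => by rw [ite_smul, zero_smul]]
    rw [← Finset.sum_filter, hfilter, Finset.sum_Ico_eq_sum_range]
    rw [Nat.add_sub_cancel_left, zero_add]
    refine Finset.sum_congr rfl fun i _ => ?_
    rw [Nat.add_sub_cancel_left]
  -- Step B : second sum in the Bernoulli basis
  have hB : ∑ k ∈ range (ℓ + r),
        (((ℓ + r).choose k : ℚ) * ((0 + k + r).choose r : ℚ)) •
          (Polynomial.bernoulli (0 + k)).comp (-X)
      = ∑ j ∈ range (ℓ + r),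
        (∑ k ∈ range (ℓ + r), (-1 : ℚ) ^ k * ((ℓ + r).choose k : ℚ)
            * ((k + r).choose r : ℚ) * (k.choose j : ℚ)) • Polynomial.bernoulli j := by
    have hterm : ∀ k ∈ range (ℓ + r),
        (((ℓ + r).choose k : ℚ) * ((0 + k + r).choose r : ℚ)) •
            (Polynomial.bernoulli (0 + k)).comp (-X)
        = ((-1 : ℚ) ^ k * (((ℓ + r).choose k : ℚ) * ((k + r).choose r : ℚ))) •
              Polynomial.bernoulli k
          + ∑ i ∈ range (ℓ + r), ((-1 : ℚ) ^ k * (((ℓ + r).choose k : ℚ)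
              * ((k + r).choose r : ℚ)) * (if i < k then (k.choose i : ℚ) else 0)) •
                Polynomial.bernoulli i := by
      intro k hk
      rw [zero_add, reflect k, pow_expand k (ℓ + r) (le_of_lt (Finset.mem_range.mp hk))]
      rw [smul_smul, smul_add, Finset.smul_sum]
      congr 1
      · ring_nf
      · refine Finset.sum_congr rfl fun i _ => ?_
        rw [smul_smul]
        ring_nf
    rw [Finset.sum_congr rfl hterm, Finset.sum_add_distrib, Finset.sum_comm]
    rw [show (∑ j ∈ range (ℓ + r), ∑ k ∈ range (ℓ + r),
        ((-1 : ℚ) ^ k * (((ℓ + r).choose k : ℚ) * ((k + r).choose r : ℚ))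
          * (if j < k then (k.choose j : ℚ) else 0)) • Polynomial.bernoulli j)
        = ∑ j ∈ range (ℓ + r), (∑ k ∈ range (ℓ + r),
          (-1 : ℚ) ^ k * (((ℓ + r).choose k : ℚ) * ((k + r).choose r : ℚ))
            * (if j < k then (k.choose j : ℚ) else 0)) • Polynomial.bernoulli j from
      Finset.sum_congr rfl fun j _ => by rw [Finset.sum_smul]]
    rw [← Finset.sum_add_distrib]
    refine Finset.sum_congr rfl fun j hj => ?_
    rw [← add_smul]
    congr 1
    have hmerge : ∀ k ∈ range (ℓ + r),
        (-1 : ℚ) ^ k * ((ℓ + r).choose k : ℚ) * ((k + r).choose r : ℚ) * (k.choose j : ℚ)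
          - (-1 : ℚ) ^ k * (((ℓ + r).choose k : ℚ) * ((k + r).choose r : ℚ))
            * (if j < k then (k.choose j : ℚ) else 0)
        = if k = j then (-1 : ℚ) ^ j * (((ℓ + r).choose j : ℚ) * ((j + r).choose r : ℚ)) else 0 := by
      intro k hk
      rcases lt_trichotomy k j with hlt | rfl | hgt
      · rw [if_neg (by omega), if_neg (by omega), Nat.choose_eq_zero_of_lt hlt]
        push_cast
        ring
      · rw [if_neg (by omega : ¬ k < k), if_pos rfl, Nat.choose_self]
        push_cast
        ring
      · rw [if_pos hgt, if_neg (by omega : ¬ k = j)]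
        ring
    have hsum := Finset.sum_congr rfl hmerge
    rw [Finset.sum_sub_distrib] at hsum
    rw [Finset.sum_ite_eq' (range (ℓ + r)) j] at hsum
    rw [if_pos hj] at hsum
    linear_combination (-1 : ℚ) * hsum
  -- Step C : right-hand side in the Bernoulli basis
  have hC : RHSp 0 ℓ r = ∑ j ∈ range (ℓ + r),
      (((ℓ + 2 * r).choose r : ℚ) * ((ℓ + r).choose j : ℚ)) • Polynomial.bernoulli j := by
    obtain ⟨m, hm⟩ : ∃ m, ℓ + r = m + 1 := ⟨ℓ + r - 1, by omega⟩
    unfold RHSp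
    simp only [zero_add, pow_zero, one_mul]
    rw [hm, Nat.add_sub_cancel]
    have : (((ℓ + 2 * r).choose r : ℚ) * ((m + 1 : ℕ) : ℚ)) • (X : ℚ[X]) ^ m
        = ((ℓ + 2 * r).choose r : ℚ) • (monomial m ((m : ℚ) + 1)) := by
      rw [← C_mul_X_pow_eq_monomial, smul_eq_C_mul, smul_eq_C_mul, C_mul]
      push_cast
      ring
    rw [this, ← Polynomial.sum_bernoulli m, Finset.smul_sum]
    refine Finset.sum_congr rfl fun j _ => by rw [smul_smul]
  -- assemble
  unfold LHSp
  rw [hA, hB, hC, pow_zero, one_smul, Finset.smul_sum, ← Finset.sum_add_distrib]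
  refine Finset.sum_congr rfl fun j hj => ?_
  rw [smul_smul, ← add_smul]
  congr 1
  exact coeff_identity ℓ r j hr (Finset.mem_range.mp hj)

lemma negX_pow (m : ℕ) : (-X : ℚ[X]) ^ m = ((-1 : ℚ) ^ m) • X ^ m := by
  rw [neg_pow, smul_eq_C_mul, C_pow, C_neg, C_1]

lemma symm_transfer (n ℓ r : ℕ) (hr : 1 ≤ r) (h : LHSp ℓ n r = RHSp ℓ n r) :
    LHSp n ℓ r = RHSp n ℓ r := by
  have H := congrArg (fun p : ℚ[X] => ((-1 : ℚ) ^ (r + 1)) • p.comp (-X)) h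
  simp only [LHSp, RHSp, add_comp, smul_comp, Polynomial.sum_comp, comp_neg_X_comp_neg_X,
    pow_comp, X_comp, negX_pow, smul_add, smul_smul] at H
  rw [show ℓ + n = n + ℓ from add_comm ℓ n] at H
  rw [show (-1 : ℚ) ^ (r + 1) * (-1) ^ ℓ = (-1) ^ (ℓ + r + 1) by
    rw [← pow_add]; exact neg_one_pow_congr _ _ (by omega)] at H
  rw [show (-1 : ℚ) ^ (r + 1) * (-1) ^ (n + r + 1) = (-1) ^ n by
    rw [← pow_add]; exact neg_one_pow_congr _ _ (by omega)] at H
  rw [show (-1 : ℚ) ^ (r + 1) * ((-1) ^ ℓ * ((n + ℓ + 2 * r).choose r : ℚ)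
      * ((n + ℓ + r : ℕ) : ℚ) * (-1) ^ (n + ℓ + r - 1))
      = (-1) ^ n * ((n + ℓ + 2 * r).choose r : ℚ) * ((n + ℓ + r : ℕ) : ℚ) by
    rw [show (-1 : ℚ) ^ (r + 1) * ((-1) ^ ℓ * ((n + ℓ + 2 * r).choose r : ℚ)
        * ((n + ℓ + r : ℕ) : ℚ) * (-1) ^ (n + ℓ + r - 1))
        = ((-1 : ℚ) ^ (r + 1) * (-1) ^ ℓ * (-1) ^ (n + ℓ + r - 1))
          * (((n + ℓ + 2 * r).choose r : ℚ) * ((n + ℓ + r : ℕ) : ℚ)) by ring,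
      ← pow_add, ← pow_add, neg_one_pow_congr (r + 1 + ℓ + (n + ℓ + r - 1)) n (by omega)]
    ring] at H
  unfold LHSp RHSp
  rw [add_comm] at H
  exact H

lemma step_coeff (m r : ℕ) :
    ((m : ℚ) + 1) * ((m + r + 1).choose r : ℚ)
      = ((r : ℚ) + 1) * ((m + r + 1).choose (r + 1) : ℚ) := by
  have h := Nat.choose_succ_right_eq (m + r + 1) r
  have h2 : m + r + 1 - r = m + 1 := by omega
  rw [h2] at h
  have := congrArg (Nat.cast : ℕ → ℚ) h
  push_cast at this
  linarith [this]

lemma deriv_LHSp (n ℓ r : ℕ) :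
    derivative (LHSp (n + 1) (ℓ + 1) r) = (-((r : ℚ) + 1)) • LHSp n ℓ (r + 1) := by
  unfold LHSp
  rw [show n + 1 + r = n + (r + 1) by ring, show ℓ + 1 + r = ℓ + (r + 1) by ring]
  rw [derivative_add, derivative_smul, derivative_smul, derivative_sum, derivative_sum,
    smul_add, smul_smul, smul_smul, Finset.smul_sum, Finset.smul_sum, Finset.smul_sum,
    Finset.smul_sum]
  congr 1
  · refine Finset.sum_congr rfl fun k hk => ?_
    rw [derivative_smul, smul_smul, Polynomial.derivative_bernoulli (ℓ + 1 + k),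
      show ℓ + 1 + k = ℓ + k + 1 by ring, Nat.add_sub_cancel, natCast_mul_eq_smul, smul_smul]
    rw [show ℓ + k + 1 + r = ℓ + k + r + 1 by ring, show ℓ + k + (r + 1) = ℓ + k + r + 1 by ring]
    rw [smul_smul]
    refine congrArg (fun q : ℚ => q • Polynomial.bernoulli (ℓ + k)) ?_
    have hs := step_coeff (ℓ + k) r
    push_cast at hs ⊢
    rw [pow_succ]
    linear_combination (-((-1 : ℚ) ^ n * ((n + (r + 1)).choose k : ℚ))) * hs
  · refine Finset.sum_congr rfl fun k hk => ?_
    rw [derivative_smul, show n + 1 + k = n + k + 1 by ring, deriv_bern_comp_neg (n + k),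
      smul_smul, smul_smul, smul_smul]
    rw [show n + k + 1 + r = n + k + r + 1 by ring, show n + k + (r + 1) = n + k + r + 1 by ring]
    refine congrArg (fun q : ℚ => q • (Polynomial.bernoulli (n + k)).comp (-X)) ?_
    have hs := step_coeff (n + k) r
    push_cast at hs ⊢
    linear_combination (-((-1 : ℚ) ^ (ℓ + (r + 1) + 1) * (((ℓ + (r + 1)).choose k : ℕ) : ℚ))) * hs

lemma deriv_RHSp (n ℓ r : ℕ) :
    derivative (RHSp (n + 1) (ℓ + 1) r) = (-((r : ℚ) + 1)) • RHSp n ℓ (r + 1) := by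
  unfold RHSp
  rw [derivative_smul, show n + 1 + (ℓ + 1) + r - 1 = (n + ℓ + r) + 1 by omega,
    derivative_X_pow, Nat.add_sub_cancel, ← smul_eq_C_mul, smul_smul, smul_smul,
    show n + ℓ + (r + 1) - 1 = n + ℓ + r by omega]
  refine congrArg (fun q : ℚ => q • (X : ℚ[X]) ^ (n + ℓ + r)) ?_
  have h := Nat.choose_succ_right_eq (n + 1 + (ℓ + 1) + 2 * r) r
  have h2 : n + 1 + (ℓ + 1) + 2 * r - r = n + ℓ + r + 2 := by omega
  rw [h2, show n + 1 + (ℓ + 1) + 2 * r = n + ℓ + 2 * (r + 1) by ring] at h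
  have hc := congrArg (Nat.cast : ℕ → ℚ) h
  push_cast at hc
  rw [show n + 1 + (ℓ + 1) + 2 * r = n + ℓ + 2 * (r + 1) by ring]
  push_cast
  rw [pow_succ]
  linear_combination ((-1 : ℚ) ^ n * ((n : ℚ) + ℓ + r + 1)) * hc

lemma I_LHSp (n ℓ r : ℕ) :
    I (LHSp (n + 1) (ℓ + 1) r)
      = (-1 : ℚ) ^ (n + 1) * (((n + 1) + (ℓ + 1) + 2 * r).choose r : ℚ) := by
  unfold LHSp
  rw [map_add, map_smul, map_smul, map_sum, map_sum]
  have h1 : ∀ k ∈ range (n + 1 + r),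
      I ((((n + 1 + r).choose k : ℚ) * ((ℓ + 1 + k + r).choose r : ℚ)) •
        Polynomial.bernoulli (ℓ + 1 + k)) = 0 := by
    intro k hk
    rw [map_smul, I_bernoulli (ℓ + 1 + k) (by omega), smul_zero]
  rw [Finset.sum_congr rfl h1, Finset.sum_const_zero, smul_zero, zero_add]
  have h2 : ∀ k ∈ range (ℓ + 1 + r),
      I ((((ℓ + 1 + r).choose k : ℚ) * ((n + 1 + k + r).choose r : ℚ)) •
        (Polynomial.bernoulli (n + 1 + k)).comp (-X))
      = ((-1 : ℚ) ^ (n + 1) * (-1 : ℚ) ^ k) *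
          ((-1 : ℚ) ^ k * (((ℓ + r + 1).choose k : ℚ) * (((n + r + 1) + k).choose r : ℚ))
            * (-1 : ℚ) ^ k) := by
    intro k hk
    rw [map_smul, I_bern_comp_neg (n + 1 + k), smul_eq_mul,
      show ℓ + 1 + r = ℓ + r + 1 by ring, show n + 1 + k + r = n + r + 1 + k by ring,
      show n + 1 + k = n + 1 + k by rfl]
    rw [neg_one_pow_congr (n + 1 + k) (n + 1 + k + 2 * k) (by omega)]
    rw [show n + 1 + k + 2 * k = (n + 1) + (k + (k + k)) by ring, pow_add, pow_add, pow_add]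
    ring
  rw [Finset.sum_congr rfl h2]
  have hfold : ∑ k ∈ range (ℓ + 1 + r),
      ((-1 : ℚ) ^ (n + 1) * (-1 : ℚ) ^ k) *
        ((-1 : ℚ) ^ k * (((ℓ + r + 1).choose k : ℚ) * (((n + r + 1) + k).choose r : ℚ))
          * (-1 : ℚ) ^ k)
      = (-1 : ℚ) ^ (n + 1) * ∑ k ∈ range (ℓ + r + 1),
          (-1 : ℚ) ^ k * (((ℓ + r + 1).choose k : ℚ)) * ((((n + r + 1) + k).choose r : ℚ)) := by
    rw [Finset.mul_sum, show ℓ + 1 + r = ℓ + r + 1 by ring]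
    refine Finset.sum_congr rfl fun k hk => ?_
    have : (-1 : ℚ) ^ k * (-1 : ℚ) ^ k = 1 := by
      rw [← pow_add, neg_one_pow_congr (k + k) 0 (by omega), pow_zero]
    calc ((-1 : ℚ) ^ (n + 1) * (-1 : ℚ) ^ k) *
        ((-1 : ℚ) ^ k * (((ℓ + r + 1).choose k : ℚ) * (((n + r + 1) + k).choose r : ℚ))
          * (-1 : ℚ) ^ k)
        = ((-1 : ℚ) ^ k * (-1 : ℚ) ^ k) * ((-1 : ℚ) ^ (n + 1) * ((-1 : ℚ) ^ k
            * (((ℓ + r + 1).choose k : ℚ) * (((n + r + 1) + k).choose r : ℚ)))) := by ring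
      _ = (-1 : ℚ) ^ (n + 1) * ((-1 : ℚ) ^ k * (((ℓ + r + 1).choose k : ℚ))
            * ((((n + r + 1) + k).choose r : ℚ))) := by rw [this]; ring
  rw [hfold]
  have hS := S_big (show r < ℓ + r + 1 by omega) (n + r + 1)
  rw [Finset.sum_range_succ, Nat.choose_self] at hS
  have hpartial : ∑ k ∈ range (ℓ + r + 1),
      (-1 : ℚ) ^ k * (((ℓ + r + 1).choose k : ℚ)) * ((((n + r + 1) + k).choose r : ℚ))
      = -((-1 : ℚ) ^ (ℓ + r + 1) * (((n + r + 1 + (ℓ + r + 1)).choose r : ℚ))) := by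
    push_cast at hS
    linarith [hS]
  rw [hpartial, show n + r + 1 + (ℓ + r + 1) = (n + 1) + (ℓ + 1) + 2 * r by ring]
  rw [show ℓ + 1 + r + 1 = ℓ + r + 1 + 1 by ring, pow_succ]
  have hsq : (-1 : ℚ) ^ (ℓ + r + 1) * (-1 : ℚ) ^ (ℓ + r + 1) = 1 := by
    rw [← pow_add, neg_one_pow_congr ((ℓ + r + 1) + (ℓ + r + 1)) 0 (by omega), pow_zero]
  calc (-1 : ℚ) ^ (ℓ + r + 1) * -1 *
      ((-1 : ℚ) ^ (n + 1) * -((-1 : ℚ) ^ (ℓ + r + 1)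
        * (((n + 1 + (ℓ + 1) + 2 * r).choose r : ℚ))))
      = ((-1 : ℚ) ^ (ℓ + r + 1) * (-1 : ℚ) ^ (ℓ + r + 1)) * ((-1 : ℚ) ^ (n + 1)
        * (((n + 1 + (ℓ + 1) + 2 * r).choose r : ℚ))) := by ring
    _ = (-1 : ℚ) ^ (n + 1) * (((n + 1 + (ℓ + 1) + 2 * r).choose r : ℚ)) := by
        rw [hsq]; ring

lemma I_RHSp (n ℓ r : ℕ) :
    I (RHSp (n + 1) (ℓ + 1) r)
      = (-1 : ℚ) ^ (n + 1) * (((n + 1) + (ℓ + 1) + 2 * r).choose r : ℚ) := by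
  unfold RHSp
  rw [map_smul, show n + 1 + (ℓ + 1) + r - 1 = n + ℓ + r + 1 by omega, I_X_pow, smul_eq_mul]
  rw [show ((n + 1 + (ℓ + 1) + r : ℕ) : ℚ) = ((n + ℓ + r + 1 : ℕ) : ℚ) + 1 by push_cast; ring]
  have hne : ((n + ℓ + r + 1 : ℕ) : ℚ) + 1 ≠ 0 := by positivity
  field_simp

lemma key (n : ℕ) : ∀ ℓ r : ℕ, 1 ≤ r → LHSp n ℓ r = RHSp n ℓ r := by
  induction n with
  | zero => intro ℓ r hr; exact base ℓ r hr
  | succ n IHn =>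
      intro ℓ r hr
      cases ℓ with
      | zero => exact symm_transfer (n + 1) 0 r hr (base (n + 1) r hr)
      | succ ℓ =>
          have hD : derivative (LHSp (n + 1) (ℓ + 1) r - RHSp (n + 1) (ℓ + 1) r) = 0 := by
            rw [derivative_sub, deriv_LHSp, deriv_RHSp, IHn ℓ (r + 1) (by omega), sub_self]
          have hCeq := eq_C_of_derivative_eq_zero hD
          have hI : I (LHSp (n + 1) (ℓ + 1) r - RHSp (n + 1) (ℓ + 1) r) = 0 := by
            rw [map_sub, I_LHSp, I_RHSp, sub_self]
          rw [hCeq, I_C] at hI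
          rw [← sub_eq_zero, hCeq, hI, map_zero]

end WSP

/-- For `t ∈ ℂ`, `ℓ, n ∈ ℕ` and `r ≥ 1`:
`(-1)^n ∑_{k=0}^{n+r-1} C(n+r,k) C(ℓ+k+r,r) B_{ℓ+k}(t)
 + (-1)^{ℓ+r+1} ∑_{k=0}^{ℓ+r-1} C(ℓ+r,k) C(n+k+r,r) B_{n+k}(-t)
 = (-1)^n C(n+ℓ+2r,r) (n+ℓ+r) t^{n+ℓ+r-1}`. -/
theorem wu_sun_pan_generalization (t : ℂ) (ℓ n r : ℕ) (hr : 1 ≤ r) :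
    (-1 : ℂ) ^ n *
        ∑ k ∈ Finset.range (n + r),
          ((n + r).choose k : ℂ) * ((ℓ + k + r).choose r : ℂ) * bernPoly (ℓ + k) t +
      (-1 : ℂ) ^ (ℓ + r + 1) *
        ∑ k ∈ Finset.range (ℓ + r),
          ((ℓ + r).choose k : ℂ) * ((n + k + r).choose r : ℂ) * bernPoly (n + k) (-t) =
    (-1 : ℂ) ^ n * ((n + ℓ + 2 * r).choose r : ℂ) * ((n : ℂ) + (ℓ : ℂ) + (r : ℂ)) *
      t ^ (n + ℓ + r - 1) := by
  have hkey := WSP.key n ℓ r hr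
  have H := congrArg (fun p : Polynomial ℚ => Polynomial.aeval t p) hkey
  simp only [WSP.LHSp, WSP.RHSp, map_add, map_smul, map_sum, Polynomial.aeval_comp,
    map_neg, Polynomial.aeval_X, Polynomial.aeval_X_pow, Rat.smul_def, Rat.cast_mul,
    Rat.cast_pow, Rat.cast_neg, Rat.cast_one, Rat.cast_natCast] at H
  simp only [bernPoly]
  push_cast at H ⊢
  convert H using 2 <;> ring
end

section
/- Let α, t ∈ ℂ, let n be a natural number, and let r be an odd natural number. Then Σ_{k=0}^{n+r−1} C(n+r,k) C(n+k+r,r) (α−2t)^{n+r−k} B_{n+k}^{(α)}(t) = −C(2n+2r,r) B_{2n+r}^{(α)}(t). -/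
open scoped BigOperators
open Polynomial Finset

noncomputable section Aux

open PowerSeries

/-- rescaled exponential series `e^{a u}` -/
def Ee (a : ℂ) : PowerSeries ℂ := rescale a (PowerSeries.exp ℂ)

lemma coeff_Ee (a : ℂ) (n : ℕ) : PowerSeries.coeff n (Ee a) = a ^ n * ((n.factorial : ℂ))⁻¹ := by
  rw [Ee, coeff_rescale, coeff_exp]
  congr 1
  rw [one_div, map_inv₀, map_natCast]

lemma Ee_mul_Ee (a b : ℂ) : Ee a * Ee b = Ee (a + b) :=
  PowerSeries.exp_mul_exp_eq_exp_add a b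

lemma Ee_zero : Ee 0 = 1 := by
  rw [Ee, rescale_zero]
  simp

lemma constantCoeff_Ee (a : ℂ) : PowerSeries.constantCoeff (Ee a) = 1 := by
  rw [← coeff_zero_eq_constantCoeff_apply, coeff_Ee]
  simp

lemma derivative_Ee (a : ℂ) : d⁄dX ℂ (Ee a) = PowerSeries.C a * Ee a := by
  ext n
  rw [PowerSeries.coeff_derivative, PowerSeries.coeff_C_mul, coeff_Ee, coeff_Ee,
    Nat.factorial_succ, Nat.cast_mul, mul_inv, Nat.cast_succ]
  have h1 : ((n : ℂ) + 1) ≠ 0 := Nat.cast_add_one_ne_zero n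
  have h2 : ((n.factorial : ℕ) : ℂ) ≠ 0 := Nat.cast_ne_zero.mpr n.factorial_ne_zero
  field_simp
  ring

lemma coeff_pow_eq_zero {A : PowerSeries ℂ} (hA : PowerSeries.constantCoeff A = 0) :
    ∀ {k n : ℕ}, n < k → PowerSeries.coeff n (A ^ k) = 0 := by
  intro k
  induction k with
  | zero => intro n hn; omega
  | succ k ih =>
    intro n hn
    rw [pow_succ, mul_comm, PowerSeries.coeff_mul]
    apply Finset.sum_eq_zero
    rintro ⟨i, j⟩ hij
    rw [Finset.HasAntidiagonal.mem_antidiagonal] at hij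
    rcases Nat.eq_zero_or_pos i with hi | hi
    · subst hi
      simp only at hij
      rw [coeff_zero_eq_constantCoeff_apply] at *
      rw [hA, zero_mul]
    · have : j < k := by omega
      rw [ih this, mul_zero]

/-- ODE-style uniqueness -/
lemma ode_unique {P G₁ G₂ : PowerSeries ℂ}
    (h0 : PowerSeries.constantCoeff G₁ = PowerSeries.constantCoeff G₂)
    (h1 : d⁄dX ℂ G₁ = P * G₁) (h2 : d⁄dX ℂ G₂ = P * G₂) : G₁ = G₂ := by
  ext n
  induction n using Nat.strong_induction_on with
  | _ n ih =>
    match n with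
    | 0 => simpa using h0
    | Nat.succ n =>
      have e1 := congrArg (PowerSeries.coeff n) h1
      have e2 := congrArg (PowerSeries.coeff n) h2
      rw [PowerSeries.coeff_derivative, PowerSeries.coeff_mul] at e1 e2
      have : ∑ p ∈ Finset.HasAntidiagonal.antidiagonal n, PowerSeries.coeff p.1 P * PowerSeries.coeff p.2 G₁ =
          ∑ p ∈ Finset.HasAntidiagonal.antidiagonal n, PowerSeries.coeff p.1 P * PowerSeries.coeff p.2 G₂ := by
        apply Finset.sum_congr rfl
        rintro ⟨i, j⟩ hij
        rw [Finset.HasAntidiagonal.mem_antidiagonal] at hij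
        rw [ih j (by omega)]
      have e3 : PowerSeries.coeff (n + 1) G₁ * ((n : ℂ) + 1) = PowerSeries.coeff (n + 1) G₂ * ((n : ℂ) + 1) := by
        rw [e1, e2, this]
      exact mul_right_cancel₀ (Nat.cast_add_one_ne_zero n) e3

end Aux

noncomputable section Aux2
open PowerSeries

lemma coeff_formalExp_stable {H : PowerSeries ℂ} (hH : PowerSeries.constantCoeff H = 0)
    {m N : ℕ} (h : m < N) :
    PowerSeries.coeff m (formalExp H) = ∑ k ∈ Finset.range N, (k.factorial : ℂ)⁻¹ * PowerSeries.coeff m (H ^ k) := by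
  rw [formalExp, coeff_mk]
  apply Finset.sum_subset (Finset.range_subset_range.mpr h)
  intro k hk hk'
  rw [coeff_pow_eq_zero hH (by simp only [Finset.mem_range] at hk hk' ⊢; omega), mul_zero]

lemma constantCoeff_formalExp (H : PowerSeries ℂ) : PowerSeries.constantCoeff (formalExp H) = 1 := by
  rw [← coeff_zero_eq_constantCoeff_apply, formalExp, coeff_mk]
  simp

lemma constantCoeff_formalLog (F : PowerSeries ℂ) : PowerSeries.constantCoeff (formalLog F) = 0 := by
  rw [← coeff_zero_eq_constantCoeff_apply, formalLog, coeff_mk]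
  simp

lemma coeff_formalLog_stable {F : PowerSeries ℂ} (hF : PowerSeries.constantCoeff F = 1)
    {m N : ℕ} (h : m < N) :
    PowerSeries.coeff m (formalLog F) =
      ∑ k ∈ Finset.range N, (-1 : ℂ) ^ (k + 1) * (k : ℂ)⁻¹ * PowerSeries.coeff m ((F - 1) ^ k) := by
  have hu : PowerSeries.constantCoeff (F - 1) = 0 := by rw [map_sub, hF, map_one, sub_self]
  rw [formalLog, coeff_mk]
  apply Finset.sum_subset (Finset.range_subset_range.mpr h)
  intro k hk hk'
  rw [coeff_pow_eq_zero hu (by simp only [Finset.mem_range] at hk hk' ⊢; omega), mul_zero]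

lemma derivative_formalExp {H : PowerSeries ℂ} (hH : PowerSeries.constantCoeff H = 0) :
    d⁄dX ℂ (formalExp H) = d⁄dX ℂ H * formalExp H := by
  ext n
  rw [PowerSeries.coeff_derivative, coeff_formalExp_stable hH (Nat.lt_succ_self (n+1)),
    PowerSeries.coeff_mul]
  have hR : ∑ p ∈ Finset.HasAntidiagonal.antidiagonal n,
      PowerSeries.coeff p.1 (d⁄dX ℂ H) * PowerSeries.coeff p.2 (formalExp H) =
      ∑ k ∈ Finset.range (n+1), (k.factorial : ℂ)⁻¹ *
        PowerSeries.coeff n (H ^ k * d⁄dX ℂ H) := by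
    have : ∀ p ∈ Finset.HasAntidiagonal.antidiagonal n,
        PowerSeries.coeff p.1 (d⁄dX ℂ H) * PowerSeries.coeff p.2 (formalExp H) =
        ∑ k ∈ Finset.range (n+1), (k.factorial : ℂ)⁻¹ *
          (PowerSeries.coeff p.1 (d⁄dX ℂ H) * PowerSeries.coeff p.2 (H ^ k)) := by
      rintro ⟨i, j⟩ hij
      rw [Finset.HasAntidiagonal.mem_antidiagonal] at hij
      rw [coeff_formalExp_stable hH (show j < n + 1 by omega), Finset.mul_sum]
      apply Finset.sum_congr rfl
      intro k _
      ring
    rw [Finset.sum_congr rfl this, Finset.sum_comm]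
    apply Finset.sum_congr rfl
    intro k _
    rw [mul_comm (H ^ k), PowerSeries.coeff_mul, Finset.mul_sum]
  rw [hR, Finset.sum_mul, Finset.sum_range_succ' _ (n+1)]
  simp only [pow_zero, Nat.factorial_zero, Nat.cast_one, inv_one, one_mul]
  rw [PowerSeries.coeff_one, if_neg (Nat.succ_ne_zero n), zero_mul, add_zero]
  apply Finset.sum_congr rfl
  intro j _
  have key := congrArg (PowerSeries.coeff n) (Derivation.leibniz_pow (d⁄dX ℂ) (a := H) (j+1))
  rw [PowerSeries.coeff_derivative, Nat.add_sub_cancel, map_nsmul, nsmul_eq_mul,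
    smul_eq_mul] at key
  have hfac : (((j+1).factorial : ℕ) : ℂ)⁻¹ * (((j+1 : ℕ)) : ℂ) = ((j.factorial : ℕ) : ℂ)⁻¹ := by
    rw [Nat.factorial_succ, Nat.cast_mul, mul_inv]
    have h1 : ((j : ℂ) + 1) ≠ 0 := Nat.cast_add_one_ne_zero j
    have h2 : ((j.factorial : ℕ) : ℂ) ≠ 0 := Nat.cast_ne_zero.mpr j.factorial_ne_zero
    push_cast
    rw [mul_comm, ← mul_assoc, mul_inv_cancel₀ h1, one_mul]
  calc (((j+1).factorial : ℕ) : ℂ)⁻¹ * PowerSeries.coeff (n+1) (H ^ (j+1)) * ((n : ℂ) + 1)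
      = (((j+1).factorial : ℕ) : ℂ)⁻¹ * (PowerSeries.coeff (n+1) (H ^ (j+1)) * ((n : ℂ)+1)) := by ring
    _ = (((j+1).factorial : ℕ) : ℂ)⁻¹ * ((((j+1 : ℕ)) : ℂ) * PowerSeries.coeff n (H ^ j * d⁄dX ℂ H)) := by
          rw [key]
    _ = ((j.factorial : ℕ) : ℂ)⁻¹ * PowerSeries.coeff n (H ^ j * d⁄dX ℂ H) := by
          rw [← mul_assoc, hfac]

end Aux2
noncomputable section Aux4
open PowerSeries

lemma rescale_formalLog (a : ℂ) (F : PowerSeries ℂ) :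
    rescale a (formalLog F) = formalLog (rescale a F) := by
  ext n
  rw [coeff_rescale, formalLog, formalLog, coeff_mk, coeff_mk, Finset.mul_sum]
  apply Finset.sum_congr rfl
  intro k _
  have : (rescale a F - 1) ^ k = rescale a ((F - 1) ^ k) := by
    rw [map_pow, map_sub, map_one]
  rw [this, coeff_rescale]
  ring

lemma rescale_formalExp (a : ℂ) (H : PowerSeries ℂ) :
    rescale a (formalExp H) = formalExp (rescale a H) := by
  ext n
  rw [coeff_rescale, formalExp, formalExp, coeff_mk, coeff_mk, Finset.mul_sum]
  apply Finset.sum_congr rfl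
  intro k _
  rw [← map_pow, coeff_rescale]
  ring

lemma rescale_smul (a c : ℂ) (H : PowerSeries ℂ) :
    rescale a (c • H) = c • rescale a H := by
  ext n
  rw [coeff_rescale, map_smul, map_smul, coeff_rescale, smul_eq_mul, smul_eq_mul]
  ring

lemma constantCoeff_expSub1DivT : PowerSeries.constantCoeff expSub1DivT = 1 := by
  rw [← coeff_zero_eq_constantCoeff_apply, expSub1DivT, coeff_mk]
  simp

lemma bernoulliBase_mul : bernoulliBase * expSub1DivT = 1 := by
  rw [bernoulliBase]
  exact PowerSeries.inv_mul_cancel _ (by rw [constantCoeff_expSub1DivT]; exact one_ne_zero)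

lemma constantCoeff_bernoulliBase : PowerSeries.constantCoeff bernoulliBase = 1 := by
  have := congrArg (PowerSeries.constantCoeff) bernoulliBase_mul
  rw [map_mul, map_one, constantCoeff_expSub1DivT, mul_one] at this
  exact this

lemma alt_sum_choose (n : ℕ) :
    ∑ k ∈ Finset.range (n + 1), (-1 : ℂ) ^ k * ((n + 1).choose k : ℂ) = (-1 : ℂ) ^ n := by
  have hZ := Int.alternating_sum_range_choose (n := n + 1)
  rw [if_neg (Nat.succ_ne_zero n)] at hZ
  have hC : ∑ k ∈ Finset.range (n + 2), (-1 : ℂ) ^ k * ((n + 1).choose k : ℂ) = 0 := by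
    have := congrArg (fun z : ℤ => (z : ℂ)) hZ
    push_cast at this
    simpa using this
  rw [Finset.sum_range_succ, Nat.choose_self, Nat.cast_one, mul_one] at hC
  rw [eq_neg_of_add_eq_zero_left hC, pow_succ]
  ring

lemma rescale_neg_one_expSub1DivT :
    rescale (-1 : ℂ) expSub1DivT = Ee (-1) * expSub1DivT := by
  ext n
  rw [coeff_rescale, PowerSeries.coeff_mul, Finset.Nat.sum_antidiagonal_eq_sum_range_succ_mk,
    expSub1DivT, coeff_mk]
  have hterm : ∀ k ∈ Finset.range (n + 1),
      PowerSeries.coeff k (Ee (-1)) * PowerSeries.coeff (n - k) (PowerSeries.mk fun m => (((m + 1).factorial : ℕ) : ℂ)⁻¹)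
      = (-1 : ℂ) ^ k * ((n + 1).choose k : ℂ) * (((n + 1).factorial : ℕ) : ℂ)⁻¹ := by
    intro k hk
    rw [Finset.mem_range] at hk
    rw [coeff_Ee, coeff_mk]
    have hkn : k ≤ n := by omega
    have hnat : (n + 1).choose k * (k.factorial * (n - k + 1).factorial) = (n + 1).factorial := by
      have h := Nat.choose_mul_factorial_mul_factorial (show k ≤ n + 1 by omega)
      have : n + 1 - k = n - k + 1 := by omega
      rw [this] at h
      rw [← h]
      ring
    have hC : ((n + 1).choose k : ℂ) * ((k.factorial : ℂ) * ((n - k + 1).factorial : ℂ))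
        = ((n + 1).factorial : ℂ) := by exact_mod_cast congrArg (fun m : ℕ => (m : ℂ)) hnat
    have h1 : ((k.factorial : ℕ) : ℂ) ≠ 0 := Nat.cast_ne_zero.mpr k.factorial_ne_zero
    have h2 : (((n - k + 1).factorial : ℕ) : ℂ) ≠ 0 := Nat.cast_ne_zero.mpr (n - k + 1).factorial_ne_zero
    have h3 : (((n + 1).factorial : ℕ) : ℂ) ≠ 0 := Nat.cast_ne_zero.mpr (n + 1).factorial_ne_zero
    field_simp
    linear_combination -hC
  rw [Finset.sum_congr rfl hterm, ← Finset.sum_mul, alt_sum_choose]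

end Aux4
noncomputable section Aux3
open PowerSeries

lemma mul_derivative_formalLog {F : PowerSeries ℂ} (hF : PowerSeries.constantCoeff F = 1) :
    F * d⁄dX ℂ (formalLog F) = d⁄dX ℂ F := by
  have hu : PowerSeries.constantCoeff (F - 1) = 0 := by rw [map_sub, hF, map_one, sub_self]
  have hnu : PowerSeries.constantCoeff (-(F - 1)) = 0 := by rw [map_neg, hu, neg_zero]
  have hDu : d⁄dX ℂ (F - 1) = d⁄dX ℂ F := by
    rw [map_sub, Derivation.map_one_eq_zero, sub_zero]
  ext n
  set S : PowerSeries ℂ :=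
    ∑ k ∈ Finset.range (n + 2), ((-1 : ℂ) ^ (k + 1) * (k : ℂ)⁻¹) • (F - 1) ^ k with hS
  have step1 : PowerSeries.coeff n (F * d⁄dX ℂ (formalLog F)) = PowerSeries.coeff n (F * d⁄dX ℂ S) := by
    rw [PowerSeries.coeff_mul, PowerSeries.coeff_mul]
    apply Finset.sum_congr rfl
    rintro ⟨i, j⟩ hij
    rw [Finset.HasAntidiagonal.mem_antidiagonal] at hij
    have hcoe : PowerSeries.coeff (j + 1) (formalLog F) = PowerSeries.coeff (j + 1) S := by
      rw [coeff_formalLog_stable hF (show j + 1 < n + 2 by omega), hS, map_sum]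
      apply Finset.sum_congr rfl
      intro k _
      rw [map_smul, smul_eq_mul]
    rw [PowerSeries.coeff_derivative, PowerSeries.coeff_derivative, hcoe]
  have hDS : d⁄dX ℂ S = (∑ j ∈ Finset.range (n + 1), (-(F - 1)) ^ j) * d⁄dX ℂ F := by
    rw [hS, map_sum, Finset.sum_range_succ']
    simp only [pow_zero]
    rw [Derivation.map_smul, Derivation.map_one_eq_zero, smul_zero, add_zero, Finset.sum_mul]
    apply Finset.sum_congr rfl
    intro j _
    rw [Derivation.map_smul, Derivation.leibniz_pow, Nat.add_sub_cancel,
      ← Nat.cast_smul_eq_nsmul ℂ, smul_smul]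
    have h1 : ((j + 1 : ℕ) : ℂ) ≠ 0 := Nat.cast_ne_zero.mpr (Nat.succ_ne_zero j)
    have hsc : (-1 : ℂ) ^ (j + 1 + 1) * ((j + 1 : ℕ) : ℂ)⁻¹ * ((j + 1 : ℕ) : ℂ)
        = (-1 : ℂ) ^ j := by
      rw [mul_assoc, inv_mul_cancel₀ h1, mul_one, pow_succ, pow_succ]
      ring
    rw [hsc, hDu, smul_eq_mul, PowerSeries.smul_eq_C_mul, map_pow, map_neg,
      map_one, neg_eq_neg_one_mul ((F - 1) : PowerSeries ℂ), mul_pow, mul_assoc]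
  have hgeom : F * (∑ j ∈ Finset.range (n + 1), (-(F - 1)) ^ j)
      = 1 - (-(F - 1)) ^ (n + 1) := by
    have h := geom_sum_mul (-(F - 1) : PowerSeries ℂ) (n + 1)
    have h2 : (-(F - 1) : PowerSeries ℂ) - 1 = -F := by ring
    rw [h2] at h
    linear_combination -h
  have step2 : PowerSeries.coeff n (F * d⁄dX ℂ S) = PowerSeries.coeff n (d⁄dX ℂ F) := by
    rw [hDS, ← mul_assoc, hgeom, sub_mul, one_mul, map_sub]
    have hz : PowerSeries.coeff n ((-(F - 1)) ^ (n + 1) * d⁄dX ℂ F) = 0 := by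
      rw [PowerSeries.coeff_mul]
      apply Finset.sum_eq_zero
      rintro ⟨i, j⟩ hij
      rw [Finset.HasAntidiagonal.mem_antidiagonal] at hij
      rw [coeff_pow_eq_zero hnu (show i < n + 1 by omega), zero_mul]
    rw [hz, sub_zero]
  rw [step1, step2]

end Aux3
noncomputable section Aux5
open PowerSeries

lemma rescale_neg_one_bernoulliBase :
    rescale (-1 : ℂ) bernoulliBase = Ee 1 * bernoulliBase := by
  have h := congrArg (rescale (-1 : ℂ)) bernoulliBase_mul
  rw [map_mul, map_one, rescale_neg_one_expSub1DivT] at h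
  have key : (Ee (-1) * expSub1DivT) * (Ee 1 * bernoulliBase) = 1 := by
    calc (Ee (-1) * expSub1DivT) * (Ee 1 * bernoulliBase)
        = (Ee (-1) * Ee 1) * (bernoulliBase * expSub1DivT) := by ring
      _ = 1 := by
          rw [Ee_mul_Ee, bernoulliBase_mul, mul_one]
          norm_num [Ee_zero]
  calc rescale (-1 : ℂ) bernoulliBase
      = rescale (-1 : ℂ) bernoulliBase * ((Ee (-1) * expSub1DivT) * (Ee 1 * bernoulliBase)) := by
        rw [key, mul_one]
    _ = (rescale (-1 : ℂ) bernoulliBase * (Ee (-1) * expSub1DivT)) * (Ee 1 * bernoulliBase) := by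
        ring
    _ = Ee 1 * bernoulliBase := by rw [h, one_mul]

lemma formalLog_Ee_one_mul :
    formalLog (Ee 1 * bernoulliBase) = PowerSeries.X + formalLog bernoulliBase := by
  set G : PowerSeries ℂ := Ee 1 * bernoulliBase with hG_def
  have hG : PowerSeries.constantCoeff G = 1 := by
    rw [hG_def, map_mul, constantCoeff_Ee, constantCoeff_bernoulliBase, mul_one]
  have hGne : G ≠ 0 := by
    intro h
    rw [h, map_zero] at hG
    exact zero_ne_one hG
  have h1 : G * d⁄dX ℂ (formalLog G) = d⁄dX ℂ G := mul_derivative_formalLog hG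
  have h2 : G * (1 + d⁄dX ℂ (formalLog bernoulliBase)) = d⁄dX ℂ G := by
    have hB' : bernoulliBase * d⁄dX ℂ (formalLog bernoulliBase) = d⁄dX ℂ bernoulliBase :=
      mul_derivative_formalLog constantCoeff_bernoulliBase
    rw [hG_def, Derivation.leibniz, smul_eq_mul, smul_eq_mul, derivative_Ee, map_one, one_mul]
    rw [mul_add, mul_one, mul_assoc, hB']
    ring
  have hcancel : d⁄dX ℂ (formalLog G) = 1 + d⁄dX ℂ (formalLog bernoulliBase) :=
    mul_left_cancel₀ hGne (h1.trans h2.symm)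
  apply PowerSeries.derivative.ext
  · rw [hcancel, map_add, PowerSeries.derivative_X]
  · rw [constantCoeff_formalLog, map_add, constantCoeff_formalLog,
      PowerSeries.constantCoeff_X, add_zero]

lemma formalExp_smul_X_add {H : PowerSeries ℂ} (a : ℂ) (hH : PowerSeries.constantCoeff H = 0) :
    formalExp (a • PowerSeries.X + H) = Ee a * formalExp H := by
  have hH' : PowerSeries.constantCoeff (a • PowerSeries.X + H) = 0 := by
    rw [map_add, PowerSeries.smul_eq_C_mul, map_mul, PowerSeries.constantCoeff_X, hH, mul_zero, add_zero]
  apply ode_unique (P := PowerSeries.C a + d⁄dX ℂ H)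
  · rw [constantCoeff_formalExp, map_mul, constantCoeff_Ee, constantCoeff_formalExp, mul_one]
  · rw [derivative_formalExp hH', map_add, Derivation.map_smul, PowerSeries.derivative_X,
      PowerSeries.smul_eq_C_mul, mul_one]
  · rw [Derivation.leibniz, smul_eq_mul, smul_eq_mul, derivative_Ee,
      derivative_formalExp hH]
    ring

lemma constantCoeff_smul_formalLog (α : ℂ) (F : PowerSeries ℂ) :
    PowerSeries.constantCoeff (α • formalLog F) = 0 := by
  rw [PowerSeries.smul_eq_C_mul, map_mul, constantCoeff_formalLog, mul_zero]

lemma rescale_neg_one_bernoulliBasePow (α : ℂ) :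
    rescale (-1 : ℂ) (bernoulliBasePow α) = Ee α * bernoulliBasePow α := by
  rw [bernoulliBasePow, rescale_formalExp, rescale_smul, rescale_formalLog,
    rescale_neg_one_bernoulliBase, formalLog_Ee_one_mul, smul_add]
  exact formalExp_smul_X_add α (constantCoeff_smul_formalLog α bernoulliBase)

end Aux5
noncomputable section Aux6
open PowerSeries

lemma eval_genBernoulliPoly (α t : ℂ) (j : ℕ) :
    (genBernoulliPoly α j).eval t
      = (j.factorial : ℂ) * PowerSeries.coeff j (bernoulliBasePow α * Ee t) := by
  rw [genBernoulliPoly, Polynomial.eval_finset_sum, PowerSeries.coeff_mul,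
    Finset.Nat.sum_antidiagonal_eq_sum_range_succ_mk, Finset.mul_sum]
  apply Finset.sum_congr rfl
  intro k hk
  rw [Finset.mem_range] at hk
  rw [Polynomial.eval_mul, Polynomial.eval_C, Polynomial.eval_pow, Polynomial.eval_X,
    genBernoulliNumber, coeff_Ee]
  have hkj : k ≤ j := by omega
  have hnat : j.choose k * (k.factorial * (j - k).factorial) = j.factorial := by
    have h := Nat.choose_mul_factorial_mul_factorial hkj
    rw [← h]; ring
  have hC : (j.choose k : ℂ) * ((k.factorial : ℂ) * ((j - k).factorial : ℂ))
      = (j.factorial : ℂ) := by exact_mod_cast congrArg (fun m : ℕ => (m : ℂ)) hnat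
  have h2 : (((j - k).factorial : ℕ) : ℂ) ≠ 0 := Nat.cast_ne_zero.mpr (j - k).factorial_ne_zero
  field_simp
  linear_combination (t ^ (j - k) * PowerSeries.coeff k (bernoulliBasePow α)) * hC

lemma rescale_neg_one_Ee (a : ℂ) : rescale (-1 : ℂ) (Ee a) = Ee (-a) := by
  rw [Ee, Ee, rescale_rescale]
  norm_num

lemma reflect_F (α t : ℂ) :
    rescale (-1 : ℂ) (bernoulliBasePow α * Ee t)
      = Ee (α - 2 * t) * (bernoulliBasePow α * Ee t) := by
  rw [map_mul, rescale_neg_one_bernoulliBasePow, rescale_neg_one_Ee]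
  calc Ee α * bernoulliBasePow α * Ee (-t)
      = Ee α * Ee (-t) * bernoulliBasePow α := by ring
    _ = Ee (α + -t) * bernoulliBasePow α := by rw [Ee_mul_Ee]
    _ = Ee ((α - 2 * t) + t) * bernoulliBasePow α := by
        have : α + -t = (α - 2 * t) + t := by ring
        rw [this]
    _ = Ee (α - 2 * t) * Ee t * bernoulliBasePow α := by rw [Ee_mul_Ee]
    _ = Ee (α - 2 * t) * (bernoulliBasePow α * Ee t) := by ring

lemma coeff_even_K (α t : ℂ) {r : ℕ} (hr : Odd r) (j : ℕ) :
    PowerSeries.coeff (2 * j)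
      (Ee ((α - 2 * t) / 2) * (PowerSeries.X ^ r * (bernoulliBasePow α * Ee t))) = 0 := by
  set c : ℂ := α - 2 * t with hc
  set F : PowerSeries ℂ := bernoulliBasePow α * Ee t with hF
  set K : PowerSeries ℂ := Ee (c / 2) * (PowerSeries.X ^ r * F) with hK
  have hXr : rescale (-1 : ℂ) (PowerSeries.X ^ r) = -(PowerSeries.X ^ r) := by
    rw [map_pow, PowerSeries.rescale_neg_one_X, Odd.neg_pow hr]
  have hKodd : rescale (-1 : ℂ) K = -K := by
    rw [hK, map_mul, map_mul, rescale_neg_one_Ee, hXr, reflect_F, ← hc, ← hF]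
    calc Ee (-(c / 2)) * (-(PowerSeries.X ^ r) * (Ee c * F))
        = -(Ee (-(c / 2)) * Ee c * (PowerSeries.X ^ r * F)) := by ring
      _ = -(Ee (-(c / 2) + c) * (PowerSeries.X ^ r * F)) := by rw [Ee_mul_Ee]
      _ = -(Ee (c / 2) * (PowerSeries.X ^ r * F)) := by
          have : -(c / 2) + c = c / 2 := by ring
          rw [this]
  have h := congrArg (PowerSeries.coeff (2 * j)) hKodd
  rw [coeff_rescale, map_neg] at h
  have h1 : (-1 : ℂ) ^ (2 * j) = 1 := by
    rw [pow_mul]; norm_num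
  rw [h1, one_mul] at h
  linear_combination h / 2

end Aux6
noncomputable section Aux7
open Polynomial

lemma choose_alt_sum_zero {m b : ℕ} (hb : Odd b) :
    ∑ k ∈ Finset.range (m + 1),
      (m.choose k : ℂ) * (-1 : ℂ) ^ k * 2 ^ (m - k) * ((m + k).choose b : ℂ) = 0 := by
  have hbase : ((1 : ℂ[X]) - X ^ 2) ^ m
      = ∑ k ∈ Finset.range (m + 1),
          Polynomial.C ((m.choose k : ℂ) * (-1 : ℂ) ^ k * 2 ^ (m - k)) * (1 + X) ^ (m + k) := by
    have h1 : ((1 : ℂ[X]) - X) ^ m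
        = ∑ k ∈ Finset.range (m + 1),
            (-(1 + X)) ^ k * 2 ^ (m - k) * (m.choose k : ℂ[X]) := by
      have h := add_pow (-(1 + X) : ℂ[X]) 2 m
      have h2 : (-(1 + X) : ℂ[X]) + 2 = 1 - X := by ring
      rw [h2] at h
      exact h
    calc ((1 : ℂ[X]) - X ^ 2) ^ m = ((1 - X) * (1 + X)) ^ m := by ring
      _ = ((1 : ℂ[X]) - X) ^ m * (1 + X) ^ m := by rw [mul_pow]
      _ = (∑ k ∈ Finset.range (m + 1),
            (-(1 + X)) ^ k * 2 ^ (m - k) * (m.choose k : ℂ[X])) * (1 + X) ^ m := by rw [h1]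
      _ = _ := by
          rw [Finset.sum_mul]
          apply Finset.sum_congr rfl
          intro k _
          simp only [map_mul, map_pow, map_neg, map_one, map_natCast, map_ofNat]
          rw [neg_pow, pow_add]
          ring
  have hcoeff := congrArg (fun p : ℂ[X] => p.coeff b) hbase
  have hL : (((1 : ℂ[X]) - X ^ 2) ^ m).coeff b = 0 := by
    have h3 : ((1 : ℂ[X]) - X ^ 2) ^ m
        = ∑ k ∈ Finset.range (m + 1),
            Polynomial.C ((-1 : ℂ) ^ k * (m.choose k : ℂ)) * X ^ (2 * k) := by
      have h := add_pow (-X ^ 2 : ℂ[X]) 1 m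
      have h2 : (-X ^ 2 : ℂ[X]) + 1 = 1 - X ^ 2 := by ring
      rw [h2] at h
      rw [h]
      apply Finset.sum_congr rfl
      intro k _
      simp only [map_mul, map_pow, map_neg, map_one, map_natCast]
      rw [neg_pow, one_pow, pow_mul]
      ring
    rw [h3, Polynomial.finset_sum_coeff]
    apply Finset.sum_eq_zero
    intro k _
    rw [Polynomial.coeff_C_mul, Polynomial.coeff_X_pow, if_neg, mul_zero]
    rintro rfl
    exact (Nat.not_odd_iff_even.mpr ⟨k, by ring⟩) hb
  rw [hL, Polynomial.finset_sum_coeff] at hcoeff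
  have hfin : ∑ k ∈ Finset.range (m + 1),
      (m.choose k : ℂ) * (-1 : ℂ) ^ k * 2 ^ (m - k) * ((m + k).choose b : ℂ)
      = ∑ k ∈ Finset.range (m + 1),
        (Polynomial.C ((m.choose k : ℂ) * (-1 : ℂ) ^ k * 2 ^ (m - k)) * (1 + X) ^ (m + k)).coeff b := by
    apply Finset.sum_congr rfl
    intro k _
    rw [Polynomial.coeff_C_mul, Polynomial.coeff_one_add_X_pow]
  rw [hfin, ← hcoeff]

end Aux7
noncomputable section Aux8
open PowerSeries

lemma scalar_term (c : ℂ) (m k b : ℕ) (hk : k ≤ m) :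
    (m.choose k : ℂ) * c ^ (m - k) * ((m + k).choose b : ℂ) * (-(c / 2)) ^ (m + k - b)
    = ((m.choose k : ℂ) * (-1 : ℂ) ^ k * 2 ^ (m - k) * ((m + k).choose b : ℂ))
      * ((-1 : ℂ) ^ (m + b) * ((2 : ℂ)⁻¹) ^ (2 * m - b) * c ^ (2 * m - b)) := by
  rcases le_or_gt b (m + k) with hble | hbgt
  · have h2m : 2 * m - b = (m - k) + (m + k - b) := by omega
    have hpar : (-1 : ℂ) ^ k * (-1 : ℂ) ^ (m + b) = (-1 : ℂ) ^ (m + k - b) := by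
      rw [← pow_add]
      have e : k + (m + b) = (m + k - b) + 2 * b := by omega
      rw [e, pow_add, pow_mul]
      norm_num
    rw [h2m, pow_add, pow_add,
      show -(c / 2) = (-1 : ℂ) * (c * 2⁻¹) by ring, mul_pow, mul_pow, ← hpar]
    have hcancel : (2 : ℂ) ^ (m - k) * ((2 : ℂ)⁻¹) ^ (m - k) = 1 := by
      rw [← mul_pow]; norm_num
    linear_combination (-((m.choose k : ℂ) * c ^ (m - k) * c ^ (m + k - b) *
      ((m + k).choose b : ℂ) * (-1 : ℂ) ^ m * (-1 : ℂ) ^ k * (-1 : ℂ) ^ b *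
      ((2 : ℂ)⁻¹) ^ (m + k - b))) * hcancel
  · rw [Nat.choose_eq_zero_of_lt hbgt, Nat.cast_zero]
    ring

lemma inner_sum_vanish (c : ℂ) (m b : ℕ) (hb : Odd b) (z : ℂ) :
    ∑ k ∈ Finset.range (m + 1),
      (m.choose k : ℂ) * c ^ (m - k) * ((m + k).choose b : ℂ) * (-(c / 2)) ^ (m + k - b) * z
      = 0 := by
  have hterm : ∀ k ∈ Finset.range (m + 1),
      (m.choose k : ℂ) * c ^ (m - k) * ((m + k).choose b : ℂ) * (-(c / 2)) ^ (m + k - b) * z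
      = ((m.choose k : ℂ) * (-1 : ℂ) ^ k * 2 ^ (m - k) * ((m + k).choose b : ℂ))
        * (((-1 : ℂ) ^ (m + b) * ((2 : ℂ)⁻¹) ^ (2 * m - b) * c ^ (2 * m - b)) * z) := by
    intro k hk
    rw [Finset.mem_range] at hk
    rw [← mul_assoc, scalar_term c m k b (by omega)]
  rw [Finset.sum_congr rfl hterm, ← Finset.sum_mul, choose_alt_sum_zero hb, zero_mul]

lemma full_sum_zero (α t : ℂ) (n r : ℕ) (hr : Odd r) :
    ∑ k ∈ Finset.range (n + r + 1),
      ((n + r).choose k : ℂ) * ((n + k + r).choose r : ℂ) * (α - 2 * t) ^ (n + r - k) *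
        (genBernoulliPoly α (n + k)).eval t = 0 := by
  set m : ℕ := n + r with hm
  set c : ℂ := α - 2 * t with hc
  set F : PowerSeries ℂ := bernoulliBasePow α * Ee t with hF
  set G : PowerSeries ℂ := PowerSeries.X ^ r * F with hG
  set K : PowerSeries ℂ := Ee (c / 2) * G with hK
  have hKeven : ∀ b : ℕ, Even b → PowerSeries.coeff b K = 0 := by
    intro b hb
    obtain ⟨j, hj⟩ := hb
    have hb2 : b = 2 * j := by omega
    rw [hK, hG, hF, hc, hb2]
    exact coeff_even_K α t hr j
  have hGK : G = Ee (-(c / 2)) * K := by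
    rw [hK, ← mul_assoc, Ee_mul_Ee, show -(c / 2) + c / 2 = (0 : ℂ) by ring, Ee_zero, one_mul]
  -- expansion of i! * PowerSeries.coeff i G in terms of coefficients of K
  have hg : ∀ i : ℕ, ((i.factorial : ℂ)) * PowerSeries.coeff i G
      = ∑ b ∈ Finset.range (i + 1),
          (i.choose b : ℂ) * (-(c / 2)) ^ (i - b) * ((b.factorial : ℂ) * PowerSeries.coeff b K) := by
    intro i
    have h1 : PowerSeries.coeff i G = ∑ b ∈ Finset.range (i + 1),
        PowerSeries.coeff b K * ((-(c / 2)) ^ (i - b) * (((i - b).factorial : ℂ))⁻¹) := by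
      rw [hGK, mul_comm, PowerSeries.coeff_mul,
        Finset.Nat.sum_antidiagonal_eq_sum_range_succ_mk]
      apply Finset.sum_congr rfl
      intro b _
      rw [coeff_Ee]
    rw [h1, Finset.mul_sum]
    apply Finset.sum_congr rfl
    intro b hb
    rw [Finset.mem_range] at hb
    have hbi : b ≤ i := by omega
    have hnat : i.choose b * (b.factorial * (i - b).factorial) = i.factorial := by
      have h := Nat.choose_mul_factorial_mul_factorial hbi
      rw [← h]; ring
    have hC : (i.choose b : ℂ) * ((b.factorial : ℂ) * ((i - b).factorial : ℂ))
        = (i.factorial : ℂ) := by exact_mod_cast congrArg (fun x : ℕ => (x : ℂ)) hnat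
    have h2 : (((i - b).factorial : ℕ) : ℂ) ≠ 0 := Nat.cast_ne_zero.mpr (i - b).factorial_ne_zero
    have hinv : ((i - b).factorial : ℂ) * (((i - b).factorial : ℂ))⁻¹ = 1 := mul_inv_cancel₀ h2
    rw [← hC]
    linear_combination ((i.choose b : ℂ) * PowerSeries.coeff b K * (-(c / 2)) ^ (i - b) *
      (b.factorial : ℂ)) * hinv
  -- Step A : rewrite each summand
  have hA : ∀ k ∈ Finset.range (m + 1),
      ((m).choose k : ℂ) * ((n + k + r).choose r : ℂ) * c ^ (m - k) *
        (genBernoulliPoly α (n + k)).eval t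
      = ((r.factorial : ℂ))⁻¹ *
          ((m.choose k : ℂ) * c ^ (m - k) * (((m + k).factorial : ℂ) * PowerSeries.coeff (m + k) G)) := by
    intro k _
    rw [eval_genBernoulliPoly, ← hF]
    have hcoeffG : PowerSeries.coeff (m + k) G = PowerSeries.coeff (n + k) F := by
      rw [hG]
      have e : m + k = (n + k) + r := by omega
      rw [e, PowerSeries.coeff_X_pow_mul]
    rw [hcoeffG]
    have hnat : (n + k + r).choose r * (r.factorial * (n + k).factorial)
        = (m + k).factorial := by
      have h := Nat.choose_mul_factorial_mul_factorial (show r ≤ n + k + r by omega)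
      have e2 : n + k + r - r = n + k := by omega
      rw [e2] at h
      have e3 : m + k = n + k + r := by omega
      rw [e3, ← h]; ring
    have hC : ((n + k + r).choose r : ℂ) * ((r.factorial : ℂ) * ((n + k).factorial : ℂ))
        = ((m + k).factorial : ℂ) := by exact_mod_cast congrArg (fun x : ℕ => (x : ℂ)) hnat
    have hrne : ((r.factorial : ℕ) : ℂ) ≠ 0 := Nat.cast_ne_zero.mpr r.factorial_ne_zero
    have hinv : ((r.factorial : ℂ)) * ((r.factorial : ℂ))⁻¹ = 1 := mul_inv_cancel₀ hrne
    rw [← hC]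
    linear_combination (-((m.choose k : ℂ) * ((n + k + r).choose r : ℂ) * c ^ (m - k) *
      ((n + k).factorial : ℂ) * PowerSeries.coeff (n + k) F)) * hinv
  rw [Finset.sum_congr rfl hA, ← Finset.mul_sum]
  -- suffices the inner sum vanishes
  have hS : ∑ k ∈ Finset.range (m + 1),
      (m.choose k : ℂ) * c ^ (m - k) * (((m + k).factorial : ℂ) * PowerSeries.coeff (m + k) G) = 0 := by
    have hstep : ∀ k ∈ Finset.range (m + 1),
        (m.choose k : ℂ) * c ^ (m - k) * (((m + k).factorial : ℂ) * PowerSeries.coeff (m + k) G)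
        = ∑ b ∈ Finset.range (2 * m + 1),
            (m.choose k : ℂ) * c ^ (m - k) * ((m + k).choose b : ℂ) *
              (-(c / 2)) ^ (m + k - b) * ((b.factorial : ℂ) * PowerSeries.coeff b K) := by
      intro k hk
      rw [Finset.mem_range] at hk
      rw [hg (m + k), Finset.mul_sum]
      have hsub : ∀ b ∈ Finset.range (m + k + 1),
          (m.choose k : ℂ) * c ^ (m - k) *
            (((m + k).choose b : ℂ) * (-(c / 2)) ^ (m + k - b) *
              ((b.factorial : ℂ) * PowerSeries.coeff b K))
          = (m.choose k : ℂ) * c ^ (m - k) * ((m + k).choose b : ℂ) *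
              (-(c / 2)) ^ (m + k - b) * ((b.factorial : ℂ) * PowerSeries.coeff b K) := by
        intro b _
        ring
      rw [Finset.sum_congr rfl hsub]
      apply Finset.sum_subset (Finset.range_subset_range.mpr (by omega))
      intro b hb hb'
      rw [Finset.mem_range] at hb hb'
      rw [Nat.choose_eq_zero_of_lt (show m + k < b by omega), Nat.cast_zero,
        mul_zero, zero_mul, zero_mul]
    rw [Finset.sum_congr rfl hstep, Finset.sum_comm]
    apply Finset.sum_eq_zero
    intro b _
    rcases Nat.even_or_odd b with hbe | hbo
    · apply Finset.sum_eq_zero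
      intro k _
      rw [hKeven b hbe, mul_zero, mul_zero]
    · exact inner_sum_vanish c m b hbo _
  rw [hS, mul_zero]

end Aux8


/-- For `α, t ∈ ℂ`, `n ∈ ℕ` and `r` odd:
`∑_{k=0}^{n+r-1} C(n+r,k) C(n+k+r,r) (α-2t)^{n+r-k} B_{n+k}^{(α)}(t)
 = - C(2n+2r,r) B_{2n+r}^{(α)}(t)`. -/
theorem odd_r_identity (α t : ℂ) (n r : ℕ) (hr : Odd r) :
    ∑ k ∈ Finset.range (n + r),
        ((n + r).choose k : ℂ) * ((n + k + r).choose r : ℂ) * (α - 2 * t) ^ (n + r - k) *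
          (genBernoulliPoly α (n + k)).eval t =
    -(((2 * n + 2 * r).choose r : ℂ) * (genBernoulliPoly α (2 * n + r)).eval t) := by
  have h := full_sum_zero α t n r hr
  rw [Finset.sum_range_succ] at h
  have hlast : ((n + r).choose (n + r) : ℂ) * ((n + (n + r) + r).choose r : ℂ) *
      (α - 2 * t) ^ (n + r - (n + r)) * (genBernoulliPoly α (n + (n + r))).eval t
      = ((2 * n + 2 * r).choose r : ℂ) * (genBernoulliPoly α (2 * n + r)).eval t := by
    rw [Nat.choose_self, Nat.cast_one, one_mul, Nat.sub_self, pow_zero, mul_one,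
      show n + (n + r) + r = 2 * n + 2 * r by omega, show n + (n + r) = 2 * n + r by omega]
  rw [hlast] at h
  linear_combination h
end

section
/- Let n be a natural number and let r be an odd natural number. Then Σ_{k=n}^{2n+r} C(n+r,k−n) C(k+r,r) B_k / 2^k = ( (−1)^{n+(r−1)/2} (r+1) / 2^{2n+r+1} ) · C(n+r,(r+1)/2). -/
open scoped BigOperators
open Finset

section Aux
open Polynomial

lemma periodic_zero (p : ℚ[X]) (hper : ∀ x : ℚ, p.eval (x + 1) = p.eval x)
    (h0 : p.eval 0 = 0) : p = 0 := by
  have hnat : ∀ k : ℕ, p.eval (k : ℚ) = 0 := by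
    intro k; induction k with
    | zero => simpa using h0
    | succ k ih => push_cast; rw [hper]; exact ih
  apply Polynomial.eq_zero_of_infinite_isRoot
  apply Set.infinite_of_injective_forall_mem (f := fun k : ℕ => (k : ℚ))
  · exact fun a b h => Nat.cast_injective h
  · intro k; exact hnat k

lemma iter_deriv_comp_X_add_C (k : ℕ) (p : ℚ[X]) (c : ℚ) :
    derivative^[k] (p.comp (X + C c)) = (derivative^[k] p).comp (X + C c) := by
  induction k generalizing p with
  | zero => simp
  | succ k ih =>
    rw [Function.iterate_succ_apply, derivative_comp, derivative_add, derivative_X,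
      derivative_C, add_zero, one_mul, ih, Function.iterate_succ_apply]

lemma iter_deriv_add (k : ℕ) (p q : ℚ[X]) :
    derivative^[k] (p + q) = derivative^[k] p + derivative^[k] q := by
  induction k generalizing p q with
  | zero => simp
  | succ k ih => rw [Function.iterate_succ_apply, derivative_add, ih,
      Function.iterate_succ_apply, Function.iterate_succ_apply]

lemma iter_deriv_bernoulli (k r : ℕ) (h : r ≤ k) :
    derivative^[r] (Polynomial.bernoulli k)
      = C ((k.descFactorial r : ℚ)) * Polynomial.bernoulli (k - r) := by
  induction r with
  | zero => simp
  | succ r ih =>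
    rw [Function.iterate_succ_apply', ih (Nat.le_of_succ_le h), derivative_C_mul,
      Polynomial.derivative_bernoulli, Nat.descFactorial_succ, Nat.sub_sub]
    push_cast [Nat.cast_sub (Nat.le_of_succ_le h)]
    simp only [map_sub, map_mul, C_eq_natCast]
    ring

lemma chang_ha_main (n r : ℕ) (hr : Odd r) :
    ∑ k ∈ Finset.Icc n (2 * n + r),
        ((n + r).choose (k - n) : ℚ) * ((k + r).choose r : ℚ) * _root_.bernoulli k / 2 ^ k =
    (-1 : ℚ) ^ (n + (r - 1) / 2) * ((r : ℚ) + 1) / 2 ^ (2 * n + r + 1) *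
      ((n + r).choose ((r + 1) / 2) : ℚ) := by
  obtain ⟨s, rfl⟩ : ∃ s, r = 2 * s + 1 := by
    obtain ⟨t, ht⟩ := hr; exact ⟨t, by omega⟩
  set r : ℕ := 2 * s + 1 with hrdef
  set m : ℕ := n + r with hm
  have hrm : r ≤ m := Nat.le_add_left r n
  set a : ℕ → ℚ := fun j => ((m.choose j : ℚ) * 2 ^ (m - j)) with ha
  set H : ℚ[X] := (X ^ 2 + 2 * X) ^ m with hH
  have h2C : (2 : ℚ[X]) = C 2 := (map_ofNat C 2).symm
  have Hsum : H = ∑ j ∈ range (m + 1), monomial (m + j) (a j) := by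
    rw [hH, add_pow]
    refine Finset.sum_congr rfl fun j hj => ?_
    have hj' : j ≤ m := Nat.lt_succ_iff.mp (mem_range.mp hj)
    rw [← C_mul_X_pow_eq_monomial, ← pow_mul, h2C, mul_pow, ← map_pow, ← C_eq_natCast]
    simp only [ha]
    rw [map_mul, show m + j = 2 * j + (m - j) by omega, pow_add]
    ring
  set g : ℚ[X] := ∑ j ∈ range (m + 1), C (a j) * Polynomial.bernoulli (m + j) with hg
  have dHeval : ∀ y : ℚ, (derivative H).eval y
      = m * (y ^ 2 + 2 * y) ^ (m - 1) * (2 * y + 2) := by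
    intro y
    rw [hH, derivative_pow]
    simp only [derivative_add, derivative_X_pow, derivative_mul, derivative_ofNat,
      derivative_X, eval_mul, eval_pow, eval_add, eval_natCast, eval_X, eval_ofNat,
      eval_C, eval_zero, eval_one, zero_mul, mul_one, add_zero, zero_add]
    push_cast
    ring
  have F1 : ∀ x : ℚ, g.eval (x + 1) = g.eval x + (derivative H).eval x := by
    intro x
    have hdH : derivative H = ∑ j ∈ range (m + 1), monomial (m + j - 1) (a j * ((m + j : ℕ) : ℚ)) := by
      rw [Hsum, derivative_sum]
      exact Finset.sum_congr rfl fun j _ => by rw [derivative_monomial]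
    rw [hg, eval_finset_sum, eval_finset_sum, hdH, eval_finset_sum, ← Finset.sum_add_distrib]
    refine Finset.sum_congr rfl fun j hj => ?_
    rw [eval_mul, eval_mul, eval_C, eval_C, eval_monomial, add_comm x 1,
      Polynomial.bernoulli_eval_one_add]
    ring
  have hsymD : ∀ x : ℚ, (derivative H).eval (x - 2) = -(derivative H).eval (-x) := by
    intro x
    rw [dHeval, dHeval, show ((x - 2) ^ 2 + 2 * (x - 2)) = x ^ 2 - 2 * x by ring,
      show ((-x) ^ 2 + 2 * (-x)) = x ^ 2 - 2 * x by ring]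
    ring
  have hsymg : g.comp (1 - X) = g.comp (X - C 2) := by
    rw [← sub_eq_zero]
    apply periodic_zero
    · intro x
      simp only [eval_sub, eval_comp, eval_one, eval_X, eval_C, eval_add]
      have e1 := F1 (-x); rw [show (-x) + 1 = 1 - x by ring] at e1
      have e2 := F1 (x - 2); rw [show (x - 2) + 1 = x - 1 by ring] at e2
      have e3 := hsymD x
      rw [show (1 : ℚ) - (x + 1) = -x by ring, show (x : ℚ) + 1 - 2 = x - 1 by ring]
      linarith
    · simp only [eval_sub, eval_comp, eval_one, eval_X, eval_C, eval_add]
      have e1 := F1 0; rw [zero_add] at e1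
      have e2 := F1 (-1); rw [show (-1 : ℚ) + 1 = 0 by ring] at e2
      have e3 := F1 (-2); rw [show (-2 : ℚ) + 1 = -1 by ring] at e3
      have v0 : (derivative H).eval 0 = m * (0 : ℚ) ^ (m - 1) * 2 := by
        rw [dHeval]; norm_num
      have v1 : (derivative H).eval (-1) = 0 := by rw [dHeval]; norm_num
      have v2 : (derivative H).eval (-2) = m * (0 : ℚ) ^ (m - 1) * (-2) := by
        rw [dHeval]; norm_num
      rw [show (1 : ℚ) - 0 = 1 by ring, show (0 : ℚ) - 2 = -2 by ring]
      nlinarith [v0, v1, v2, e1, e2, e3]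
  have gshift : g.comp (X + C 1) = g + derivative H :=
    Polynomial.funext fun x => by simpa [eval_comp] using F1 x
  have key : 2 * (derivative^[r] g).eval 0 = (derivative^[r + 1] H).eval (-1) := by
    have d1 : (derivative^[r] g).eval 0
        = (derivative^[r] g).eval (-1) + (derivative^[r + 1] H).eval (-1) := by
      have e := congrArg (fun p : ℚ[X] => (derivative^[r] p).eval (-1)) gshift
      simp only [iter_deriv_comp_X_add_C, iter_deriv_add, eval_comp, eval_add, eval_X,
        eval_C] at e
      norm_num at e
      rw [show derivative^[r + 1] H = derivative^[r] (derivative H) from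
        Function.iterate_succ_apply _ _ _]
      exact e
    have d2 : (derivative^[r] g).eval (-1) = -(derivative^[r] g).eval 0 := by
      have e := congrArg (fun p : ℚ[X] => (derivative^[r] p).eval 1) hsymg
      rw [show (X - C 2 : ℚ[X]) = X + C (-2) by rw [map_neg, sub_eq_add_neg],
        iter_deriv_comp_X_add_C, iterate_derivative_comp_one_sub_X] at e
      rw [eval_mul, eval_pow, eval_neg, eval_one, eval_comp, eval_comp] at e
      have h01 : Polynomial.eval (1 : ℚ) (1 - X) = 0 := by simp
      have h02 : Polynomial.eval (1 : ℚ) (X + C (-2 : ℚ)) = -1 := by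
        rw [eval_add, eval_X, eval_C]; norm_num
      rw [h01, h02] at e
      rw [Odd.neg_one_pow (by exact ⟨s, by omega⟩ : Odd r)] at e
      linarith
    linarith
  have A0 : (derivative^[r] g).eval 0
      = ∑ j ∈ range (m + 1), a j * ((m + j).descFactorial r : ℚ) * _root_.bernoulli (n + j) := by
    rw [hg, iterate_derivative_sum, eval_finset_sum]
    refine Finset.sum_congr rfl fun j hj => ?_
    rw [iterate_derivative_C_mul, iter_deriv_bernoulli _ _ (le_trans hrm (Nat.le_add_right m j)),
      show m + j - r = n + j by omega, eval_mul, eval_mul, eval_C, eval_C,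
      Polynomial.bernoulli_eval_zero]
    ring
  have hK : H.comp (X - C 1) = ∑ i ∈ range (m + 1),
      C ((-1 : ℚ) ^ (m - i) * (m.choose i : ℚ)) * X ^ (2 * i) := by
    have hK1 : H.comp (X - C 1) = ((X : ℚ[X]) ^ 2 + (-1)) ^ m := by
      rw [hH, pow_comp]
      congr 1
      rw [add_comp, pow_comp, mul_comp, X_comp, ofNat_comp]
      rw [show (C 1 : ℚ[X]) = 1 from map_one C]
      ring
    rw [hK1, add_pow]
    refine Finset.sum_congr rfl fun i hi => ?_
    rw [← pow_mul, map_mul, show (C ((-1 : ℚ) ^ (m - i)) : ℚ[X]) = (-1) ^ (m - i) by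
      rw [map_pow, map_neg, map_one], ← C_eq_natCast]
    ring
  have B0 : (derivative^[r + 1] H).eval (-1)
      = (-1 : ℚ) ^ (n + s) * (m.choose (s + 1) : ℚ) * ((2 * s + 2).factorial : ℚ) := by
    have h1 : (derivative^[r + 1] H).eval (-1) = (derivative^[r + 1] (H.comp (X - C 1))).eval 0 := by
      rw [show (X - C 1 : ℚ[X]) = X + C (-1) by rw [map_neg, sub_eq_add_neg],
        iter_deriv_comp_X_add_C, eval_comp]
      norm_num
    rw [h1, hK, iterate_derivative_sum, eval_finset_sum]
    rw [Finset.sum_eq_single (s + 1)]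
    · rw [iterate_derivative_C_mul, iterate_derivative_X_pow_eq_C_mul, eval_mul, eval_C,
        eval_mul, eval_C, eval_pow, eval_X, show 2 * (s + 1) - (r + 1) = 0 by omega,
        show (2 * (s + 1)).descFactorial (r + 1) = (2 * s + 2).factorial by
          rw [show 2 * (s + 1) = r + 1 by omega, show 2 * s + 2 = r + 1 by omega,
            Nat.descFactorial_self],
        pow_zero, show m - (s + 1) = n + s by omega]
      ring
    · intro i hi hne
      rw [iterate_derivative_C_mul, iterate_derivative_X_pow_eq_C_mul, eval_mul, eval_C,
        eval_mul, eval_C, eval_pow, eval_X]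
      rcases lt_or_gt_of_ne hne with hlt | hgt
      · have : (2 * i).descFactorial (r + 1) = 0 :=
          Nat.descFactorial_eq_zero_iff_lt.mpr (by omega)
        rw [this]; norm_num
      · rw [zero_pow (by omega : 2 * i - (r + 1) ≠ 0)]; ring
    · intro hnot
      exact absurd (mem_range.mpr (by omega)) hnot
  -- reindex the target sum
  have reindex : ∑ k ∈ Finset.Icc n (2 * n + r),
        ((n + r).choose (k - n) : ℚ) * ((k + r).choose r : ℚ) * _root_.bernoulli k / 2 ^ k
      = ∑ j ∈ range (m + 1),
        ((m.choose j : ℚ) * ((m + j).choose r : ℚ) * _root_.bernoulli (n + j) / 2 ^ (n + j)) := by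
    rw [← Finset.Ico_add_one_right_eq_Icc, Finset.sum_Ico_eq_sum_range, show 2 * n + r + 1 - n = m + 1 by omega]
    refine Finset.sum_congr rfl fun j hj => ?_
    rw [show n + j - n = j by omega, show n + j + r = m + j by omega, hm]
  have A0' : (derivative^[r] g).eval 0
      = 2 ^ (m + n) * (r.factorial : ℚ) * ∑ j ∈ range (m + 1),
          ((m.choose j : ℚ) * ((m + j).choose r : ℚ) * _root_.bernoulli (n + j) / 2 ^ (n + j)) := by
    rw [A0, Finset.mul_sum]
    refine Finset.sum_congr rfl fun j hj => ?_
    have hj' : j ≤ m := Nat.lt_succ_iff.mp (mem_range.mp hj)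
    rw [ha]
    rw [Nat.descFactorial_eq_factorial_mul_choose]
    rw [show (2 : ℚ) ^ (m + n) = 2 ^ (m - j) * 2 ^ (n + j) by
      rw [← pow_add]; congr 1; omega]
    push_cast
    have h2 : (2 : ℚ) ^ (n + j) ≠ 0 := by positivity
    field_simp
  -- final assembly
  rw [reindex]
  have hrfac : ((r.factorial : ℚ)) ≠ 0 := by positivity
  have h2mn : (2 : ℚ) ^ (m + n) ≠ 0 := by positivity
  have hfinal : (2 : ℚ) * (2 ^ (m + n) * (r.factorial : ℚ) * ∑ j ∈ range (m + 1),
          ((m.choose j : ℚ) * ((m + j).choose r : ℚ) * _root_.bernoulli (n + j) / 2 ^ (n + j)))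
      = (-1 : ℚ) ^ (n + s) * (m.choose (s + 1) : ℚ) * ((2 * s + 2).factorial : ℚ) := by
    rw [← A0', key, B0]
  rw [show (r - 1) / 2 = s by omega, show (r + 1) / 2 = s + 1 by omega]
  have hfac2 : ((2 * s + 2).factorial : ℚ) = (2 * (s : ℚ) + 2) * (r.factorial : ℚ) := by
    rw [show 2 * s + 2 = r + 1 by omega, Nat.factorial_succ]
    push_cast
    rw [hrdef]; push_cast
    ring
  rw [hfac2] at hfinal
  have h2big : (2 : ℚ) ^ (2 * n + r + 1) = 2 * 2 ^ (m + n) := by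
    rw [show 2 * n + r + 1 = (m + n) + 1 by omega]
    ring
  rw [h2big]
  have hcast : ((r : ℚ)) + 1 = 2 * (s : ℚ) + 2 := by
    rw [hrdef]; push_cast; ring
  rw [hcast]
  have hfinal2 : 2 * 2 ^ (m + n) * (∑ j ∈ range (m + 1),
          ((m.choose j : ℚ) * ((m + j).choose r : ℚ) * _root_.bernoulli (n + j) / 2 ^ (n + j)))
      = (-1 : ℚ) ^ (n + s) * (m.choose (s + 1) : ℚ) * (2 * (s : ℚ) + 2) := by
    apply mul_right_cancel₀ hrfac
    linear_combination hfinal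
  field_simp
  have hpow : (2 : ℚ) ^ (m + n) = 2 ^ (n * 2) * 2 ^ (s * 2) * 2 := by
    rw [hm, hrdef]; ring
  rw [hpow] at hfinal2
  linear_combination (1 / 2 : ℚ) * hfinal2

end Aux

/-- For `n ∈ ℕ` and `r` odd:
`∑_{k=n}^{2n+r} C(n+r,k-n) C(k+r,r) B_k / 2^k
 = ((-1)^{n+(r-1)/2} (r+1) / 2^{2n+r+1}) C(n+r,(r+1)/2)`. -/
theorem chang_ha_number_identity (n r : ℕ) (hr : Odd r) :
    ∑ k ∈ Finset.Icc n (2 * n + r),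
        ((n + r).choose (k - n) : ℚ) * ((k + r).choose r : ℚ) * bernoulli k / 2 ^ k =
    (-1 : ℚ) ^ (n + (r - 1) / 2) * ((r : ℚ) + 1) / 2 ^ (2 * n + r + 1) *
      ((n + r).choose ((r + 1) / 2) : ℚ) := by
  exact chang_ha_main n r hr
end
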